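/- arXiv:2003.07522 — 3 statements merged into one kernel-verified Lean document; each statement's English description precedes it below -/
import Mathlib

section
/- Let A, B, B', C ∈ ℂ^{r×r} with AB = BA and B'C = CB', let s be a non-negative integer, and suppose C + nI is invertible for all integers n ≥ 0 and C − kI is invertible for all integers 1 ≤ k ≤ s; let |x| < 1, |y| < 1. Then F₁(A, B, B'; C−sI; x, y) = F₁(A, B, B'; C; x, y) + x·A·B·∑_{k=1}^{s} [F₁(A+I, B+I, B'; C+(2−k)I; x, y)]·(C−kI)⁻¹·(C−(k−1)I)⁻¹ + y·A·∑_{k=1}^{s} [F₁(A+I, B, B'+I; C+(2−k)I; x, y)]·B'·(C−kI)⁻¹·(C−(k−1)I)⁻¹. -/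
/-- The shifted factorial (Pochhammer) matrix: `(A)_0 = I`, `(A)_{n+1} = (A)_n (A + nI)`. -/
noncomputable def mPoch {r : ℕ} (A : Matrix (Fin r) (Fin r) ℂ) : ℕ → Matrix (Fin r) (Fin r) ℂ
  | 0 => 1
  | n + 1 => mPoch A n * (A + (n : ℂ) • 1)

variable {r : ℕ}

lemma commute_mPoch {X A : Matrix (Fin r) (Fin r) ℂ} (h : Commute X A) (n : ℕ) :
    Commute X (mPoch A n) := by
  induction n with
  | zero => exact Commute.one_right X
  | succ n ih =>
    exact ih.mul_right (h.add_right ((Commute.one_right X).smul_right _))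

lemma mPoch_succ_left (A : Matrix (Fin r) (Fin r) ℂ) (n : ℕ) :
    mPoch A (n + 1) = A * mPoch (A + 1) n := by
  induction n with
  | zero => simp [mPoch]
  | succ n ih =>
    have : A + ((n : ℂ) + 1) • 1 = (A + 1) + (n : ℂ) • 1 := by
      rw [add_smul, one_smul]; abel
    calc mPoch A (n + 2) = mPoch A (n + 1) * (A + ((n : ℂ) + 1) • 1) := by
          show mPoch A (n+1) * (A + ((n+1 : ℕ) : ℂ) • 1) = _
          push_cast; rfl
      _ = A * mPoch (A + 1) n * ((A + 1) + (n : ℂ) • 1) := by rw [ih, this]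
      _ = A * mPoch (A + 1) (n + 1) := by rw [mul_assoc]; rfl

lemma isUnit_mPoch {C : Matrix (Fin r) (Fin r) ℂ}
    (hC : ∀ n : ℕ, IsUnit (C + (n : ℂ) • (1 : Matrix (Fin r) (Fin r) ℂ))) (n : ℕ) :
    IsUnit (mPoch C n) := by
  induction n with
  | zero => exact isUnit_one
  | succ n ih => exact ih.mul (hC n)

lemma isUnit_det_of_isUnit {M : Matrix (Fin r) (Fin r) ℂ} (h : IsUnit M) : IsUnit M.det :=
  (Matrix.isUnit_iff_isUnit_det M).mp h

lemma matrix_mul_inv {M : Matrix (Fin r) (Fin r) ℂ} (h : IsUnit M) : M * M⁻¹ = 1 :=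
  Matrix.mul_nonsing_inv M (isUnit_det_of_isUnit h)

lemma matrix_inv_mul {M : Matrix (Fin r) (Fin r) ℂ} (h : IsUnit M) : M⁻¹ * M = 1 :=
  Matrix.nonsing_inv_mul M (isUnit_det_of_isUnit h)

lemma commute_inv_right {X M : Matrix (Fin r) (Fin r) ℂ} (h : Commute X M) (hM : IsUnit M) :
    Commute X M⁻¹ := by
  have h1 := matrix_mul_inv hM
  have h2 := matrix_inv_mul hM
  calc X * M⁻¹ = M⁻¹ * M * X * M⁻¹ := by rw [h2, one_mul]
    _ = M⁻¹ * (M * X) * M⁻¹ := by noncomm_ring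
    _ = M⁻¹ * (X * M) * M⁻¹ := by rw [h.eq]
    _ = M⁻¹ * X * (M * M⁻¹) := by noncomm_ring
    _ = M⁻¹ * X := by rw [h1, mul_one]

lemma inv_mPoch_succ (C : Matrix (Fin r) (Fin r) ℂ) (n : ℕ) :
    (mPoch C (n + 1))⁻¹ = (C + (n : ℂ) • 1)⁻¹ * (mPoch C n)⁻¹ := by
  show (mPoch C n * (C + (n : ℂ) • 1))⁻¹ = _
  rw [Matrix.mul_inv_rev]

lemma inv_mPoch_succ_left (C : Matrix (Fin r) (Fin r) ℂ) (n : ℕ) :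
    (mPoch C (n + 1))⁻¹ = (mPoch (C + 1) n)⁻¹ * C⁻¹ := by
  rw [mPoch_succ_left, Matrix.mul_inv_rev]

/-- The key step identity on inverse Pochhammer matrices. -/
lemma inv_mPoch_sub_one {C : Matrix (Fin r) (Fin r) ℂ}
    (hC : ∀ n : ℕ, IsUnit (C + (n : ℂ) • (1 : Matrix (Fin r) (Fin r) ℂ)))
    (h1 : IsUnit (C - 1)) (N : ℕ) :
    (mPoch (C - 1) N)⁻¹ = (mPoch C N)⁻¹ + (N : ℂ) • ((mPoch C N)⁻¹ * (C - 1)⁻¹) := by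
  cases N with
  | zero => simp [mPoch]
  | succ N =>
    have hC0 : IsUnit C := by simpa using hC 0
    have hu : IsUnit (C + (N : ℂ) • 1) := hC N
    have hP : IsUnit (mPoch C N) := isUnit_mPoch hC N
    -- LHS
    have hL : (mPoch (C - 1) (N + 1))⁻¹ = (mPoch C N)⁻¹ * (C - 1)⁻¹ := by
      rw [mPoch_succ_left, sub_add_cancel, Matrix.mul_inv_rev]
    rw [hL]
    -- commutation facts
    have hcomm1 : Commute (C + (N : ℂ) • 1) (mPoch C N) :=
      commute_mPoch (((Commute.refl C).add_left ((Commute.one_left C).smul_left _))) N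
    have hcomm1' : Commute (C + (N : ℂ) • 1) (mPoch C N)⁻¹ := commute_inv_right hcomm1 hP
    have hcomm2 : Commute (C + (N : ℂ) • 1) (C - 1) :=
      ((Commute.refl C).sub_right (Commute.one_right C)).add_left
        (((Commute.one_left C).sub_right (Commute.refl 1)).smul_left _)
    have hcomm2' : Commute (C + (N : ℂ) • 1) (C - 1)⁻¹ := commute_inv_right hcomm2 h1
    apply hu.mul_left_cancel
    have hPD : (C + (N:ℂ)•1) * ((mPoch C N)⁻¹ * (C-1)⁻¹)
        = (mPoch C N)⁻¹ + ((N:ℂ)+1) • ((mPoch C N)⁻¹ * (C-1)⁻¹) := by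
      have h3 : (C + (N:ℂ)•1) * (C-1)⁻¹ = 1 + ((N:ℂ)+1) • (C-1)⁻¹ := by
        have he : C + (N:ℂ)•1 = (C-1) + ((N:ℂ)+1) • 1 := by rw [add_smul, one_smul]; abel
        rw [he, add_mul, matrix_mul_inv h1, Matrix.smul_mul, one_mul]
      calc (C + (N:ℂ)•1) * ((mPoch C N)⁻¹ * (C-1)⁻¹)
          = (mPoch C N)⁻¹ * ((C + (N:ℂ)•1) * (C-1)⁻¹) := by
            rw [← mul_assoc, hcomm1'.eq, mul_assoc]
        _ = _ := by rw [h3, mul_add, mul_one, mul_smul_comm]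
    rw [hPD, inv_mPoch_succ, mul_add, mul_smul_comm, ← mul_assoc, ← mul_assoc, ← mul_assoc,
      matrix_mul_inv hu, one_mul]
    push_cast
    ring_nf


open Finset

variable {r : ℕ}

/-- max over rows of L1 row sums (linfty operator norm), valued in ℝ≥0 -/
noncomputable def mnn (M : Matrix (Fin r) (Fin r) ℂ) : NNReal :=
  Finset.univ.sup fun i => ∑ j, ‖M i j‖₊

lemma le_mnn (M : Matrix (Fin r) (Fin r) ℂ) (i : Fin r) : (∑ j, ‖M i j‖₊) ≤ mnn M :=
  Finset.le_sup (f := fun i => ∑ j, ‖M i j‖₊) (mem_univ i)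

lemma mnn_entry_le (M : Matrix (Fin r) (Fin r) ℂ) (i j : Fin r) : ‖M i j‖₊ ≤ mnn M :=
  le_trans (Finset.single_le_sum (f := fun j => ‖M i j‖₊) (fun _ _ => zero_le) (mem_univ j))
    (le_mnn M i)

lemma mnn_one_le : mnn (1 : Matrix (Fin r) (Fin r) ℂ) ≤ 1 := by
  apply Finset.sup_le
  intro i _
  rw [Finset.sum_eq_single i]
  · simp [Matrix.one_apply]
  · intro b _ hb; simp [Matrix.one_apply, Ne.symm hb]
  · simp

lemma mnn_mul_le (M N : Matrix (Fin r) (Fin r) ℂ) : mnn (M * N) ≤ mnn M * mnn N := by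
  apply Finset.sup_le
  intro i _
  calc ∑ j, ‖(M * N) i j‖₊ ≤ ∑ j, ∑ k, ‖M i k‖₊ * ‖N k j‖₊ := by
        refine Finset.sum_le_sum fun j _ => ?_
        rw [Matrix.mul_apply]
        exact le_trans (nnnorm_sum_le _ _) (le_of_eq (by simp [nnnorm_mul]))
    _ = ∑ k, ‖M i k‖₊ * ∑ j, ‖N k j‖₊ := by
        rw [Finset.sum_comm]; simp [Finset.mul_sum]
    _ ≤ ∑ k, ‖M i k‖₊ * mnn N := by
        refine Finset.sum_le_sum fun k _ => ?_
        exact mul_le_mul_right (le_mnn N k) _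
    _ ≤ mnn M * mnn N := by
        rw [← Finset.sum_mul]
        exact mul_le_mul_left (le_mnn M i) _

lemma mnn_add_le (M N : Matrix (Fin r) (Fin r) ℂ) : mnn (M + N) ≤ mnn M + mnn N := by
  apply Finset.sup_le
  intro i _
  calc ∑ j, ‖(M + N) i j‖₊ ≤ ∑ j, (‖M i j‖₊ + ‖N i j‖₊) := by
        refine Finset.sum_le_sum fun j _ => ?_
        exact nnnorm_add_le _ _
    _ = (∑ j, ‖M i j‖₊) + ∑ j, ‖N i j‖₊ := Finset.sum_add_distrib
    _ ≤ mnn M + mnn N := add_le_add (le_mnn M i) (le_mnn N i)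

lemma mnn_smul_le (a : ℂ) (M : Matrix (Fin r) (Fin r) ℂ) : mnn (a • M) ≤ ‖a‖₊ * mnn M := by
  apply Finset.sup_le
  intro i _
  calc ∑ j, ‖(a • M) i j‖₊ = ‖a‖₊ * ∑ j, ‖M i j‖₊ := by
        simp [Matrix.smul_apply, nnnorm_smul, Finset.mul_sum]
    _ ≤ ‖a‖₊ * mnn M := mul_le_mul_right (le_mnn M i) _

lemma mnn_neg (M : Matrix (Fin r) (Fin r) ℂ) : mnn (-M) = mnn M := by
  unfold mnn; simp

lemma mnn_sub_le (M N : Matrix (Fin r) (Fin r) ℂ) : mnn (M - N) ≤ mnn M + mnn N := by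
  rw [sub_eq_add_neg]
  exact le_trans (mnn_add_le _ _) (by rw [mnn_neg])

lemma summable_of_mnn_le {ι : Type*} {f : ι → Matrix (Fin r) (Fin r) ℂ} {g : ι → ℝ}
    (hg : Summable g) (h : ∀ p, (mnn (f p) : ℝ) ≤ g p) : Summable f := by
  refine Pi.summable.mpr ?_
  intro i
  rw [Pi.summable]
  intro j
  refine Summable.of_norm_bounded hg fun p => ?_
  calc ‖f p i j‖ ≤ (mnn (f p) : ℝ) := by
        exact_mod_cast mnn_entry_le (f p) i j
    _ ≤ g p := h p

section P3
open Finset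
variable {r : ℕ}

noncomputable def pb (a : ℝ) (N : ℕ) : ℝ := ∏ j ∈ Finset.range N, (a + j)

lemma pb_nonneg {a : ℝ} (ha : 0 ≤ a) (N : ℕ) : 0 ≤ pb a N :=
  Finset.prod_nonneg fun j _ => by positivity

lemma pb_succ (a : ℝ) (N : ℕ) : pb a (N + 1) = pb a N * (a + N) :=
  Finset.prod_range_succ _ _

lemma ratio_pow {t : ℝ} (ht : 0 < t) (E : ℕ) : 1 + E / t ≤ ((t + 1) / t) ^ E := by
  have h2t : (0:ℝ) < 1 / t := by positivity
  have h := one_add_mul_le_pow (a := 1 / t) (by linarith : (-2:ℝ) ≤ 1/t) E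
  calc 1 + (E:ℝ) / t = 1 + E * (1 / t) := by ring
    _ ≤ (1 + 1 / t) ^ E := h
    _ = ((t + 1) / t) ^ E := by rw [add_div, div_self ht.ne']

lemma key_pow (Eb : ℕ) {t u : ℝ} (h1 : 1 ≤ t) (hu : 0 ≤ u) (h2 : u ≤ t + Eb) :
    t ^ Eb * u ≤ t * (t + 1) ^ Eb := by
  have ht : 0 < t := lt_of_lt_of_le one_pos h1
  calc t ^ Eb * u ≤ t ^ Eb * (t + Eb) := by
        exact mul_le_mul_of_nonneg_left h2 (pow_nonneg ht.le _)
    _ = t ^ (Eb + 1) * (1 + Eb / t) := by field_simp; ring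
    _ ≤ t ^ (Eb + 1) * (((t + 1) / t) ^ Eb) := by
        exact mul_le_mul_of_nonneg_left (ratio_pow ht Eb) (pow_nonneg ht.le _)
    _ = t * (t + 1) ^ Eb := by
        rw [div_pow]; field_simp; ring

lemma pb_le_fact {b : ℝ} (hb : 0 ≤ b) (m : ℕ) :
    pb b m ≤ (m.factorial : ℝ) * ((m : ℝ) + 1) ^ (⌈b⌉₊) := by
  induction m with
  | zero => simp [pb]
  | succ m ih =>
    have h1 : (1:ℝ) ≤ (m:ℝ) + 1 := by have h0 : (0:ℝ) ≤ (m:ℝ) := Nat.cast_nonneg m; linarith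
    have h2 : b + m ≤ ((m:ℝ) + 1) + (⌈b⌉₊ : ℝ) := by
      have := Nat.le_ceil b; linarith
    have h3 : (0:ℝ) ≤ b + m := add_nonneg hb (Nat.cast_nonneg m)
    calc pb b (m + 1) = pb b m * (b + m) := pb_succ b m
      _ ≤ ((m.factorial : ℝ) * ((m:ℝ) + 1) ^ (⌈b⌉₊)) * (b + m) := by
          exact mul_le_mul_of_nonneg_right ih h3
      _ = (m.factorial : ℝ) * (((m:ℝ) + 1) ^ (⌈b⌉₊) * (b + m)) := by ring
      _ ≤ (m.factorial : ℝ) * (((m:ℝ) + 1) * (((m:ℝ) + 1) + 1) ^ (⌈b⌉₊)) := by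
          exact mul_le_mul_of_nonneg_left (key_pow _ h1 h3 h2) (by positivity)
      _ = ((m + 1).factorial : ℝ) * (((m:ℝ) + 1) + 1) ^ (⌈b⌉₊) := by
          rw [Nat.factorial_succ]; push_cast; ring
      _ = ((m + 1).factorial : ℝ) * (((m + 1 : ℕ) : ℝ) + 1) ^ (⌈b⌉₊) := by push_cast; ring

lemma mnn_inv_shift_le {C : Matrix (Fin r) (Fin r) ℂ}
    (hC : ∀ n : ℕ, IsUnit (C + (n : ℂ) • (1 : Matrix (Fin r) (Fin r) ℂ)))
    {j : ℕ} (hj : (mnn C : ℝ) < j) :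
    (mnn ((C + (j : ℂ) • 1)⁻¹) : ℝ) ≤ 1 / ((j : ℝ) - mnn C) := by
  have hc : (0:ℝ) ≤ (mnn C : ℝ) := (mnn C).coe_nonneg
  have hj0 : (0:ℝ) < (j : ℝ) := lt_of_le_of_lt hc hj
  have hjne' : (j : ℕ) ≠ 0 := by
    intro h; rw [h] at hj0; simp at hj0
  have hjne : (j : ℂ) ≠ 0 := by exact_mod_cast hjne'
  have hu := hC j
  set V := (C + (j : ℂ) • 1)⁻¹ with hV
  have hid : (j : ℂ) • V = 1 - V * C := by
    have h2 : V * (C + (j : ℂ) • 1) = 1 := matrix_inv_mul hu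
    rw [mul_add, mul_smul_comm, mul_one] at h2
    rw [eq_sub_iff_add_eq, add_comm]
    exact h2
  have hstep : (mnn V : ℝ) ≤ (1 / j) * (1 + (mnn V : ℝ) * (mnn C : ℝ)) := by
    have hVsm : V = ((j : ℂ))⁻¹ • ((j : ℂ) • V) := by
      rw [smul_smul, inv_mul_cancel₀ hjne, one_smul]
    calc (mnn V : ℝ) = (mnn (((j : ℂ))⁻¹ • ((j : ℂ) • V)) : ℝ) := by rw [← hVsm]
      _ ≤ ‖((j : ℂ))⁻¹‖ * (mnn ((j : ℂ) • V) : ℝ) := by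
          have := mnn_smul_le ((j : ℂ))⁻¹ ((j : ℂ) • V)
          exact_mod_cast this
      _ = (1 / j) * (mnn (1 - V * C) : ℝ) := by
          rw [hid]; congr 1
          rw [norm_inv]; simp [Complex.norm_natCast]
      _ ≤ (1 / j) * (1 + (mnn V : ℝ) * (mnn C : ℝ)) := by
          apply mul_le_mul_of_nonneg_left _ (by positivity)
          have h4 : (mnn (1 - V * C) : ℝ) ≤ (mnn (1 : Matrix (Fin r) (Fin r) ℂ) : ℝ) + (mnn (V * C) : ℝ) := by
            exact_mod_cast mnn_sub_le 1 (V * C)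
          have h5 : (mnn (1 : Matrix (Fin r) (Fin r) ℂ) : ℝ) ≤ 1 := by exact_mod_cast mnn_one_le
          have h6 : (mnn (V * C) : ℝ) ≤ (mnn V : ℝ) * (mnn C : ℝ) := by exact_mod_cast mnn_mul_le V C
          linarith
  have hsub : (0:ℝ) < (j : ℝ) - mnn C := by linarith
  rw [le_div_iff₀ hsub]
  have := mul_le_mul_of_nonneg_left hstep hj0.le
  rw [← mul_assoc, mul_one_div, div_self hj0.ne', one_mul] at this
  nlinarith [(mnn V).coe_nonneg]

lemma mnn_inv_mPoch_le {C : Matrix (Fin r) (Fin r) ℂ} (N : ℕ) :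
    (mnn ((mPoch C N)⁻¹) : ℝ) ≤ ∏ j ∈ Finset.range N, (mnn ((C + (j : ℂ) • 1)⁻¹) : ℝ) := by
  induction N with
  | zero =>
    show (mnn ((1 : Matrix (Fin r) (Fin r) ℂ)⁻¹) : ℝ) ≤ 1
    rw [inv_one]
    exact_mod_cast mnn_one_le
  | succ N ih =>
    rw [inv_mPoch_succ, Finset.prod_range_succ]
    calc (mnn ((C + (N:ℂ) • 1)⁻¹ * (mPoch C N)⁻¹) : ℝ)
        ≤ (mnn ((C + (N:ℂ) • 1)⁻¹) : ℝ) * (mnn ((mPoch C N)⁻¹) : ℝ) := by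
          exact_mod_cast mnn_mul_le _ _
      _ ≤ (mnn ((C + (N:ℂ) • 1)⁻¹) : ℝ) * ∏ j ∈ Finset.range N, (mnn ((C + (j : ℂ) • 1)⁻¹) : ℝ) := by
          exact mul_le_mul_of_nonneg_left ih (NNReal.coe_nonneg _)
      _ = (∏ j ∈ Finset.range N, (mnn ((C + (j : ℂ) • 1)⁻¹) : ℝ)) * (mnn ((C + (N:ℂ) • 1)⁻¹) : ℝ) := by ring

lemma summable_polygeo (E : ℕ) {q : ℝ} (h0 : 0 ≤ q) (h1 : q < 1) :
    Summable (fun n : ℕ => ((n : ℝ) + 1) ^ E * q ^ n) := by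
  have hb : ∀ n : ℕ, ((n : ℝ) + 1) ^ E * q ^ n ≤ 2 ^ E * ((n:ℝ) ^ E * q ^ n) + 2 ^ E * q ^ n := by
    intro n
    have hq : (0:ℝ) ≤ q ^ n := by positivity
    have hnn : ((n:ℝ) + 1) ^ E ≤ 2 ^ E * (n:ℝ) ^ E + 2 ^ E := by
      rcases Nat.eq_zero_or_pos n with h | h
      · subst h
        simp only [Nat.cast_zero, zero_add, one_pow]
        have : (0:ℝ) ≤ 2 ^ E * (0:ℝ) ^ E := by positivity
        have h2 : (1:ℝ) ≤ 2 ^ E := one_le_pow₀ (by norm_num : (1:ℝ) ≤ 2)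
        linarith
      · have hn1 : (1:ℝ) ≤ (n:ℝ) := by exact_mod_cast h
        have : ((n:ℝ) + 1) ≤ 2 * n := by linarith
        calc ((n:ℝ) + 1) ^ E ≤ (2 * n) ^ E := by
              exact pow_le_pow_left₀ (by positivity) this E
          _ = 2 ^ E * (n:ℝ) ^ E := by rw [mul_pow]
          _ ≤ 2 ^ E * (n:ℝ) ^ E + 2 ^ E := by
              have : (0:ℝ) ≤ 2 ^ E := by positivity
              linarith
    nlinarith [hq, hnn]
  have hq1 : ‖q‖ < 1 := by rwa [Real.norm_eq_abs, abs_of_nonneg h0]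
  have s1 : Summable (fun n : ℕ => 2 ^ E * ((n:ℝ) ^ E * q ^ n)) :=
    (summable_pow_mul_geometric_of_norm_lt_one E hq1).mul_left _
  have s2 : Summable (fun n : ℕ => 2 ^ E * q ^ n) :=
    (summable_geometric_of_lt_one h0 h1).mul_left _
  exact Summable.of_nonneg_of_le (fun n => by positivity) hb (s1.add s2)

lemma mul_le_mul₃ {x1 y1 x2 y2 x3 y3 : ℝ} (e1 : x1 ≤ y1) (e2 : x2 ≤ y2) (e3 : x3 ≤ y3)
    (p1 : 0 ≤ x1) (p2 : 0 ≤ x2) (p3 : 0 ≤ x3) : x1 * x2 * x3 ≤ y1 * y2 * y3 :=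
  mul_le_mul (mul_le_mul e1 e2 p2 (p1.trans e1)) e3 p3
    (mul_nonneg (p1.trans e1) (p2.trans e2))

lemma mul_le_mul₄ {x1 y1 x2 y2 x3 y3 x4 y4 : ℝ} (e1 : x1 ≤ y1) (e2 : x2 ≤ y2) (e3 : x3 ≤ y3)
    (e4 : x4 ≤ y4) (p1 : 0 ≤ x1) (p2 : 0 ≤ x2) (p3 : 0 ≤ x3) (p4 : 0 ≤ x4) :
    x1 * x2 * x3 * x4 ≤ y1 * y2 * y3 * y4 :=
  mul_le_mul (mul_le_mul₃ e1 e2 e3 p1 p2 p3) e4 p4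
    (mul_nonneg (mul_nonneg (p1.trans e1) (p2.trans e2)) (p3.trans e3))

lemma mnn_shift_le (A : Matrix (Fin r) (Fin r) ℂ) (N : ℕ) :
    (mnn (A + (N : ℂ) • 1) : ℝ) ≤ (mnn A : ℝ) + N := by
  have h1 : (mnn (A + (N : ℂ) • 1) : ℝ) ≤ (mnn A : ℝ) + (mnn ((N : ℂ) • (1 : Matrix (Fin r) (Fin r) ℂ)) : ℝ) := by
    exact_mod_cast mnn_add_le A ((N : ℂ) • 1)
  have h2 : (mnn ((N : ℂ) • (1 : Matrix (Fin r) (Fin r) ℂ)) : ℝ) ≤ (N : ℝ) := by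
    have h3 : (mnn ((N : ℂ) • (1 : Matrix (Fin r) (Fin r) ℂ)) : ℝ) ≤ ‖(N : ℂ)‖ * (mnn (1 : Matrix (Fin r) (Fin r) ℂ) : ℝ) := by
      exact_mod_cast mnn_smul_le (N : ℂ) 1
    have h4 : (mnn (1 : Matrix (Fin r) (Fin r) ℂ) : ℝ) ≤ 1 := by exact_mod_cast mnn_one_le
    have h5 : ‖(N : ℂ)‖ = (N : ℝ) := by simp
    nlinarith [norm_nonneg (N : ℂ), (mnn (1 : Matrix (Fin r) (Fin r) ℂ)).coe_nonneg]
  linarith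

lemma mnn_mPoch_le (A : Matrix (Fin r) (Fin r) ℂ) (N : ℕ) :
    (mnn (mPoch A N) : ℝ) ≤ pb (mnn A : ℝ) N := by
  induction N with
  | zero =>
    show (mnn (1 : Matrix (Fin r) (Fin r) ℂ) : ℝ) ≤ pb _ 0
    rw [pb]
    simpa using (by exact_mod_cast mnn_one_le : (mnn (1 : Matrix (Fin r) (Fin r) ℂ) : ℝ) ≤ 1)
  | succ N ih =>
    show (mnn (mPoch A N * (A + (N : ℂ) • 1)) : ℝ) ≤ _
    rw [pb_succ]
    calc (mnn (mPoch A N * (A + (N : ℂ) • 1)) : ℝ)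
        ≤ (mnn (mPoch A N) : ℝ) * (mnn (A + (N : ℂ) • 1) : ℝ) := by
          exact_mod_cast mnn_mul_le _ _
      _ ≤ pb (mnn A : ℝ) N * ((mnn A : ℝ) + N) :=
          mul_le_mul ih (mnn_shift_le A N) (NNReal.coe_nonneg _)
            (pb_nonneg (NNReal.coe_nonneg _) N)

end P3

section P4
open Finset
variable {r : ℕ}

set_option maxHeartbeats 1000000 in
lemma summable_apTerm (A B B' C : Matrix (Fin r) (Fin r) ℂ)
    (hC : ∀ n : ℕ, IsUnit (C + (n : ℂ) • (1 : Matrix (Fin r) (Fin r) ℂ)))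
    {x y : ℂ} (hx : ‖x‖ < 1) (hy : ‖y‖ < 1) :
    Summable (fun p : ℕ × ℕ =>
      (((p.1.factorial : ℂ) * (p.2.factorial : ℂ))⁻¹ * x ^ p.1 * y ^ p.2) •
        (mPoch A (p.1 + p.2) * mPoch B p.1 * mPoch B' p.2 * (mPoch C (p.1 + p.2))⁻¹)) := by
  have mm : ∀ X Y : Matrix (Fin r) (Fin r) ℂ, (mnn (X * Y) : ℝ) ≤ (mnn X : ℝ) * (mnn Y : ℝ) :=
    fun X Y => by exact_mod_cast mnn_mul_le X Y
  set a := (mnn A : ℝ) with hadef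
  set b := (mnn B : ℝ) with hbdef
  set b2 := (mnn B' : ℝ) with hb2def
  set c := (mnn C : ℝ) with hcdef
  have ha0 : 0 ≤ a := NNReal.coe_nonneg _
  have hb0 : 0 ≤ b := NNReal.coe_nonneg _
  have hb20 : 0 ≤ b2 := NNReal.coe_nonneg _
  have hc0 : 0 ≤ c := NNReal.coe_nonneg _
  set j0 : ℕ := 2 * ⌈c⌉₊ + 2 with hj0def
  set E : ℕ := 3 * ⌈a⌉₊ + 3 * ⌈c⌉₊ + 3 with hEdef
  set Eb : ℕ := ⌈b⌉₊ with hEbdef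
  set Eb2 : ℕ := ⌈b2⌉₊ with hEb2def
  set icb : ℕ → ℝ := fun j => (mnn ((C + (j : ℂ) • 1)⁻¹) : ℝ) with hicbdef
  set Rf : ℕ → ℝ := fun N => pb a N * ∏ j ∈ Finset.range N, icb j with hRfdef
  have hicb0 : ∀ j, 0 ≤ icb j := fun j => NNReal.coe_nonneg _
  have hRf0 : ∀ N, 0 ≤ Rf N := fun N =>
    mul_nonneg (pb_nonneg ha0 N) (Finset.prod_nonneg fun j _ => hicb0 j)
  set K : ℝ := ∑ N ∈ Finset.range (j0 + 1), Rf N with hKdef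
  have hK0 : 0 ≤ K := Finset.sum_nonneg fun N _ => hRf0 N
  have hKle : ∀ N, N ≤ j0 → Rf N ≤ K := fun N hN =>
    Finset.single_le_sum (fun i _ => hRf0 i) (Finset.mem_range.mpr (Nat.lt_succ_of_le hN))
  have hcj : ∀ N : ℕ, j0 ≤ N → c < (N : ℝ) := by
    intro N hN
    have h1 : c ≤ (⌈c⌉₊ : ℝ) := Nat.le_ceil c
    have h2 : (⌈c⌉₊ : ℕ) < j0 := by omega
    have h3 : ((⌈c⌉₊ : ℕ) : ℝ) < (N : ℝ) := by exact_mod_cast lt_of_lt_of_le h2 hN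
    linarith
  have hstep : ∀ N : ℕ, j0 ≤ N → (a + N) * icb N ≤ (((N : ℝ) + 2) / ((N : ℝ) + 1)) ^ E := by
    intro N hN
    have hcN := hcj N hN
    have hNc : (0 : ℝ) < (N : ℝ) - c := by linarith
    have hN1 : (0 : ℝ) < (N : ℝ) + 1 := by positivity
    have hicbN : icb N ≤ 1 / ((N : ℝ) - c) := mnn_inv_shift_le hC hcN
    have hjr : (j0 : ℝ) = 2 * (⌈c⌉₊ : ℝ) + 2 := by rw [hj0def]; push_cast; ring
    have hjN : (j0 : ℝ) ≤ (N : ℝ) := by exact_mod_cast hN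
    have hceil : c ≤ (⌈c⌉₊ : ℝ) := Nat.le_ceil c
    have h3 : (N : ℝ) + 1 ≤ 3 * ((N : ℝ) - c) := by linarith
    have hE3 : 3 * (a + c) ≤ (E : ℝ) := by
      have h4 : a ≤ (⌈a⌉₊ : ℝ) := Nat.le_ceil a
      have h5 : (E : ℝ) = 3 * (⌈a⌉₊ : ℝ) + 3 * (⌈c⌉₊ : ℝ) + 3 := by rw [hEdef]; push_cast; ring
      linarith
    have haN : (0 : ℝ) ≤ a + N := add_nonneg ha0 (Nat.cast_nonneg N)
    calc (a + N) * icb N ≤ (a + N) * (1 / ((N : ℝ) - c)) :=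
          mul_le_mul_of_nonneg_left hicbN haN
      _ = 1 + (a + c) / ((N : ℝ) - c) := by field_simp; ring
      _ ≤ 1 + (E : ℝ) / ((N : ℝ) + 1) := by
          have hd : (a + c) / ((N : ℝ) - c) ≤ (E : ℝ) / ((N : ℝ) + 1) := by
            rw [div_le_div_iff₀ hNc hN1]
            nlinarith [add_nonneg ha0 hc0]
          linarith
      _ ≤ (((N : ℝ) + 1 + 1) / ((N : ℝ) + 1)) ^ E := ratio_pow hN1 E
      _ = (((N : ℝ) + 2) / ((N : ℝ) + 1)) ^ E := by ring_nf
  have hgrow : ∀ N : ℕ, Rf N ≤ K * ((N : ℝ) + 1) ^ E := by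
    have hsmall : ∀ N : ℕ, N ≤ j0 → Rf N ≤ K * ((N : ℝ) + 1) ^ E := by
      intro N hN
      have h0 : (0 : ℝ) ≤ (N : ℝ) := Nat.cast_nonneg N
      have h1 : (1 : ℝ) ≤ ((N : ℝ) + 1) ^ E := one_le_pow₀ (by linarith)
      calc Rf N ≤ K := hKle N hN
        _ = K * 1 := (mul_one K).symm
        _ ≤ K * ((N : ℝ) + 1) ^ E := mul_le_mul_of_nonneg_left h1 hK0
    intro N
    rcases le_or_gt N j0 with h | h
    · exact hsmall N h
    · have main : ∀ M : ℕ, j0 ≤ M → Rf M ≤ K * ((M : ℝ) + 1) ^ E := by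
        intro M hM
        induction M, hM using Nat.le_induction with
        | base => exact hsmall j0 le_rfl
        | succ N hN ih =>
          have hN1 : (0 : ℝ) < (N : ℝ) + 1 := by positivity
          have hRsucc : Rf (N + 1) = Rf N * ((a + N) * icb N) := by
            simp only [hRfdef, pb_succ, Finset.prod_range_succ]; ring
          calc Rf (N + 1) = Rf N * ((a + N) * icb N) := hRsucc
            _ ≤ (K * ((N : ℝ) + 1) ^ E) * ((((N : ℝ) + 2) / ((N : ℝ) + 1)) ^ E) :=
                mul_le_mul ih (hstep N hN)
                  (mul_nonneg (add_nonneg ha0 (Nat.cast_nonneg N)) (hicb0 N))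
                  (mul_nonneg hK0 (by positivity))
            _ = K * ((N : ℝ) + 2) ^ E := by
                rw [div_pow]
                field_simp
            _ = K * (((N + 1 : ℕ) : ℝ) + 1) ^ E := by push_cast; ring_nf
      exact main N h.le
  have hfact : ∀ m : ℕ, (0 : ℝ) < (m.factorial : ℝ) := fun m => by
    exact_mod_cast m.factorial_pos
  have hpbfact : ∀ (bv : ℝ), 0 ≤ bv → ∀ m : ℕ,
      ((m.factorial : ℝ))⁻¹ * pb bv m ≤ ((m : ℝ) + 1) ^ (⌈bv⌉₊) := by
    intro bv hbv m
    rw [inv_mul_le_iff₀ (hfact m)]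
    exact pb_le_fact hbv m
  have hsum : Summable (fun p : ℕ × ℕ =>
      K * ((((p.1 : ℝ) + 1) ^ (E + Eb) * ‖x‖ ^ p.1) * (((p.2 : ℝ) + 1) ^ (E + Eb2) * ‖y‖ ^ p.2))) :=
    Summable.mul_left K
      (Summable.mul_of_nonneg (summable_polygeo _ (norm_nonneg x) hx)
        (summable_polygeo _ (norm_nonneg y) hy)
        (fun m => by positivity) (fun n => by positivity))
  refine summable_of_mnn_le hsum ?_
  rintro ⟨m, n⟩
  simp only
  set N := m + n with hNdef
  set coef : ℂ := ((m.factorial : ℂ) * (n.factorial : ℂ))⁻¹ * x ^ m * y ^ n with hcoefdef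
  set W := mPoch A N * mPoch B m * mPoch B' n * (mPoch C N)⁻¹ with hWdef
  have w1 : (mnn (coef • W) : ℝ) ≤ ‖coef‖ * (mnn W : ℝ) := by
    have := mnn_smul_le coef W
    exact_mod_cast this
  have hcoefn : ‖coef‖ = ((m.factorial : ℝ) * (n.factorial : ℝ))⁻¹ * ‖x‖ ^ m * ‖y‖ ^ n := by
    rw [hcoefdef]
    simp [norm_mul, norm_inv, norm_pow]
  have w2 : (mnn W : ℝ) ≤ pb a N * pb b m * pb b2 n * ∏ j ∈ Finset.range N, icb j := by
    calc (mnn W : ℝ) ≤ (mnn (mPoch A N * mPoch B m * mPoch B' n) : ℝ) * (mnn ((mPoch C N)⁻¹) : ℝ) :=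
          mm _ _
      _ ≤ ((mnn (mPoch A N * mPoch B m) : ℝ) * (mnn (mPoch B' n) : ℝ)) * (mnn ((mPoch C N)⁻¹) : ℝ) :=
          mul_le_mul_of_nonneg_right (mm _ _) (NNReal.coe_nonneg _)
      _ ≤ (((mnn (mPoch A N) : ℝ) * (mnn (mPoch B m) : ℝ)) * (mnn (mPoch B' n) : ℝ)) *
            (mnn ((mPoch C N)⁻¹) : ℝ) := by
          apply mul_le_mul_of_nonneg_right _ (NNReal.coe_nonneg _)
          exact mul_le_mul_of_nonneg_right (mm _ _) (NNReal.coe_nonneg _)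
      _ ≤ pb a N * pb b m * pb b2 n * ∏ j ∈ Finset.range N, icb j := by
          exact mul_le_mul₄ (mnn_mPoch_le A N) (mnn_mPoch_le B m) (mnn_mPoch_le B' n)
            (mnn_inv_mPoch_le N) (NNReal.coe_nonneg _) (NNReal.coe_nonneg _)
            (NNReal.coe_nonneg _) (NNReal.coe_nonneg _)
  have hNle : ((N : ℝ) + 1) ≤ ((m : ℝ) + 1) * ((n : ℝ) + 1) := by
    have h1 : (0 : ℝ) ≤ (m : ℝ) := Nat.cast_nonneg m
    have h2 : (0 : ℝ) ≤ (n : ℝ) := Nat.cast_nonneg n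
    have h3 : (N : ℝ) = (m : ℝ) + (n : ℝ) := by rw [hNdef]; push_cast; ring
    nlinarith
  calc (mnn (coef • W) : ℝ) ≤ ‖coef‖ * (mnn W : ℝ) := w1
    _ ≤ ‖coef‖ * (pb a N * pb b m * pb b2 n * ∏ j ∈ Finset.range N, icb j) :=
        mul_le_mul_of_nonneg_left w2 (norm_nonneg _)
    _ = (‖x‖ ^ m * ‖y‖ ^ n) *
          (((m.factorial : ℝ)⁻¹ * pb b m) * ((n.factorial : ℝ)⁻¹ * pb b2 n) * Rf N) := by
        rw [hcoefn, mul_inv, hRfdef]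
        ring
    _ ≤ (‖x‖ ^ m * ‖y‖ ^ n) *
          ((((m : ℝ) + 1) ^ Eb * ((n : ℝ) + 1) ^ Eb2) * (K * ((N : ℝ) + 1) ^ E)) := by
        apply mul_le_mul_of_nonneg_left _ (by positivity)
        have := mul_le_mul₃ (hpbfact b hb0 m) (hpbfact b2 hb20 n) (hgrow N)
          (mul_nonneg (inv_nonneg.mpr (hfact m).le) (pb_nonneg hb0 m))
          (mul_nonneg (inv_nonneg.mpr (hfact n).le) (pb_nonneg hb20 n))
          (hRf0 N)
        calc ((m.factorial : ℝ)⁻¹ * pb b m) * ((n.factorial : ℝ)⁻¹ * pb b2 n) * Rf N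
            ≤ ((m : ℝ) + 1) ^ Eb * ((n : ℝ) + 1) ^ Eb2 * (K * ((N : ℝ) + 1) ^ E) := this
          _ = (((m : ℝ) + 1) ^ Eb * ((n : ℝ) + 1) ^ Eb2) * (K * ((N : ℝ) + 1) ^ E) := by ring
    _ ≤ (‖x‖ ^ m * ‖y‖ ^ n) *
          ((((m : ℝ) + 1) ^ Eb * ((n : ℝ) + 1) ^ Eb2) *
            (K * (((m : ℝ) + 1) ^ E * ((n : ℝ) + 1) ^ E))) := by
        apply mul_le_mul_of_nonneg_left _ (by positivity)
        apply mul_le_mul_of_nonneg_left _ (by positivity)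
        apply mul_le_mul_of_nonneg_left _ hK0
        calc ((N : ℝ) + 1) ^ E ≤ (((m : ℝ) + 1) * ((n : ℝ) + 1)) ^ E :=
              pow_le_pow_left₀ (by positivity) hNle E
          _ = ((m : ℝ) + 1) ^ E * ((n : ℝ) + 1) ^ E := mul_pow _ _ _
    _ = K * ((((m : ℝ) + 1) ^ (E + Eb) * ‖x‖ ^ m) * (((n : ℝ) + 1) ^ (E + Eb2) * ‖y‖ ^ n)) := by
        rw [pow_add, pow_add]
        ring

end P4

/-- The first Appell matrix function `F₁(A, B, B'; C; x, y)`. -/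
noncomputable def appellF1 {r : ℕ} (A B B' C : Matrix (Fin r) (Fin r) ℂ) (x y : ℂ) :
    Matrix (Fin r) (Fin r) ℂ :=
  ∑' p : ℕ × ℕ,
    (((p.1.factorial : ℂ) * (p.2.factorial : ℂ))⁻¹ * x ^ p.1 * y ^ p.2) •
      (mPoch A (p.1 + p.2) * mPoch B p.1 * mPoch B' p.2 * (mPoch C (p.1 + p.2))⁻¹)

section P5
open Finset
variable {r : ℕ}

noncomputable def apT (A B B' C : Matrix (Fin r) (Fin r) ℂ) (x y : ℂ) (p : ℕ × ℕ) :
    Matrix (Fin r) (Fin r) ℂ :=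
  (((p.1.factorial : ℂ) * (p.2.factorial : ℂ))⁻¹ * x ^ p.1 * y ^ p.2) •
    (mPoch A (p.1 + p.2) * mPoch B p.1 * mPoch B' p.2 * (mPoch C (p.1 + p.2))⁻¹)

lemma appellF1_eq_tsum (A B B' C : Matrix (Fin r) (Fin r) ℂ) (x y : ℂ) :
    appellF1 A B B' C x y = ∑' p : ℕ × ℕ, apT A B B' C x y p := rfl

lemma summable_apT (A B B' C : Matrix (Fin r) (Fin r) ℂ)
    (hC : ∀ n : ℕ, IsUnit (C + (n : ℂ) • (1 : Matrix (Fin r) (Fin r) ℂ)))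
    {x y : ℂ} (hx : ‖x‖ < 1) (hy : ‖y‖ < 1) :
    Summable (apT A B B' C x y) :=
  summable_apTerm A B B' C hC hx hy

lemma appellF1_step (A B B' C : Matrix (Fin r) (Fin r) ℂ) (x y : ℂ)
    (hAB : A * B = B * A) (hB'C : B' * C = C * B')
    (hC : ∀ n : ℕ, IsUnit (C + (n : ℂ) • (1 : Matrix (Fin r) (Fin r) ℂ)))
    (hC1 : IsUnit (C - 1))
    (hx : ‖x‖ < 1) (hy : ‖y‖ < 1) :
    appellF1 A B B' (C - 1) x y =
      appellF1 A B B' C x y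
      + (A * B) * ((x • appellF1 (A + 1) (B + 1) B' (C + 1) x y) * ((C - 1)⁻¹ * C⁻¹))
      + A * ((y • appellF1 (A + 1) B (B' + 1) (C + 1) x y) * (B' * ((C - 1)⁻¹ * C⁻¹))) := by
  have hC0 : IsUnit C := by simpa using hC 0
  have hC' : ∀ n : ℕ, IsUnit ((C + 1) + (n : ℂ) • (1 : Matrix (Fin r) (Fin r) ℂ)) := by
    intro n
    have he : (C + 1) + (n : ℂ) • (1 : Matrix (Fin r) (Fin r) ℂ)
        = C + ((n + 1 : ℕ) : ℂ) • 1 := by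
      push_cast
      rw [add_smul, one_smul]
      abel
    rw [he]
    exact hC (n + 1)
  -- commutation facts
  have hswap : C⁻¹ * (C - 1)⁻¹ = (C - 1)⁻¹ * C⁻¹ := by
    have h1 : Commute C (C - 1) := (Commute.refl C).sub_right (Commute.one_right C)
    have h2 : Commute C (C - 1)⁻¹ := commute_inv_right h1 hC1
    have h3 : Commute (C - 1)⁻¹ C⁻¹ := commute_inv_right h2.symm hC0
    exact h3.symm.eq
  have hBA1 : Commute B (A + 1) := by
    show B * (A + 1) = (A + 1) * B
    rw [mul_add, add_mul, mul_one, one_mul, ← hAB]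
  have hB'B'1 : Commute B' (B' + 1) := (Commute.refl B').add_right (Commute.one_right B')
  have hB'C1 : Commute B' (C + 1) := by
    show B' * (C + 1) = (C + 1) * B'
    rw [mul_add, add_mul, mul_one, one_mul, hB'C]
  -- matrix rearrangement lemmas
  have hM1 : ∀ P1 P2 P3 Q : Matrix (Fin r) (Fin r) ℂ, Commute B P1 →
      A * P1 * (B * P2) * P3 * (Q * C⁻¹) * (C - 1)⁻¹
        = (A * B) * (P1 * P2 * P3 * Q) * ((C - 1)⁻¹ * C⁻¹) := by
    intro P1 P2 P3 Q hBP
    calc A * P1 * (B * P2) * P3 * (Q * C⁻¹) * (C - 1)⁻¹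
        = A * ((P1 * B) * (P2 * P3 * Q)) * (C⁻¹ * (C - 1)⁻¹) := by noncomm_ring
      _ = A * ((B * P1) * (P2 * P3 * Q)) * (C⁻¹ * (C - 1)⁻¹) := by rw [← hBP.eq]
      _ = (A * B) * (P1 * P2 * P3 * Q) * (C⁻¹ * (C - 1)⁻¹) := by noncomm_ring
      _ = (A * B) * (P1 * P2 * P3 * Q) * ((C - 1)⁻¹ * C⁻¹) := by rw [hswap]
  have hM2 : ∀ P1 P2 P3 Q : Matrix (Fin r) (Fin r) ℂ, Commute B' P3 → Commute B' Q →
      A * P1 * P2 * (B' * P3) * (Q * C⁻¹) * (C - 1)⁻¹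
        = A * (P1 * P2 * P3 * Q) * (B' * ((C - 1)⁻¹ * C⁻¹)) := by
    intro P1 P2 P3 Q h3 hq
    calc A * P1 * P2 * (B' * P3) * (Q * C⁻¹) * (C - 1)⁻¹
        = A * (P1 * P2) * ((B' * P3) * Q) * (C⁻¹ * (C - 1)⁻¹) := by noncomm_ring
      _ = A * (P1 * P2) * ((P3 * B') * Q) * (C⁻¹ * (C - 1)⁻¹) := by rw [h3.eq]
      _ = A * (P1 * P2) * (P3 * (B' * Q)) * (C⁻¹ * (C - 1)⁻¹) := by noncomm_ring
      _ = A * (P1 * P2) * (P3 * (Q * B')) * (C⁻¹ * (C - 1)⁻¹) := by rw [hq.eq]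
      _ = A * (P1 * P2 * P3 * Q) * (B' * (C⁻¹ * (C - 1)⁻¹)) := by noncomm_ring
      _ = A * (P1 * P2 * P3 * Q) * (B' * ((C - 1)⁻¹ * C⁻¹)) := by rw [hswap]
  -- the splitting functions
  set g1 : ℕ × ℕ → Matrix (Fin r) (Fin r) ℂ :=
    fun p => (p.1 : ℂ) • (apT A B B' C x y p * (C - 1)⁻¹) with hg1def
  set g2 : ℕ × ℕ → Matrix (Fin r) (Fin r) ℂ :=
    fun p => (p.2 : ℂ) • (apT A B B' C x y p * (C - 1)⁻¹) with hg2def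
  have hpt : ∀ p : ℕ × ℕ,
      apT A B B' (C - 1) x y p = apT A B B' C x y p + g1 p + g2 p := by
    rintro ⟨m, n⟩
    simp only [hg1def, hg2def, apT]
    rw [inv_mPoch_sub_one hC hC1]
    simp only [mul_add, mul_smul_comm, smul_add, smul_mul_assoc, mul_assoc]
    push_cast
    module
  -- summability
  have Sf : Summable (apT A B B' C x y) := summable_apT A B B' C hC hx hy
  have SF1 : Summable (apT (A + 1) (B + 1) B' (C + 1) x y) :=
    summable_apT _ _ _ _ hC' hx hy
  have SF2 : Summable (apT (A + 1) B (B' + 1) (C + 1) x y) :=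
    summable_apT _ _ _ _ hC' hx hy
  -- injections
  set i1 : ℕ × ℕ → ℕ × ℕ := fun q => (q.1 + 1, q.2) with hi1def
  set i2 : ℕ × ℕ → ℕ × ℕ := fun q => (q.1, q.2 + 1) with hi2def
  have hi1 : Function.Injective i1 := by
    rintro ⟨a1, a2⟩ ⟨b1, b2⟩ h
    simp only [hi1def, Prod.mk.injEq] at h
    exact Prod.ext (by omega) h.2
  have hi2 : Function.Injective i2 := by
    rintro ⟨a1, a2⟩ ⟨b1, b2⟩ h
    simp only [hi2def, Prod.mk.injEq] at h
    exact Prod.ext h.1 (by omega)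
  have hsupp1 : ∀ p : ℕ × ℕ, p ∉ Set.range i1 → g1 p = 0 := by
    rintro ⟨m, n⟩ hp
    cases m with
    | zero => simp [hg1def]
    | succ m => exact absurd ⟨(m, n), rfl⟩ hp
  have hsupp2 : ∀ p : ℕ × ℕ, p ∉ Set.range i2 → g2 p = 0 := by
    rintro ⟨m, n⟩ hp
    cases n with
    | zero => simp [hg2def]
    | succ n => exact absurd ⟨(m, n), rfl⟩ hp
  -- scalar identities
  have hsc1 : ∀ m n : ℕ, ((m + 1 : ℕ) : ℂ) * ((((m + 1 : ℕ).factorial : ℂ) * (n.factorial : ℂ))⁻¹ * x ^ (m + 1) * y ^ n)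
      = x * (((m.factorial : ℂ) * (n.factorial : ℂ))⁻¹ * x ^ m * y ^ n) := by
    intro m n
    have hm : ((m + 1 : ℕ).factorial : ℂ) = ((m + 1 : ℕ) : ℂ) * (m.factorial : ℂ) := by
      rw [Nat.factorial_succ]; push_cast; ring
    have h1 : ((m + 1 : ℕ) : ℂ) ≠ 0 := by exact_mod_cast Nat.succ_ne_zero m
    have h2 : (m.factorial : ℂ) ≠ 0 := by exact_mod_cast m.factorial_ne_zero
    have h3 : (n.factorial : ℂ) ≠ 0 := by exact_mod_cast n.factorial_ne_zero
    have hcancel : ((m + 1 : ℕ) : ℂ) * (((m + 1 : ℕ) : ℂ))⁻¹ = 1 := mul_inv_cancel₀ h1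
    rw [hm, mul_assoc ((m + 1 : ℕ) : ℂ) (m.factorial : ℂ) (n.factorial : ℂ), mul_inv, pow_succ]
    linear_combination (x ^ m * x * y ^ n * ((m.factorial : ℂ) * (n.factorial : ℂ))⁻¹) * hcancel
  have hsc2 : ∀ m n : ℕ, ((n + 1 : ℕ) : ℂ) * (((m.factorial : ℂ) * ((n + 1 : ℕ).factorial : ℂ))⁻¹ * x ^ m * y ^ (n + 1))
      = y * (((m.factorial : ℂ) * (n.factorial : ℂ))⁻¹ * x ^ m * y ^ n) := by
    intro m n
    have hm : ((n + 1 : ℕ).factorial : ℂ) = ((n + 1 : ℕ) : ℂ) * (n.factorial : ℂ) := by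
      rw [Nat.factorial_succ]; push_cast; ring
    have h1 : ((n + 1 : ℕ) : ℂ) ≠ 0 := by exact_mod_cast Nat.succ_ne_zero n
    have h2 : (m.factorial : ℂ) ≠ 0 := by exact_mod_cast m.factorial_ne_zero
    have h3 : (n.factorial : ℂ) ≠ 0 := by exact_mod_cast n.factorial_ne_zero
    have hcancel : ((n + 1 : ℕ) : ℂ) * (((n + 1 : ℕ) : ℂ))⁻¹ = 1 := mul_inv_cancel₀ h1
    rw [hm, show ((m.factorial : ℂ) * (((n + 1 : ℕ) : ℂ) * (n.factorial : ℂ)))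
        = ((n + 1 : ℕ) : ℂ) * ((m.factorial : ℂ) * (n.factorial : ℂ)) from by ring,
      mul_inv, pow_succ]
    linear_combination (x ^ m * y ^ n * y * ((m.factorial : ℂ) * (n.factorial : ℂ))⁻¹) * hcancel
  -- composition identities
  have hcomp1 : ∀ q : ℕ × ℕ, g1 (i1 q)
      = (A * B) * ((x • apT (A + 1) (B + 1) B' (C + 1) x y q) * ((C - 1)⁻¹ * C⁻¹)) := by
    rintro ⟨m, n⟩
    simp only [hg1def, hi1def, apT]
    have hidx : m + 1 + n = (m + n) + 1 := by omega
    rw [hidx, mPoch_succ_left A, mPoch_succ_left B, inv_mPoch_succ_left]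
    rw [smul_mul_assoc, smul_smul, hsc1 m n]
    have hMM := hM1 (mPoch (A + 1) (m + n)) (mPoch (B + 1) m) (mPoch B' n)
      ((mPoch (C + 1) (m + n))⁻¹) (commute_mPoch hBA1 (m + n))
    calc (x * (((m.factorial : ℂ) * (n.factorial : ℂ))⁻¹ * x ^ m * y ^ n)) •
          (A * mPoch (A + 1) (m + n) * (B * mPoch (B + 1) m) * mPoch B' n *
            ((mPoch (C + 1) (m + n))⁻¹ * C⁻¹) * (C - 1)⁻¹)
        = (x * (((m.factorial : ℂ) * (n.factorial : ℂ))⁻¹ * x ^ m * y ^ n)) •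
          ((A * B) * (mPoch (A + 1) (m + n) * mPoch (B + 1) m * mPoch B' n *
            (mPoch (C + 1) (m + n))⁻¹) * ((C - 1)⁻¹ * C⁻¹)) := by rw [hMM]
      _ = (A * B) * ((x • ((((m.factorial : ℂ) * (n.factorial : ℂ))⁻¹ * x ^ m * y ^ n) •
            (mPoch (A + 1) (m + n) * mPoch (B + 1) m * mPoch B' n *
              (mPoch (C + 1) (m + n))⁻¹))) * ((C - 1)⁻¹ * C⁻¹)) := by
          simp only [smul_mul_assoc, mul_smul_comm, smul_smul, mul_assoc]
  have hcomp2 : ∀ q : ℕ × ℕ, g2 (i2 q)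
      = A * ((y • apT (A + 1) B (B' + 1) (C + 1) x y q) * (B' * ((C - 1)⁻¹ * C⁻¹))) := by
    rintro ⟨m, n⟩
    simp only [hg2def, hi2def, apT]
    have hidx : m + (n + 1) = (m + n) + 1 := by omega
    rw [hidx, mPoch_succ_left A, mPoch_succ_left B', inv_mPoch_succ_left]
    rw [smul_mul_assoc, smul_smul, hsc2 m n]
    have hMM := hM2 (mPoch (A + 1) (m + n)) (mPoch B m) (mPoch (B' + 1) n)
      ((mPoch (C + 1) (m + n))⁻¹) (commute_mPoch hB'B'1 n)
      (commute_inv_right (commute_mPoch hB'C1 (m + n)) (isUnit_mPoch hC' (m + n)))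
    calc (y * (((m.factorial : ℂ) * (n.factorial : ℂ))⁻¹ * x ^ m * y ^ n)) •
          (A * mPoch (A + 1) (m + n) * mPoch B m * (B' * mPoch (B' + 1) n) *
            ((mPoch (C + 1) (m + n))⁻¹ * C⁻¹) * (C - 1)⁻¹)
        = (y * (((m.factorial : ℂ) * (n.factorial : ℂ))⁻¹ * x ^ m * y ^ n)) •
          (A * (mPoch (A + 1) (m + n) * mPoch B m * mPoch (B' + 1) n *
            (mPoch (C + 1) (m + n))⁻¹) * (B' * ((C - 1)⁻¹ * C⁻¹))) := by rw [hMM]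
      _ = A * ((y • ((((m.factorial : ℂ) * (n.factorial : ℂ))⁻¹ * x ^ m * y ^ n) •
            (mPoch (A + 1) (m + n) * mPoch B m * mPoch (B' + 1) n *
              (mPoch (C + 1) (m + n))⁻¹))) * (B' * ((C - 1)⁻¹ * C⁻¹))) := by
          simp only [smul_mul_assoc, mul_smul_comm, smul_smul, mul_assoc]
  -- summability of g1 g2
  have Sg1 : Summable g1 := by
    rw [← hi1.summable_iff hsupp1]
    have he : (g1 ∘ i1) = fun q =>
        (A * B) * ((x • apT (A + 1) (B + 1) B' (C + 1) x y q) * ((C - 1)⁻¹ * C⁻¹)) :=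
      funext hcomp1
    rw [he]
    exact (((SF1.const_smul x).mul_right _).mul_left _)
  have Sg2 : Summable g2 := by
    rw [← hi2.summable_iff hsupp2]
    have he : (g2 ∘ i2) = fun q =>
        A * ((y • apT (A + 1) B (B' + 1) (C + 1) x y q) * (B' * ((C - 1)⁻¹ * C⁻¹))) :=
      funext hcomp2
    rw [he]
    exact (((SF2.const_smul y).mul_right _).mul_left _)
  -- tsum computations
  have ht1 : ∑' p : ℕ × ℕ, g1 p
      = (A * B) * ((x • appellF1 (A + 1) (B + 1) B' (C + 1) x y) * ((C - 1)⁻¹ * C⁻¹)) := by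
    rw [← hi1.tsum_eq (Function.support_subset_iff'.mpr hsupp1)]
    calc ∑' q : ℕ × ℕ, g1 (i1 q)
        = ∑' q : ℕ × ℕ, (A * B) *
            ((x • apT (A + 1) (B + 1) B' (C + 1) x y q) * ((C - 1)⁻¹ * C⁻¹)) :=
          tsum_congr hcomp1
      _ = (A * B) * ∑' q : ℕ × ℕ,
            ((x • apT (A + 1) (B + 1) B' (C + 1) x y q) * ((C - 1)⁻¹ * C⁻¹)) :=
          Summable.tsum_mul_left _ ((SF1.const_smul x).mul_right _)
      _ = (A * B) * ((∑' q : ℕ × ℕ, x • apT (A + 1) (B + 1) B' (C + 1) x y q) *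
            ((C - 1)⁻¹ * C⁻¹)) := by
          rw [Summable.tsum_mul_right _ (SF1.const_smul x)]
      _ = (A * B) * ((x • appellF1 (A + 1) (B + 1) B' (C + 1) x y) * ((C - 1)⁻¹ * C⁻¹)) := by
          rw [Summable.tsum_const_smul x SF1, appellF1_eq_tsum]
  have ht2 : ∑' p : ℕ × ℕ, g2 p
      = A * ((y • appellF1 (A + 1) B (B' + 1) (C + 1) x y) * (B' * ((C - 1)⁻¹ * C⁻¹))) := by
    rw [← hi2.tsum_eq (Function.support_subset_iff'.mpr hsupp2)]
    calc ∑' q : ℕ × ℕ, g2 (i2 q)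
        = ∑' q : ℕ × ℕ, A *
            ((y • apT (A + 1) B (B' + 1) (C + 1) x y q) * (B' * ((C - 1)⁻¹ * C⁻¹))) :=
          tsum_congr hcomp2
      _ = A * ∑' q : ℕ × ℕ,
            ((y • apT (A + 1) B (B' + 1) (C + 1) x y q) * (B' * ((C - 1)⁻¹ * C⁻¹))) :=
          Summable.tsum_mul_left _ ((SF2.const_smul y).mul_right _)
      _ = A * ((∑' q : ℕ × ℕ, y • apT (A + 1) B (B' + 1) (C + 1) x y q) *
            (B' * ((C - 1)⁻¹ * C⁻¹))) := by
          rw [Summable.tsum_mul_right _ (SF2.const_smul y)]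
      _ = A * ((y • appellF1 (A + 1) B (B' + 1) (C + 1) x y) * (B' * ((C - 1)⁻¹ * C⁻¹))) := by
          rw [Summable.tsum_const_smul y SF2, appellF1_eq_tsum]
  calc appellF1 A B B' (C - 1) x y
      = ∑' p : ℕ × ℕ, apT A B B' (C - 1) x y p := appellF1_eq_tsum _ _ _ _ _ _
    _ = ∑' p : ℕ × ℕ, (apT A B B' C x y p + g1 p + g2 p) := tsum_congr hpt
    _ = (∑' p : ℕ × ℕ, (apT A B B' C x y p + g1 p)) + ∑' p : ℕ × ℕ, g2 p :=
        Summable.tsum_add (Sf.add Sg1) Sg2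
    _ = ((∑' p : ℕ × ℕ, apT A B B' C x y p) + ∑' p : ℕ × ℕ, g1 p) + ∑' p : ℕ × ℕ, g2 p := by
        rw [Summable.tsum_add Sf Sg1]
    _ = appellF1 A B B' C x y
        + (A * B) * ((x • appellF1 (A + 1) (B + 1) B' (C + 1) x y) * ((C - 1)⁻¹ * C⁻¹))
        + A * ((y • appellF1 (A + 1) B (B' + 1) (C + 1) x y) * (B' * ((C - 1)⁻¹ * C⁻¹))) := by
        rw [ht1, ht2, ← appellF1_eq_tsum A B B' C x y]

end P5

theorem appellF1_recursion_C {r : ℕ} (A B B' C : Matrix (Fin r) (Fin r) ℂ) (x y : ℂ) (s : ℕ)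
    (hAB : A * B = B * A) (hB'C : B' * C = C * B')
    (hC : ∀ n : ℕ, IsUnit (C + (n : ℂ) • (1 : Matrix (Fin r) (Fin r) ℂ)))
    (hCs : ∀ k : ℕ, 1 ≤ k → k ≤ s → IsUnit (C - (k : ℂ) • (1 : Matrix (Fin r) (Fin r) ℂ)))
    (hx : ‖x‖ < 1) (hy : ‖y‖ < 1) :
    appellF1 A B B' (C - (s : ℂ) • 1) x y =
      appellF1 A B B' C x y +
        x • (A * B * ∑ k ∈ Finset.Icc 1 s,
          appellF1 (A + 1) (B + 1) B' (C + ((2 : ℂ) - (k : ℂ)) • 1) x y *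
            (C - (k : ℂ) • 1)⁻¹ * (C - ((k : ℂ) - 1) • 1)⁻¹) +
        y • (A * ∑ k ∈ Finset.Icc 1 s,
          appellF1 (A + 1) B (B' + 1) (C + ((2 : ℂ) - (k : ℂ)) • 1) x y * B' *
            (C - (k : ℂ) • 1)⁻¹ * (C - ((k : ℂ) - 1) • 1)⁻¹) := by
  have hx' : ‖x‖ < 1 := hx
  have hy' : ‖y‖ < 1 := hy
  revert hCs
  induction s with
  | zero =>
    intro _
    rw [Nat.cast_zero, zero_smul, sub_zero, Finset.Icc_eq_empty (by omega)]
    simp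
  | succ s ih =>
    intro hCs
    have IH := ih (fun k h1 h2 => hCs k h1 (by omega))
    set D := C - (s : ℂ) • (1 : Matrix (Fin r) (Fin r) ℂ) with hDdef
    have hD : ∀ n : ℕ, IsUnit (D + (n : ℂ) • (1 : Matrix (Fin r) (Fin r) ℂ)) := by
      intro n
      rcases le_or_gt s n with h | h
      · have he : D + (n : ℂ) • (1 : Matrix (Fin r) (Fin r) ℂ)
            = C + (((n - s : ℕ)) : ℂ) • 1 := by
          rw [hDdef, Nat.cast_sub h, sub_smul]
          abel
        rw [he]
        exact hC (n - s)
      · have he : D + (n : ℂ) • (1 : Matrix (Fin r) (Fin r) ℂ)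
            = C - (((s - n : ℕ)) : ℂ) • 1 := by
          rw [hDdef, Nat.cast_sub h.le, sub_smul]
          abel
        rw [he]
        exact hCs (s - n) (by omega) (by omega)
    have hD1e : D - 1 = C - (((s + 1 : ℕ)) : ℂ) • 1 := by
      rw [hDdef]
      push_cast
      module
    have hD1 : IsUnit (D - 1) := by
      rw [hD1e]
      exact hCs (s + 1) (by omega) le_rfl
    have hB'D : B' * D = D * B' := by
      rw [hDdef, mul_sub, sub_mul, hB'C, mul_smul_comm, smul_mul_assoc, mul_one, one_mul]
    have hstep := appellF1_step A B B' D x y hAB hB'D hD hD1 hx' hy'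
    have e3 : D + 1 = C + ((2 : ℂ) - (((s + 1 : ℕ)) : ℂ)) • 1 := by
      rw [hDdef]
      push_cast
      module
    have e2 : D⁻¹ = (C - ((((s + 1 : ℕ)) : ℂ) - 1) • 1)⁻¹ := by
      congr 1
      rw [hDdef]
      push_cast
      module
    rw [hD1e, e3, e2] at hstep
    rw [hstep, IH]
    rw [Finset.sum_Icc_succ_top (by omega : 1 ≤ s + 1),
      Finset.sum_Icc_succ_top (by omega : 1 ≤ s + 1)]
    simp only [mul_add, smul_add, smul_mul_assoc, mul_smul_comm, mul_assoc]
    abel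
end

section
/- Let A, B, B', C, C' ∈ ℂ^{r×r} with C + nI and C' + nI invertible for all integers n ≥ 0, AB = BA, and B', C, C' pairwise commuting; let |x| + |y| < 1. (i) If A + kI is invertible for all integers k ≥ 0, then for every non-negative integer s: F₂(A+sI, B, B'; C, C'; x, y) = ∑_{k₁+k₂ ≤ s} (s!/(k₁! k₂! (s−k₁−k₂)!)) (B)_{k₁} x^{k₁} y^{k₂} ·[F₂(A+(k₁+k₂)I, B+k₁I, B'+k₂I; C+k₁I, C'+k₂I; x, y)]·(B')_{k₂}·(C)_{k₁}⁻¹·(C')_{k₂}⁻¹. (ii) If moreover A − kI is invertible for all integers 1 ≤ k ≤ s, then F₂(A−sI, B, B'; C, C'; x, y) = ∑_{k₁+k₂ ≤ s} (s!/(k₁! k₂! (s−k₁−k₂)!)) (B)_{k₁} (−x)^{k₁} (−y)^{k₂} ·[F₂(A, B+k₁I, B'+k₂I; C+k₁I, C'+k₂I; x, y)]·(B')_{k₂}·(C)_{k₁}⁻¹·(C')_{k₂}⁻¹. -/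
/-- The second Appell matrix function `F₂(A, B, B'; C, C'; x, y)`. -/
noncomputable def appellF2 {r : ℕ} (A B B' C C' : Matrix (Fin r) (Fin r) ℂ) (x y : ℂ) :
    Matrix (Fin r) (Fin r) ℂ :=
  ∑' p : ℕ × ℕ,
    (((p.1.factorial : ℂ) * (p.2.factorial : ℂ))⁻¹ * x ^ p.1 * y ^ p.2) •
      (mPoch A (p.1 + p.2) * mPoch B p.1 * mPoch B' p.2 * (mPoch C p.1)⁻¹ * (mPoch C' p.2)⁻¹)

namespace AF2
variable {r : ℕ}

lemma mPoch_zero (A : Matrix (Fin r) (Fin r) ℂ) : mPoch A 0 = 1 := rfl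
lemma mPoch_succ (A : Matrix (Fin r) (Fin r) ℂ) (n : ℕ) :
    mPoch A (n+1) = mPoch A n * (A + (n : ℂ) • 1) := rfl

lemma mPoch_add (A : Matrix (Fin r) (Fin r) ℂ) (k m : ℕ) :
    mPoch A (k + m) = mPoch A k * mPoch (A + (k : ℂ) • 1) m := by
  induction m with
  | zero => simp [mPoch_zero]
  | succ n ih =>
      have : A + (k : ℂ) • 1 + (n : ℂ) • 1 = A + ((k + n : ℕ) : ℂ) • 1 := by
        push_cast; rw [add_smul, add_assoc]
      rw [← Nat.add_assoc, mPoch_succ, mPoch_succ, ih, this, mul_assoc]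

lemma commute_mPoch_right {Z Y : Matrix (Fin r) (Fin r) ℂ} (h : Commute Z Y) (j : ℕ) :
    Commute Z (mPoch Y j) := by
  induction j with
  | zero => exact Commute.one_right Z
  | succ n ih => exact ih.mul_right (h.add_right ((Commute.one_right Z).smul_right _))

lemma mPoch_commute {X Y : Matrix (Fin r) (Fin r) ℂ} (h : Commute X Y) (i j : ℕ) :
    Commute (mPoch X i) (mPoch Y j) :=
  commute_mPoch_right ((commute_mPoch_right h.symm i).symm) j

lemma commute_shift {X Y : Matrix (Fin r) (Fin r) ℂ} (h : Commute X Y) (α β : ℂ) :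
    Commute (X + α • 1) (Y + β • 1) := by
  have h1 : Commute X (Y + β • 1) := h.add_right ((Commute.one_right X).smul_right β)
  have h2 : Commute (1 : Matrix (Fin r) (Fin r) ℂ) (Y + β • 1) := Commute.one_left _
  exact h1.add_left (h2.smul_left α)

lemma mPoch_isUnit {C : Matrix (Fin r) (Fin r) ℂ}
    (hC : ∀ n : ℕ, IsUnit (C + (n : ℂ) • (1 : Matrix (Fin r) (Fin r) ℂ))) (m : ℕ) :
    IsUnit (mPoch C m) := by
  induction m with
  | zero => exact isUnit_one
  | succ n ih => exact ih.mul (hC n)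

lemma mul_inv_cancel_of_isUnit {M : Matrix (Fin r) (Fin r) ℂ} (h : IsUnit M) : M * M⁻¹ = 1 :=
  Matrix.mul_nonsing_inv M ((Matrix.isUnit_iff_isUnit_det M).1 h)

lemma inv_mul_cancel_of_isUnit {M : Matrix (Fin r) (Fin r) ℂ} (h : IsUnit M) : M⁻¹ * M = 1 :=
  Matrix.nonsing_inv_mul M ((Matrix.isUnit_iff_isUnit_det M).1 h)

lemma commute_inv_right {X M : Matrix (Fin r) (Fin r) ℂ} (h : Commute X M) (hM : IsUnit M) :
    Commute X M⁻¹ := by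
  have : X * M⁻¹ = M⁻¹ * X := by
    calc X * M⁻¹ = (M⁻¹ * M) * (X * M⁻¹) := by rw [inv_mul_cancel_of_isUnit hM, one_mul]
    _ = M⁻¹ * ((M * X) * M⁻¹) := by simp only [mul_assoc]
    _ = M⁻¹ * ((X * M) * M⁻¹) := by rw [← h.eq]
    _ = M⁻¹ * (X * (M * M⁻¹)) := by simp only [mul_assoc]
    _ = M⁻¹ * X := by rw [mul_inv_cancel_of_isUnit hM, mul_one]
  exact this

lemma mPoch_add_inv {C : Matrix (Fin r) (Fin r) ℂ} (k m : ℕ) :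
    (mPoch C (k + m))⁻¹ = (mPoch (C + (k : ℂ) • 1) m)⁻¹ * (mPoch C k)⁻¹ := by
  rw [mPoch_add, Matrix.mul_inv_rev]



noncomputable def cc (s k1 k2 : ℕ) : ℂ :=
  (s.factorial : ℂ) / ((k1.factorial : ℂ) * (k2.factorial : ℂ) * ((s - k1 - k2).factorial : ℂ))

def TT (s : ℕ) : Finset (ℕ × ℕ) :=
  (Finset.range (s+1) ×ˢ Finset.range (s+1)).filter (fun p => p.1 + p.2 ≤ s)

lemma mem_TT {s : ℕ} {p : ℕ × ℕ} : p ∈ TT s ↔ p.1 + p.2 ≤ s := by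
  simp only [TT, Finset.mem_filter, Finset.mem_product, Finset.mem_range]
  omega

lemma fact_cast_ne_zero (n : ℕ) : ((n.factorial : ℂ)) ≠ 0 :=
  Nat.cast_ne_zero.2 (Nat.factorial_ne_zero n)

lemma frac_helper (F x y z : ℂ) (X Y Z u v w : ℂ)
    (hu : u ≠ 0) (hv : v ≠ 0) (hw : w ≠ 0)
    (hx : x ≠ 0) (hy : y ≠ 0) (hz : z ≠ 0)
    (hXx : X = u * x) (hYy : Y = v * y) (hZz : Z = w * z) :
    ((u + v + w) * F) / (X * Y * Z) = F/(X*Y*z) + F/(x*Y*Z) + F/(X*y*Z) := by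
  subst hXx hYy hZz
  have t1 : F/((u*x)*(v*y)*z) = (w*F)/((u*x)*(v*y)*(w*z)) := by
    rw [show (u*x)*(v*y)*(w*z) = w*((u*x)*(v*y)*z) from by ring, mul_div_mul_left _ _ hw]
  have t2 : F/(x*(v*y)*(w*z)) = (u*F)/((u*x)*(v*y)*(w*z)) := by
    rw [show (u*x)*(v*y)*(w*z) = u*(x*(v*y)*(w*z)) from by ring, mul_div_mul_left _ _ hu]
  have t3 : F/((u*x)*y*(w*z)) = (v*F)/((u*x)*(v*y)*(w*z)) := by
    rw [show (u*x)*(v*y)*(w*z) = v*((u*x)*y*(w*z)) from by ring, mul_div_mul_left _ _ hv]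
  rw [t1, t2, t3, ← add_div, ← add_div]
  congr 1
  ring

set_option maxHeartbeats 1000000 in
lemma cc_pascal (s k1 k2 : ℕ) (h : k1 + k2 ≤ s + 1) :
    cc (s+1) k1 k2 = (if k1 + k2 ≤ s then cc s k1 k2 else 0)
      + (if 1 ≤ k1 then cc s (k1-1) k2 else 0) + (if 1 ≤ k2 then cc s k1 (k2-1) else 0) := by
  rcases k1 with _ | a <;> rcases k2 with _ | b
  · -- (0,0)
    simp only [Nat.add_zero, Nat.zero_add, Nat.zero_le, if_pos, if_neg (by omega : ¬ (1:ℕ) ≤ 0)]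
    simp only [cc, Nat.sub_zero, Nat.factorial_zero, Nat.cast_one, one_mul]
    rw [div_self (fact_cast_ne_zero (s+1)), div_self (fact_cast_ne_zero s)]
    ring
  · -- (0, b+1)
    rw [if_neg (by omega : ¬ (1:ℕ) ≤ 0)]
    by_cases hb : b + 1 ≤ s
    · obtain ⟨j, hj⟩ : ∃ j, s = b + 1 + j := ⟨s - (b+1), by omega⟩
      subst hj
      rw [if_pos (by omega), if_pos (by omega)]
      simp only [cc]
      rw [show b + 1 + j + 1 - 0 - (b+1) = j + 1 from by omega,
          show b + 1 + j - 0 - (b+1) = j from by omega,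
          show b + 1 + j - 0 - (b+1-1) = j + 1 from by omega,
          show b + 1 - 1 = b from by omega]
      rw [Nat.factorial_succ (b+1+j), Nat.factorial_succ j, Nat.factorial_succ b]
      have := fact_cast_ne_zero b; have := fact_cast_ne_zero j
      have := fact_cast_ne_zero (b+1+j)
      have : (b:ℂ) + 1 ≠ 0 := by exact_mod_cast Nat.succ_ne_zero b
      have : (j:ℂ) + 1 ≠ 0 := by exact_mod_cast Nat.succ_ne_zero j
      push_cast
      field_simp
      ring
    · have hb1 : b = s := by omega
      subst hb1
      rw [if_neg (by omega), if_pos (by omega)]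
      simp only [cc]
      rw [show b + 1 - 0 - (b+1) = 0 from by omega,
          show b - 0 - (b+1-1) = 0 from by omega,
          show b + 1 - 1 = b from by omega]
      rw [Nat.factorial_zero]
      simp [fact_cast_ne_zero]
      rw [div_self (fact_cast_ne_zero _), div_self (fact_cast_ne_zero _)]
  · -- (a+1, 0)
    rw [if_neg (by omega : ¬ (1:ℕ) ≤ 0)]
    by_cases ha : a + 1 ≤ s
    · obtain ⟨j, hj⟩ : ∃ j, s = a + 1 + j := ⟨s - (a+1), by omega⟩
      subst hj
      rw [if_pos (by omega), if_pos (by omega)]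
      simp only [cc]
      rw [show a + 1 + j + 1 - (a+1) - 0 = j + 1 from by omega,
          show a + 1 + j - (a+1) - 0 = j from by omega,
          show a + 1 + j - (a+1-1) - 0 = j + 1 from by omega,
          show a + 1 - 1 = a from by omega]
      rw [Nat.factorial_succ (a+1+j), Nat.factorial_succ j, Nat.factorial_succ a]
      have := fact_cast_ne_zero a; have := fact_cast_ne_zero j
      have := fact_cast_ne_zero (a+1+j)
      have : (a:ℂ) + 1 ≠ 0 := by exact_mod_cast Nat.succ_ne_zero a
      have : (j:ℂ) + 1 ≠ 0 := by exact_mod_cast Nat.succ_ne_zero j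
      push_cast
      field_simp
      ring
    · have ha1 : a = s := by omega
      subst ha1
      rw [if_neg (by omega), if_pos (by omega)]
      simp only [cc]
      rw [show a + 1 - (a+1) - 0 = 0 from by omega,
          show a - (a+1-1) - 0 = 0 from by omega,
          show a + 1 - 1 = a from by omega]
      rw [Nat.factorial_zero]
      simp [fact_cast_ne_zero]
      rw [div_self (fact_cast_ne_zero _), div_self (fact_cast_ne_zero _)]
  · -- (a+1, b+1)
    by_cases hab : a + 1 + (b + 1) ≤ s
    · obtain ⟨j, hj⟩ : ∃ j, s = a + 1 + (b + 1) + j := ⟨s - (a+1) - (b+1), by omega⟩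
      subst hj
      rw [if_pos (by omega), if_pos (by omega), if_pos (by omega)]
      simp only [cc]
      rw [show a+1+(b+1)+j+1 - (a+1) - (b+1) = j + 1 from by omega,
          show a+1+(b+1)+j - (a+1) - (b+1) = j from by omega,
          show a+1+(b+1)+j - (a+1-1) - (b+1) = j + 1 from by omega,
          show a+1+(b+1)+j - (a+1) - (b+1-1) = j + 1 from by omega,
          show a + 1 - 1 = a from by omega, show b + 1 - 1 = b from by omega]
      have e : (((a+1+(b+1)+j+1).factorial : ℂ)) =
          (((a:ℂ)+1) + ((b:ℂ)+1) + ((j:ℂ)+1)) * ((a+1+(b+1)+j).factorial : ℂ) := by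
        rw [Nat.factorial_succ]; push_cast; ring
      rw [e]
      exact frac_helper _ _ _ _ _ _ _ _ _ _
        (by exact_mod_cast Nat.succ_ne_zero a) (by exact_mod_cast Nat.succ_ne_zero b)
        (by exact_mod_cast Nat.succ_ne_zero j)
        (fact_cast_ne_zero a) (fact_cast_ne_zero b) (fact_cast_ne_zero j)
        (by rw [Nat.factorial_succ]; push_cast; ring)
        (by rw [Nat.factorial_succ]; push_cast; ring)
        (by rw [Nat.factorial_succ]; push_cast; ring)
    · have hs : s = a + b + 1 := by omega
      subst hs
      rw [if_neg (by omega), if_pos (by omega), if_pos (by omega)]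
      simp only [cc]
      rw [show a+b+1+1 - (a+1) - (b+1) = 0 from by omega,
          show a+b+1 - (a+1-1) - (b+1) = 0 from by omega,
          show a+b+1 - (a+1) - (b+1-1) = 0 from by omega,
          show a + 1 - 1 = a from by omega, show b + 1 - 1 = b from by omega]
      rw [Nat.factorial_zero, Nat.factorial_succ (a+b+1)]
      rw [Nat.factorial_succ a, Nat.factorial_succ b]
      have := fact_cast_ne_zero a; have := fact_cast_ne_zero b
      have := fact_cast_ne_zero (a+b+1)
      have : (a:ℂ) + 1 ≠ 0 := by exact_mod_cast Nat.succ_ne_zero a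
      have : (b:ℂ) + 1 ≠ 0 := by exact_mod_cast Nat.succ_ne_zero b
      push_cast
      field_simp
      ring


lemma sum_TT_succ {M : Type*} [AddCommMonoid M] [Module ℂ M] (s : ℕ) (G : ℕ → ℕ → M) :
    ∑ p ∈ TT (s+1), cc (s+1) p.1 p.2 • G p.1 p.2
      = ∑ p ∈ TT s, cc s p.1 p.2 • (G p.1 p.2 + G (p.1+1) p.2 + G p.1 (p.2+1)) := by
  have step1 : ∑ p ∈ TT (s+1), cc (s+1) p.1 p.2 • G p.1 p.2
      = ∑ p ∈ TT (s+1), ((if p.1 + p.2 ≤ s then cc s p.1 p.2 else 0) • G p.1 p.2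
        + (if 1 ≤ p.1 then cc s (p.1-1) p.2 else 0) • G p.1 p.2
        + (if 1 ≤ p.2 then cc s p.1 (p.2-1) else 0) • G p.1 p.2) := by
    refine Finset.sum_congr rfl fun p hp => ?_
    rw [cc_pascal s p.1 p.2 (mem_TT.1 hp), add_smul, add_smul]
  rw [step1, Finset.sum_add_distrib, Finset.sum_add_distrib]
  have e1 : ∑ p ∈ TT (s+1), (if p.1 + p.2 ≤ s then cc s p.1 p.2 else 0) • G p.1 p.2
      = ∑ p ∈ TT s, cc s p.1 p.2 • G p.1 p.2 := by
    rw [← Finset.sum_subset (fun p hp => mem_TT.2 (le_trans (mem_TT.1 hp) (Nat.le_succ s)))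
      (fun p _ hnp => by rw [if_neg (fun hle => hnp (mem_TT.2 hle)), zero_smul])]
    exact Finset.sum_congr rfl fun p hp => by rw [if_pos (mem_TT.1 hp)]
  have e2 : ∑ p ∈ TT (s+1), (if 1 ≤ p.1 then cc s (p.1-1) p.2 else 0) • G p.1 p.2
      = ∑ p ∈ TT s, cc s p.1 p.2 • G (p.1+1) p.2 := by
    simp only [ite_smul, zero_smul]
    rw [← Finset.sum_filter]
    refine Finset.sum_nbij' (fun p => (p.1 - 1, p.2)) (fun p => (p.1 + 1, p.2)) ?_ ?_ ?_ ?_ ?_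
    · intro p hp
      simp only [Finset.mem_filter, mem_TT] at hp
      apply mem_TT.2
      dsimp only
      omega
    · intro p hp
      simp only [mem_TT] at hp
      simp only [Finset.mem_filter, mem_TT]
      omega
    · intro p hp
      simp only [Finset.mem_filter, mem_TT] at hp
      ext <;> simp <;> omega
    · intro p _
      ext <;> simp
    · intro p hp
      simp only [Finset.mem_filter, mem_TT] at hp
      have : p.1 - 1 + 1 = p.1 := by omega
      simp only [this]
  have e3 : ∑ p ∈ TT (s+1), (if 1 ≤ p.2 then cc s p.1 (p.2-1) else 0) • G p.1 p.2
      = ∑ p ∈ TT s, cc s p.1 p.2 • G p.1 (p.2+1) := by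
    simp only [ite_smul, zero_smul]
    rw [← Finset.sum_filter]
    refine Finset.sum_nbij' (fun p => (p.1, p.2 - 1)) (fun p => (p.1, p.2 + 1)) ?_ ?_ ?_ ?_ ?_
    · intro p hp
      simp only [Finset.mem_filter, mem_TT] at hp
      apply mem_TT.2
      dsimp only
      omega
    · intro p hp
      simp only [mem_TT] at hp
      simp only [Finset.mem_filter, mem_TT]
      omega
    · intro p hp
      simp only [Finset.mem_filter, mem_TT] at hp
      ext <;> simp <;> omega
    · intro p _
      ext <;> simp
    · intro p hp
      simp only [Finset.mem_filter, mem_TT] at hp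
      have : p.2 - 1 + 1 = p.2 := by omega
      simp only [this]
  rw [e1, e2, e3]
  rw [← Finset.sum_add_distrib, ← Finset.sum_add_distrib]
  exact Finset.sum_congr rfl fun p _ => by rw [smul_add, smul_add]

lemma mPoch_one (X : Matrix (Fin r) (Fin r) ℂ) : mPoch X 1 = X := by
  simp [mPoch]

lemma mPoch_prepend (X : Matrix (Fin r) (Fin r) ℂ) (M : ℕ) :
    mPoch X (M+1) = X * mPoch (X + 1) M := by
  rw [show M + 1 = 1 + M from Nat.add_comm M 1, mPoch_add, mPoch_one]
  norm_num

lemma commute_self_shift (X : Matrix (Fin r) (Fin r) ℂ) : Commute X (X + 1) :=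
  (Commute.refl X).add_right (Commute.one_right X)

lemma L4 (X : Matrix (Fin r) (Fin r) ℂ) (M : ℕ) :
    mPoch (X + 1) M = mPoch X M + (M : ℂ) • mPoch (X + 1) (M - 1) := by
  cases M with
  | zero => simp [mPoch_zero]
  | succ M' =>
    have hc : Commute X (mPoch (X+1) M') := commute_mPoch_right (commute_self_shift X) M'
    rw [Nat.succ_sub_one, mPoch_succ, mPoch_prepend, mul_add, mul_add, mul_one,
      Matrix.mul_smul, mul_one, hc.eq]
    push_cast
    rw [add_smul, one_smul]
    abel

lemma L4' (X : Matrix (Fin r) (Fin r) ℂ) (M : ℕ) :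
    mPoch (X - 1) M = mPoch X M - (M : ℂ) • mPoch X (M - 1) := by
  cases M with
  | zero => simp [mPoch_zero]
  | succ M' =>
    have hc : Commute X (mPoch X M') := commute_mPoch_right (Commute.refl X) M'
    rw [Nat.succ_sub_one, mPoch_prepend, sub_add_cancel, mPoch_succ, sub_mul, one_mul, hc.eq,
      mul_add, Matrix.mul_smul, mul_one]
    push_cast
    rw [add_smul, one_smul]
    abel

lemma G_step (A : Matrix (Fin r) (Fin r) ℂ) (m n k1 k2 : ℕ) :
    ((m.descFactorial k1 * n.descFactorial k2 : ℕ) : ℂ) •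
        mPoch (A + ((k1 + k2 : ℕ) : ℂ) • 1) (m + n - k1 - k2)
      + ((m.descFactorial (k1+1) * n.descFactorial k2 : ℕ) : ℂ) •
        mPoch (A + ((k1 + 1 + k2 : ℕ) : ℂ) • 1) (m + n - (k1+1) - k2)
      + ((m.descFactorial k1 * n.descFactorial (k2+1) : ℕ) : ℂ) •
        mPoch (A + ((k1 + (k2+1) : ℕ) : ℂ) • 1) (m + n - k1 - (k2+1))
      = ((m.descFactorial k1 * n.descFactorial k2 : ℕ) : ℂ) •
        mPoch ((A + 1) + ((k1 + k2 : ℕ) : ℂ) • 1) (m + n - k1 - k2) := by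
  by_cases hk : k1 ≤ m ∧ k2 ≤ n
  · obtain ⟨h1, h2⟩ := hk
    have e1 : m + n - (k1+1) - k2 = (m + n - k1 - k2) - 1 := by omega
    have e2 : m + n - k1 - (k2+1) = (m + n - k1 - k2) - 1 := by omega
    have eb1 : A + ((k1 + 1 + k2 : ℕ) : ℂ) • 1 = (A + ((k1 + k2 : ℕ) : ℂ) • 1) + 1 := by
      push_cast
      rw [show ((k1:ℂ) + 1 + k2) = ((k1:ℂ) + k2) + 1 from by ring, add_smul, one_smul]
      abel
    have eb2 : A + ((k1 + (k2 + 1) : ℕ) : ℂ) • 1 = (A + ((k1 + k2 : ℕ) : ℂ) • 1) + 1 := by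
      push_cast
      rw [show ((k1:ℂ) + ((k2:ℂ) + 1)) = ((k1:ℂ) + k2) + 1 from by ring, add_smul, one_smul]
      abel
    have hd1 : (m.descFactorial (k1+1) * n.descFactorial k2 : ℕ)
        = (m - k1) * (m.descFactorial k1 * n.descFactorial k2) := by
      rw [Nat.descFactorial_succ]; ring
    have hd2 : (m.descFactorial k1 * n.descFactorial (k2+1) : ℕ)
        = (n - k2) * (m.descFactorial k1 * n.descFactorial k2) := by
      rw [Nat.descFactorial_succ]; ring
    have hM : ((m - k1 : ℕ) : ℂ) + ((n - k2 : ℕ) : ℂ) = ((m + n - k1 - k2 : ℕ) : ℂ) := by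
      rw [← Nat.cast_add]; congr 1; omega
    have eb3 : (A + 1) + ((k1 + k2 : ℕ) : ℂ) • 1 = (A + ((k1 + k2 : ℕ) : ℂ) • 1) + 1 := by abel
    rw [e1, e2, eb1, eb2, hd1, hd2, eb3, L4 (A + ((k1 + k2 : ℕ) : ℂ) • 1) (m + n - k1 - k2),
      Nat.cast_mul, Nat.cast_mul, ← hM]
    module
  · rcases not_and_or.1 hk with h | h
    · have hz : m.descFactorial k1 = 0 := Nat.descFactorial_eq_zero_iff_lt.2 (by omega)
      have hz' : m.descFactorial (k1+1) = 0 := Nat.descFactorial_eq_zero_iff_lt.2 (by omega)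
      simp [hz, hz']
    · have hz : n.descFactorial k2 = 0 := Nat.descFactorial_eq_zero_iff_lt.2 (by omega)
      have hz' : n.descFactorial (k2+1) = 0 := Nat.descFactorial_eq_zero_iff_lt.2 (by omega)
      simp [hz, hz']

lemma G_step' (A : Matrix (Fin r) (Fin r) ℂ) (m n k1 k2 : ℕ) :
    ((-1 : ℂ)^(k1+k2) * ((m.descFactorial k1 * n.descFactorial k2 : ℕ) : ℂ)) •
        mPoch A (m + n - k1 - k2)
      + ((-1 : ℂ)^(k1+1+k2) * ((m.descFactorial (k1+1) * n.descFactorial k2 : ℕ) : ℂ)) •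
        mPoch A (m + n - (k1+1) - k2)
      + ((-1 : ℂ)^(k1+(k2+1)) * ((m.descFactorial k1 * n.descFactorial (k2+1) : ℕ) : ℂ)) •
        mPoch A (m + n - k1 - (k2+1))
      = ((-1 : ℂ)^(k1+k2) * ((m.descFactorial k1 * n.descFactorial k2 : ℕ) : ℂ)) •
        mPoch (A - 1) (m + n - k1 - k2) := by
  by_cases hk : k1 ≤ m ∧ k2 ≤ n
  · obtain ⟨h1, h2⟩ := hk
    have e1 : m + n - (k1+1) - k2 = (m + n - k1 - k2) - 1 := by omega
    have e2 : m + n - k1 - (k2+1) = (m + n - k1 - k2) - 1 := by omega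
    have es1 : (-1 : ℂ)^(k1+1+k2) = -(-1 : ℂ)^(k1+k2) := by
      rw [show k1+1+k2 = (k1+k2)+1 from by omega, pow_succ]; ring
    have es2 : (-1 : ℂ)^(k1+(k2+1)) = -(-1 : ℂ)^(k1+k2) := by
      rw [show k1+(k2+1) = (k1+k2)+1 from by omega, pow_succ]; ring
    have hd1 : (m.descFactorial (k1+1) * n.descFactorial k2 : ℕ)
        = (m - k1) * (m.descFactorial k1 * n.descFactorial k2) := by
      rw [Nat.descFactorial_succ]; ring
    have hd2 : (m.descFactorial k1 * n.descFactorial (k2+1) : ℕ)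
        = (n - k2) * (m.descFactorial k1 * n.descFactorial k2) := by
      rw [Nat.descFactorial_succ]; ring
    have hM : ((m - k1 : ℕ) : ℂ) + ((n - k2 : ℕ) : ℂ) = ((m + n - k1 - k2 : ℕ) : ℂ) := by
      rw [← Nat.cast_add]; congr 1; omega
    rw [e1, e2, es1, es2, hd1, hd2, L4' A (m + n - k1 - k2),
      Nat.cast_mul, Nat.cast_mul, ← hM]
    module
  · rcases not_and_or.1 hk with h | h
    · have hz : m.descFactorial k1 = 0 := Nat.descFactorial_eq_zero_iff_lt.2 (by omega)
      have hz' : m.descFactorial (k1+1) = 0 := Nat.descFactorial_eq_zero_iff_lt.2 (by omega)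
      simp [hz, hz']
    · have hz : n.descFactorial k2 = 0 := Nat.descFactorial_eq_zero_iff_lt.2 (by omega)
      have hz' : n.descFactorial (k2+1) = 0 := Nat.descFactorial_eq_zero_iff_lt.2 (by omega)
      simp [hz, hz']

lemma TT_zero : TT 0 = {((0:ℕ),(0:ℕ))} := by
  ext p
  simp only [mem_TT, Finset.mem_singleton, Prod.ext_iff]
  omega

lemma sum_shift_eq (m n : ℕ) : ∀ (s : ℕ) (A : Matrix (Fin r) (Fin r) ℂ),
    ∑ p ∈ TT s, cc s p.1 p.2 •
        (((m.descFactorial p.1 * n.descFactorial p.2 : ℕ) : ℂ) •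
          mPoch (A + ((p.1 + p.2 : ℕ) : ℂ) • 1) (m + n - p.1 - p.2))
      = mPoch (A + (s : ℂ) • 1) (m + n) := by
  intro s
  induction s with
  | zero =>
      intro A
      rw [TT_zero, Finset.sum_singleton]
      simp [cc]
  | succ s ih =>
      intro A
      rw [sum_TT_succ s (fun k1 k2 => ((m.descFactorial k1 * n.descFactorial k2 : ℕ) : ℂ) •
          mPoch (A + ((k1 + k2 : ℕ) : ℂ) • 1) (m + n - k1 - k2))]
      rw [Finset.sum_congr rfl (fun p _ => by rw [G_step A m n p.1 p.2]), ih (A + 1)]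
      have hb : A + 1 + (s : ℂ) • 1 = A + ((s+1 : ℕ) : ℂ) • 1 := by
        push_cast
        rw [add_smul, one_smul]
        abel
      rw [hb]

lemma sum_shift_neg_eq (m n : ℕ) : ∀ (s : ℕ) (A : Matrix (Fin r) (Fin r) ℂ),
    ∑ p ∈ TT s, cc s p.1 p.2 •
        (((-1 : ℂ)^(p.1+p.2) * ((m.descFactorial p.1 * n.descFactorial p.2 : ℕ) : ℂ)) •
          mPoch A (m + n - p.1 - p.2))
      = mPoch (A - (s : ℂ) • 1) (m + n) := by
  intro s
  induction s with
  | zero =>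
      intro A
      rw [TT_zero, Finset.sum_singleton]
      simp [cc]
  | succ s ih =>
      intro A
      rw [sum_TT_succ s (fun k1 k2 => ((-1 : ℂ)^(k1+k2) *
          ((m.descFactorial k1 * n.descFactorial k2 : ℕ) : ℂ)) • mPoch A (m + n - k1 - k2))]
      rw [Finset.sum_congr rfl (fun p _ => by rw [G_step' A m n p.1 p.2]), ih (A - 1)]
      have hb : A - 1 - (s : ℂ) • 1 = A - ((s+1 : ℕ) : ℂ) • 1 := by
        push_cast
        rw [add_smul, one_smul]
        abel
      rw [hb]

open scoped NNReal

noncomputable def opN (M : Matrix (Fin r) (Fin r) ℂ) : ℝ≥0 :=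
  Finset.univ.sup fun i => ∑ j, ‖M i j‖₊

lemma le_opN (M : Matrix (Fin r) (Fin r) ℂ) (i : Fin r) : (∑ j, ‖M i j‖₊) ≤ opN M :=
  Finset.le_sup (f := fun i => ∑ j, ‖M i j‖₊) (Finset.mem_univ i)

lemma opN_le {M : Matrix (Fin r) (Fin r) ℂ} {t : ℝ≥0} (h : ∀ i, (∑ j, ‖M i j‖₊) ≤ t) :
    opN M ≤ t :=
  Finset.sup_le fun i _ => h i

lemma opN_entry (M : Matrix (Fin r) (Fin r) ℂ) (i j : Fin r) : ‖M i j‖₊ ≤ opN M :=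
  le_trans (Finset.single_le_sum (f := fun k => ‖M i k‖₊) (fun _ _ => by positivity)
    (Finset.mem_univ j)) (le_opN M i)

lemma opN_one : opN (1 : Matrix (Fin r) (Fin r) ℂ) ≤ 1 := by
  refine opN_le fun i => ?_
  have h : ∀ j, ‖(1 : Matrix (Fin r) (Fin r) ℂ) i j‖₊ = if i = j then 1 else 0 := fun j => by
    rw [Matrix.one_apply]; split <;> simp
  rw [Finset.sum_congr rfl fun j _ => h j, Finset.sum_ite_eq]
  simp

lemma opN_smul (c : ℂ) (M : Matrix (Fin r) (Fin r) ℂ) : opN (c • M) = ‖c‖₊ * opN M := by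
  unfold opN
  rw [NNReal.mul_finset_sup]
  refine Finset.sup_congr rfl fun i _ => ?_
  rw [Finset.mul_sum]
  exact Finset.sum_congr rfl fun j _ => by rw [Matrix.smul_apply, smul_eq_mul, nnnorm_mul]

lemma opN_add (M N : Matrix (Fin r) (Fin r) ℂ) : opN (M + N) ≤ opN M + opN N := by
  refine opN_le fun i => ?_
  calc ∑ j, ‖(M + N) i j‖₊ ≤ ∑ j, (‖M i j‖₊ + ‖N i j‖₊) :=
        Finset.sum_le_sum fun j _ => by rw [Matrix.add_apply]; exact nnnorm_add_le _ _
  _ = (∑ j, ‖M i j‖₊) + ∑ j, ‖N i j‖₊ := Finset.sum_add_distrib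
  _ ≤ opN M + opN N := add_le_add (le_opN M i) (le_opN N i)

lemma opN_neg (M : Matrix (Fin r) (Fin r) ℂ) : opN (-M) = opN M := by
  unfold opN
  exact Finset.sup_congr rfl fun i _ => Finset.sum_congr rfl fun j _ => by
    rw [Matrix.neg_apply, nnnorm_neg]

lemma opN_mul (M N : Matrix (Fin r) (Fin r) ℂ) : opN (M * N) ≤ opN M * opN N := by
  refine opN_le fun i => ?_
  calc ∑ j, ‖(M * N) i j‖₊ ≤ ∑ j, ∑ k, ‖M i k‖₊ * ‖N k j‖₊ := by
        refine Finset.sum_le_sum fun j _ => ?_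
        rw [Matrix.mul_apply]
        exact le_trans (nnnorm_sum_le _ _)
          (Finset.sum_le_sum fun k _ => le_of_eq (nnnorm_mul _ _))
  _ = ∑ k, (‖M i k‖₊ * ∑ j, ‖N k j‖₊) := by
        rw [Finset.sum_comm]
        exact Finset.sum_congr rfl fun k _ => (Finset.mul_sum _ _ _).symm
  _ ≤ ∑ k, ‖M i k‖₊ * opN N :=
        Finset.sum_le_sum fun k _ => mul_le_mul_right (le_opN N k) _
  _ = (∑ k, ‖M i k‖₊) * opN N := (Finset.sum_mul _ _ _).symm
  _ ≤ opN M * opN N := mul_le_mul_left (le_opN M i) _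

lemma opN_natsmul_one (n : ℕ) :
    opN ((n : ℂ) • (1 : Matrix (Fin r) (Fin r) ℂ)) ≤ (n : ℝ≥0) := by
  rw [opN_smul]
  calc ‖(n : ℂ)‖₊ * opN (1 : Matrix (Fin r) (Fin r) ℂ) ≤ ‖(n : ℂ)‖₊ * 1 :=
        mul_le_mul_right opN_one _
  _ = (n : ℝ≥0) := by rw [mul_one, RCLike.nnnorm_natCast]

lemma opN_mPoch_le (A : Matrix (Fin r) (Fin r) ℂ) (N : ℕ) :
    opN (mPoch A N) ≤ ∏ j ∈ Finset.range N, (opN A + j) := by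
  induction N with
  | zero => simpa [mPoch_zero] using (opN_one (r := r))
  | succ n ih =>
      rw [mPoch_succ, Finset.prod_range_succ]
      refine le_trans (opN_mul _ _) (mul_le_mul' ih ?_)
      exact le_trans (opN_add _ _) (add_le_add_right (opN_natsmul_one n) _)

lemma opN_mPoch_inv_le (C : Matrix (Fin r) (Fin r) ℂ) (m : ℕ) :
    opN ((mPoch C m)⁻¹) ≤ ∏ j ∈ Finset.range m, opN ((C + (j : ℂ) • 1)⁻¹) := by
  induction m with
  | zero =>
      have h1 : ((1 : Matrix (Fin r) (Fin r) ℂ))⁻¹ = 1 := Matrix.inv_eq_left_inv (by simp)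
      simpa [mPoch_zero, h1] using (opN_one (r := r))
  | succ n ih =>
      rw [mPoch_succ, Matrix.mul_inv_rev, Finset.prod_range_succ]
      calc opN ((C + (n:ℂ) • 1)⁻¹ * (mPoch C n)⁻¹)
          ≤ opN ((C + (n:ℂ) • 1)⁻¹) * opN ((mPoch C n)⁻¹) := opN_mul _ _
      _ ≤ opN ((C + (n:ℂ) • 1)⁻¹) * ∏ j ∈ Finset.range n, opN ((C + (j:ℂ) • 1)⁻¹) :=
            mul_le_mul_right ih _
      _ = _ := mul_comm _ _

lemma opN_inv_ineq {C : Matrix (Fin r) (Fin r) ℂ} {j : ℕ}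
    (hu : IsUnit (C + (j : ℂ) • (1 : Matrix (Fin r) (Fin r) ℂ))) :
    (j : ℝ≥0) * opN ((C + (j : ℂ) • 1)⁻¹) ≤ 1 + opN C * opN ((C + (j : ℂ) • 1)⁻¹) := by
  set y := (C + (j : ℂ) • 1)⁻¹ with hy
  have h0 : (C + (j : ℂ) • 1) * y = 1 := mul_inv_cancel_of_isUnit hu
  have h1 : (j : ℂ) • y = 1 + -(C * y) := by
    have h2 : C * y + (j : ℂ) • y = 1 := by
      rw [← h0, add_mul, smul_mul_assoc, one_mul]
    rw [← h2]; abel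
  calc (j : ℝ≥0) * opN y = opN ((j : ℂ) • y) := by rw [opN_smul, RCLike.nnnorm_natCast]
  _ = opN (1 + -(C * y)) := by rw [h1]
  _ ≤ opN (1 : Matrix (Fin r) (Fin r) ℂ) + opN (-(C * y)) := opN_add _ _
  _ ≤ 1 + opN C * opN y := by
        rw [opN_neg]
        exact add_le_add opN_one (opN_mul _ _)

lemma prod_growth (u : ℕ → ℝ≥0) (θ : ℝ≥0) (hθ : 1 ≤ θ) (J : ℕ)
    (h : ∀ j, J ≤ j → u j ≤ θ) (m : ℕ) :
    ∏ j ∈ Finset.range m, u j ≤ (∏ j ∈ Finset.range J, max (u j) 1) * θ^m := by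
  calc ∏ j ∈ Finset.range m, u j
      ≤ ∏ j ∈ Finset.range m, ((if j < J then max (u j) 1 else 1) * θ) := by
        refine Finset.prod_le_prod' fun j _ => ?_
        split
        · exact le_trans (le_max_left _ _) (le_mul_of_one_le_right' hθ)
        · rename_i hj
          rw [one_mul]
          exact h j (by omega)
  _ = (∏ j ∈ Finset.range m, (if j < J then max (u j) 1 else 1)) * θ^m := by
        rw [Finset.prod_mul_distrib, Finset.prod_const, Finset.card_range]
  _ ≤ (∏ j ∈ Finset.range J, max (u j) 1) * θ^m := by
        refine mul_le_mul_left ?_ _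
        rw [← Finset.prod_filter]
        refine Finset.prod_le_prod_of_subset_of_one_le' ?_ ?_
        · intro j hj
          simp only [Finset.mem_filter, Finset.mem_range] at hj ⊢
          omega
        · intro j _ _
          exact le_max_right _ _

lemma eventual_bound (b c : ℝ≥0) (g : ℕ → ℝ≥0) (θ : ℝ≥0) (hθ : 1 < θ)
    (hg : ∀ j : ℕ, (j : ℝ≥0) * g j ≤ 1 + c * g j) :
    ∃ J : ℕ, ∀ j, J ≤ j → (b + j) * g j ≤ θ := by
  have hθ1 : (1 : ℝ) < (θ : ℝ) := hθ
  set S : ℝ := ((b : ℝ) + (θ : ℝ) * (c : ℝ) + (θ : ℝ)) / ((θ : ℝ) - 1) with hS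
  refine ⟨⌈S + (c : ℝ) + 1⌉₊, fun j hj => ?_⟩
  have hjr : S + (c : ℝ) + 1 ≤ (j : ℝ) := by
    have := Nat.le_ceil (S + (c : ℝ) + 1)
    exact le_trans this (by exact_mod_cast hj)
  have hc0 : (0:ℝ) ≤ (c:ℝ) := c.2
  have hb0 : (0:ℝ) ≤ (b:ℝ) := b.2
  have hSpos : 0 ≤ S := by
    apply div_nonneg
    · positivity
    · linarith
  have hcj : (c : ℝ) + 1 ≤ (j : ℝ) := by linarith
  have hnum : ((b : ℝ) + (θ : ℝ) * (c : ℝ) + (θ : ℝ)) ≤ ((θ : ℝ) - 1) * (j : ℝ) := by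
    have hden : (0 : ℝ) < (θ : ℝ) - 1 := by linarith
    have hSj : S ≤ (j : ℝ) := by linarith
    calc ((b : ℝ) + (θ : ℝ) * (c : ℝ) + (θ : ℝ)) = S * ((θ : ℝ) - 1) := by
          rw [hS, div_mul_cancel₀ _ (ne_of_gt hden)]
    _ ≤ (j : ℝ) * ((θ : ℝ) - 1) := mul_le_mul_of_nonneg_right hSj (le_of_lt hden)
    _ = ((θ : ℝ) - 1) * (j : ℝ) := mul_comm _ _
  have hg' : ((j : ℝ)) * (g j : ℝ) ≤ 1 + (c : ℝ) * (g j : ℝ) := by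
    have := hg j
    rw [← NNReal.coe_le_coe] at this
    push_cast at this
    exact this
  rw [← NNReal.coe_le_coe]
  push_cast
  have hgpos : (0 : ℝ) ≤ (g j : ℝ) := (g j).2
  have h1' : (0 : ℝ) ≤ (θ : ℝ) * ((j : ℝ) - (c : ℝ)) - ((b : ℝ) + (j : ℝ)) := by nlinarith
  have h2' : (0 : ℝ) ≤ 1 + (c : ℝ) * (g j : ℝ) - (j : ℝ) * (g j : ℝ) := by linarith
  nlinarith [mul_nonneg h1' hgpos, mul_nonneg (by linarith : (0:ℝ) ≤ (θ:ℝ)) h2']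

lemma summable_of_entries {ι : Type*} (f : ι → Matrix (Fin r) (Fin r) ℂ)
    (h : ∀ i j, Summable fun x => f x i j) : Summable f :=
  Pi.summable.2 fun i => Pi.summable.2 fun j => h i j

lemma choose_le_pow (m n : ℕ) (s t : ℝ≥0) :
    ((m+n).choose m : ℝ≥0) * s^m * t^n ≤ (s + t)^(m+n) := by
  rw [add_pow]
  calc ((m+n).choose m : ℝ≥0) * s^m * t^n = s^m * t^((m+n)-m) * ((m+n).choose m) := by
        rw [Nat.add_sub_cancel_left]; ring
  _ ≤ ∑ k ∈ Finset.range (m+n+1), s^k * t^((m+n)-k) * ((m+n).choose k) :=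
        Finset.single_le_sum (f := fun k => s^k * t^((m+n)-k) * (((m+n).choose k : ℕ) : ℝ≥0))
          (fun _ _ => by positivity)
          (Finset.mem_range.2 (Nat.lt_succ_of_le (Nat.le_add_right m n)))

lemma fact_nn_ne_zero (n : ℕ) : ((n.factorial : ℝ≥0)) ≠ 0 :=
  Nat.cast_ne_zero.2 (Nat.factorial_ne_zero n)

lemma choose_eq_div (m n : ℕ) :
    ((m+n).factorial : ℝ≥0) * ((m.factorial : ℝ≥0))⁻¹ * ((n.factorial : ℝ≥0))⁻¹
      = ((m+n).choose m : ℝ≥0) := by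
  have h := Nat.choose_mul_factorial_mul_factorial (Nat.le_add_right m n)
  rw [Nat.add_sub_cancel_left] at h
  rw [← h]
  push_cast
  field_simp

lemma prod_range_cast_factorial (N : ℕ) :
    ∏ j ∈ Finset.range N, ((j : ℝ≥0) + 1) = (N.factorial : ℝ≥0) := by
  induction N with
  | zero => simp
  | succ n ih =>
      rw [Finset.prod_range_succ, ih, Nat.factorial_succ]
      push_cast
      ring

lemma appell_term_summable (A B B' C C' : Matrix (Fin r) (Fin r) ℂ) (x y : ℂ)
    (hC : ∀ n : ℕ, IsUnit (C + (n : ℂ) • (1 : Matrix (Fin r) (Fin r) ℂ)))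
    (hC' : ∀ n : ℕ, IsUnit (C' + (n : ℂ) • (1 : Matrix (Fin r) (Fin r) ℂ)))
    (hxy : ‖x‖ + ‖y‖ < 1) :
    Summable (fun p : ℕ × ℕ =>
      (((p.1.factorial : ℂ) * (p.2.factorial : ℂ))⁻¹ * x ^ p.1 * y ^ p.2) •
        (mPoch A (p.1 + p.2) * mPoch B p.1 * mPoch B' p.2 *
          (mPoch C p.1)⁻¹ * (mPoch C' p.2)⁻¹)) := by
  have hu1 : ‖x‖₊ + ‖y‖₊ < 1 := by
    rw [← NNReal.coe_lt_coe]
    push_cast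
    simpa [coe_nnnorm] using hxy
  set u' : ℝ≥0 := ‖x‖₊ + ‖y‖₊ with hu'def
  set θ : ℝ≥0 := NNReal.sqrt (2 / (1 + u')) with hθdef
  have hθsq : θ^2 = 2 / (1 + u') := NNReal.sq_sqrt _
  have hu0 : (0:ℝ) ≤ (u' : ℝ) := u'.2
  have hu1' : (u' : ℝ) < 1 := hu1
  have h2 : (1 : ℝ≥0) < 2 / (1 + u') := by
    rw [← NNReal.coe_lt_coe, NNReal.coe_div]
    push_cast
    rw [lt_div_iff₀ (by positivity)]
    linarith
  have hθ : 1 < θ := by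
    have h3 := NNReal.sqrt_lt_sqrt.2 h2
    rwa [NNReal.sqrt_one] at h3
  set v : ℝ≥0 := θ^2 * u' with hvdef
  have hv1 : v < 1 := by
    rw [hvdef, hθsq, ← NNReal.coe_lt_coe, NNReal.coe_mul, NNReal.coe_div]
    push_cast
    rw [div_mul_eq_mul_div, div_lt_one (by positivity)]
    linarith
  obtain ⟨J1, hJ1⟩ := eventual_bound (opN A) 0 (fun j => ((j : ℝ≥0) + 1)⁻¹) θ hθ (fun j => by
    rw [zero_mul, add_zero]
    calc (j : ℝ≥0) * ((j : ℝ≥0) + 1)⁻¹ ≤ ((j : ℝ≥0) + 1) * ((j : ℝ≥0) + 1)⁻¹ :=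
          mul_le_mul_left (self_le_add_right _ _) _
    _ = 1 := mul_inv_cancel₀ (by positivity))
  obtain ⟨J2, hJ2⟩ := eventual_bound (opN B) (opN C) (fun j => opN ((C + (j:ℂ) • 1)⁻¹)) θ hθ
    (fun j => opN_inv_ineq (hC j))
  obtain ⟨J3, hJ3⟩ := eventual_bound (opN B') (opN C') (fun j => opN ((C' + (j:ℂ) • 1)⁻¹)) θ hθ
    (fun j => opN_inv_ineq (hC' j))
  set K1 : ℝ≥0 := ∏ j ∈ Finset.range J1, max ((opN A + j) * ((j : ℝ≥0) + 1)⁻¹) 1 with hK1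
  set K2 : ℝ≥0 := ∏ j ∈ Finset.range J2, max ((opN B + j) * opN ((C + (j:ℂ) • 1)⁻¹)) 1 with hK2
  set K3 : ℝ≥0 := ∏ j ∈ Finset.range J3, max ((opN B' + j) * opN ((C' + (j:ℂ) • 1)⁻¹)) 1 with hK3
  have hθ1 : (1:ℝ≥0) ≤ θ := le_of_lt hθ
  have hα : ∀ N : ℕ, (∏ j ∈ Finset.range N, (opN A + j)) ≤ K1 * θ^N * (N.factorial : ℝ≥0) := by
    intro N
    have hsplit : (∏ j ∈ Finset.range N, (opN A + j))
        = (∏ j ∈ Finset.range N, ((opN A + j) * ((j : ℝ≥0) + 1)⁻¹)) * (N.factorial : ℝ≥0) := by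
      rw [← prod_range_cast_factorial, ← Finset.prod_mul_distrib]
      refine Finset.prod_congr rfl fun j _ => ?_
      rw [mul_assoc, inv_mul_cancel₀ (by positivity), mul_one]
    rw [hsplit]
    exact mul_le_mul_left (prod_growth _ θ hθ1 J1 hJ1 N) _
  have hβγ : ∀ m : ℕ, (∏ j ∈ Finset.range m, (opN B + j)) *
      (∏ j ∈ Finset.range m, opN ((C + (j:ℂ) • 1)⁻¹)) ≤ K2 * θ^m := by
    intro m
    rw [← Finset.prod_mul_distrib]
    exact prod_growth _ θ hθ1 J2 hJ2 m
  have hβγ' : ∀ n : ℕ, (∏ j ∈ Finset.range n, (opN B' + j)) *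
      (∏ j ∈ Finset.range n, opN ((C' + (j:ℂ) • 1)⁻¹)) ≤ K3 * θ^n := by
    intro n
    rw [← Finset.prod_mul_distrib]
    exact prod_growth _ θ hθ1 J3 hJ3 n
  refine summable_of_entries _ fun i j => ?_
  refine Summable.of_nnnorm_bounded (g := fun p => (K1 * K2 * K3) * (v ^ p.1 * v ^ p.2)) ?_ ?_
  · have hs : Summable (fun p : ℕ × ℕ => ((v:ℝ) ^ p.1) * ((v:ℝ) ^ p.2)) :=
      Summable.mul_of_nonneg
        (summable_geometric_of_lt_one v.2 (by exact_mod_cast hv1))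
        (summable_geometric_of_lt_one v.2 (by exact_mod_cast hv1))
        (fun _ => pow_nonneg v.2 _) (fun _ => pow_nonneg v.2 _)
    apply NNReal.summable_coe.1
    push_cast
    exact hs.mul_left _
  · rintro ⟨m, n⟩
    have hsc : ‖((m.factorial : ℂ) * (n.factorial : ℂ))⁻¹ * x ^ m * y ^ n‖₊
        = (m.factorial : ℝ≥0)⁻¹ * (n.factorial : ℝ≥0)⁻¹ * ‖x‖₊^m * ‖y‖₊^n := by
      rw [nnnorm_mul, nnnorm_mul, nnnorm_inv, nnnorm_mul, nnnorm_pow, nnnorm_pow,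
        RCLike.nnnorm_natCast, RCLike.nnnorm_natCast, mul_inv]
    have hPbound : opN (mPoch A (m + n) * mPoch B m * mPoch B' n *
          (mPoch C m)⁻¹ * (mPoch C' n)⁻¹)
        ≤ (∏ j ∈ Finset.range (m+n), (opN A + j)) * (∏ j ∈ Finset.range m, (opN B + j))
          * (∏ j ∈ Finset.range n, (opN B' + j))
          * (∏ j ∈ Finset.range m, opN ((C + (j:ℂ) • 1)⁻¹))
          * (∏ j ∈ Finset.range n, opN ((C' + (j:ℂ) • 1)⁻¹)) := by
      refine le_trans (opN_mul _ _) (mul_le_mul' ?_ (opN_mPoch_inv_le C' n))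
      refine le_trans (opN_mul _ _) (mul_le_mul' ?_ (opN_mPoch_inv_le C m))
      refine le_trans (opN_mul _ _) (mul_le_mul' ?_ (opN_mPoch_le B' n))
      exact le_trans (opN_mul _ _) (mul_le_mul' (opN_mPoch_le A _) (opN_mPoch_le B m))
    calc ‖((((m.factorial : ℂ) * (n.factorial : ℂ))⁻¹ * x ^ m * y ^ n) •
            (mPoch A (m + n) * mPoch B m * mPoch B' n *
              (mPoch C m)⁻¹ * (mPoch C' n)⁻¹)) i j‖₊
        = ((m.factorial : ℝ≥0)⁻¹ * (n.factorial : ℝ≥0)⁻¹ * ‖x‖₊^m * ‖y‖₊^n) *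
            ‖(mPoch A (m + n) * mPoch B m * mPoch B' n *
              (mPoch C m)⁻¹ * (mPoch C' n)⁻¹) i j‖₊ := by
          rw [Matrix.smul_apply, smul_eq_mul, nnnorm_mul, hsc]
      _ ≤ ((m.factorial : ℝ≥0)⁻¹ * (n.factorial : ℝ≥0)⁻¹ * ‖x‖₊^m * ‖y‖₊^n) *
            opN (mPoch A (m + n) * mPoch B m * mPoch B' n *
              (mPoch C m)⁻¹ * (mPoch C' n)⁻¹) := mul_le_mul_right (opN_entry _ _ _) _
      _ ≤ ((m.factorial : ℝ≥0)⁻¹ * (n.factorial : ℝ≥0)⁻¹ * ‖x‖₊^m * ‖y‖₊^n) *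
            ((∏ j ∈ Finset.range (m+n), (opN A + j)) * (∏ j ∈ Finset.range m, (opN B + j))
            * (∏ j ∈ Finset.range n, (opN B' + j))
            * (∏ j ∈ Finset.range m, opN ((C + (j:ℂ) • 1)⁻¹))
            * (∏ j ∈ Finset.range n, opN ((C' + (j:ℂ) • 1)⁻¹))) :=
          mul_le_mul_right hPbound _
      _ = ((m.factorial : ℝ≥0)⁻¹ * (n.factorial : ℝ≥0)⁻¹ * ‖x‖₊^m * ‖y‖₊^n) *
            ((∏ j ∈ Finset.range (m+n), (opN A + j)) *
            ((∏ j ∈ Finset.range m, (opN B + j)) *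
              (∏ j ∈ Finset.range m, opN ((C + (j:ℂ) • 1)⁻¹))) *
            ((∏ j ∈ Finset.range n, (opN B' + j)) *
              (∏ j ∈ Finset.range n, opN ((C' + (j:ℂ) • 1)⁻¹)))) := by ring
      _ ≤ ((m.factorial : ℝ≥0)⁻¹ * (n.factorial : ℝ≥0)⁻¹ * ‖x‖₊^m * ‖y‖₊^n) *
            ((K1 * θ^(m+n) * ((m+n).factorial : ℝ≥0)) * (K2 * θ^m) * (K3 * θ^n)) :=
          mul_le_mul_right
            (mul_le_mul' (mul_le_mul' (hα (m+n)) (hβγ m)) (hβγ' n)) _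
      _ = (K1 * K2 * K3) *
            ((((m+n).factorial : ℝ≥0) * (m.factorial : ℝ≥0)⁻¹ * (n.factorial : ℝ≥0)⁻¹)
              * ‖x‖₊^m * ‖y‖₊^n) * (θ^2)^(m+n) := by ring
      _ = (K1 * K2 * K3) *
            ((((m+n).choose m : ℕ) : ℝ≥0) * ‖x‖₊^m * ‖y‖₊^n) * (θ^2)^(m+n) := by
          rw [choose_eq_div]
      _ ≤ (K1 * K2 * K3) * u'^(m+n) * (θ^2)^(m+n) :=
          mul_le_mul_left (mul_le_mul_right
            (by rw [hu'def]; exact choose_le_pow m n ‖x‖₊ ‖y‖₊) _) _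
      _ = (K1 * K2 * K3) * (v ^ m * v ^ n) := by
          rw [hvdef, ← pow_add, mul_pow]
          ring

lemma desc_fact : ∀ (k m : ℕ), ((k+m).descFactorial k) * m.factorial = (k+m).factorial := by
  intro k
  induction k with
  | zero => intro m; simp
  | succ k ih =>
      intro m
      rw [Nat.descFactorial_succ, show k+1+m-k = m+1 from by omega,
        show k+1+m = k+(m+1) from by omega]
      calc (m+1) * ((k+(m+1)).descFactorial k) * m.factorial
          = ((k+(m+1)).descFactorial k) * (m+1).factorial := by rw [Nat.factorial_succ]; ring
      _ = (k+(m+1)).factorial := ih (m+1)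

lemma shift_units {C : Matrix (Fin r) (Fin r) ℂ}
    (hC : ∀ n : ℕ, IsUnit (C + (n : ℂ) • (1 : Matrix (Fin r) (Fin r) ℂ))) (k : ℕ) :
    ∀ n : ℕ, IsUnit ((C + (k : ℂ) • 1) + (n : ℂ) • (1 : Matrix (Fin r) (Fin r) ℂ)) := by
  intro n
  have h : (C + (k : ℂ) • 1) + (n : ℂ) • (1 : Matrix (Fin r) (Fin r) ℂ)
      = C + ((k + n : ℕ) : ℂ) • 1 := by
    push_cast
    rw [add_smul]
    abel
  rw [h]
  exact hC (k+n)

lemma swap_left {a b c : Matrix (Fin r) (Fin r) ℂ} (h : Commute a b) :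
    a * (b * c) = b * (a * c) := by
  rw [← mul_assoc, h.eq, mul_assoc]

lemma sum_mul_rest (s : ℕ) (F : ℕ × ℕ → Matrix (Fin r) (Fin r) ℂ)
    (T R : Matrix (Fin r) (Fin r) ℂ) (sc : ℂ) (γ : ℕ × ℕ → ℂ)
    (h : ∑ p ∈ TT s, γ p • F p = T) :
    ∑ p ∈ TT s, (γ p * sc) • (F p * R) = sc • (T * R) := by
  rw [← h, Finset.sum_mul, Finset.smul_sum]
  refine Finset.sum_congr rfl fun p _ => ?_
  rw [smul_mul_assoc, smul_smul]
  congr 1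
  ring

lemma sum_mul_rest5 (s : ℕ) (F : ℕ × ℕ → Matrix (Fin r) (Fin r) ℂ)
    (T R1 R2 R3 R4 : Matrix (Fin r) (Fin r) ℂ) (sc : ℂ) (γ : ℕ × ℕ → ℂ)
    (h : ∑ p ∈ TT s, γ p • F p = T) :
    ∑ p ∈ TT s, (γ p * sc) • (F p * R1 * R2 * R3 * R4) = sc • (T * R1 * R2 * R3 * R4) := by
  have h2 := sum_mul_rest s F T (R1 * (R2 * (R3 * R4))) sc γ h
  simpa only [mul_assoc] using h2

lemma sum_TT_nested {M : Type*} [AddCommMonoid M] (s : ℕ) (f : ℕ → ℕ → M) :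
    ∑ p ∈ TT s, f p.1 p.2
      = ∑ k₁ ∈ Finset.range (s+1), ∑ k₂ ∈ Finset.range (s+1-k₁), f k₁ k₂ := by
  have e := Finset.sum_sigma' (Finset.range (s+1)) (fun k₁ => Finset.range (s+1-k₁))
    (fun a b => f a b)
  rw [e]
  refine Finset.sum_nbij' (fun p => ⟨p.1, p.2⟩)
    (fun x : Σ _ : ℕ, ℕ => ((x.1, x.2) : ℕ × ℕ)) ?_ ?_ ?_ ?_ ?_
  · intro p hp
    rw [mem_TT] at hp
    simp only [Finset.mem_sigma, Finset.mem_range]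
    omega
  · intro x hx
    simp only [Finset.mem_sigma, Finset.mem_range] at hx
    rw [mem_TT]
    dsimp only
    omega
  · intro p _
    rfl
  · intro x _
    rfl
  · intro p _
    rfl

lemma rearrange {X B B' C C' : Matrix (Fin r) (Fin r) ℂ}
    (hXB : X * B = B * X) (hB'C : B' * C = C * B') (hB'C' : B' * C' = C' * B')
    (hCC' : C * C' = C' * C)
    (hC : ∀ n : ℕ, IsUnit (C + (n : ℂ) • (1 : Matrix (Fin r) (Fin r) ℂ)))
    (hC' : ∀ n : ℕ, IsUnit (C' + (n : ℂ) • (1 : Matrix (Fin r) (Fin r) ℂ)))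
    (k1 k2 m' n' : ℕ) :
    mPoch B k1 * (X * mPoch (B + (k1 : ℂ) • 1) m' * mPoch (B' + (k2 : ℂ) • 1) n' *
        (mPoch (C + (k1 : ℂ) • 1) m')⁻¹ * (mPoch (C' + (k2 : ℂ) • 1) n')⁻¹) *
      mPoch B' k2 * (mPoch C k1)⁻¹ * (mPoch C' k2)⁻¹
    = X * mPoch B (k1+m') * mPoch B' (k2+n') *
        (mPoch C (k1+m'))⁻¹ * (mPoch C' (k2+n'))⁻¹ := by
  have hu2 : IsUnit (mPoch (C' + (k2:ℂ) • 1) n') := mPoch_isUnit (shift_units hC' k2) n'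
  have hu3 : IsUnit (mPoch C k1) := mPoch_isUnit hC k1
  have hu4 : IsUnit (mPoch (C + (k1:ℂ) • 1) m') := mPoch_isUnit (shift_units hC k1) m'
  have hL1X : Commute (mPoch B k1) X := (commute_mPoch_right hXB k1).symm
  have h5R1 : Commute ((mPoch (C' + (k2:ℂ) • 1) n')⁻¹) (mPoch B' k2) :=
    (commute_inv_right (mPoch_commute
      ((show Commute B' C' from hB'C').add_right ((Commute.one_right B').smul_right _)) k2 n')
      hu2).symm
  have h4R1 : Commute ((mPoch (C + (k1:ℂ) • 1) m')⁻¹) (mPoch B' k2) :=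
    (commute_inv_right (mPoch_commute
      ((show Commute B' C from hB'C).add_right ((Commute.one_right B').smul_right _)) k2 m')
      hu4).symm
  have h3R1 : Commute (mPoch (B' + (k2:ℂ) • 1) n') (mPoch B' k2) :=
    mPoch_commute ((Commute.refl B').add_left ((Commute.one_left B').smul_left _)) n' k2
  have h5R2 : Commute ((mPoch (C' + (k2:ℂ) • 1) n')⁻¹) ((mPoch C k1)⁻¹) :=
    commute_inv_right ((commute_inv_right (mPoch_commute
      ((show Commute C C' from hCC').add_right ((Commute.one_right C).smul_right _)) k1 n')
      hu2).symm) hu3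
  rw [mPoch_add B k1 m', mPoch_add B' k2 n', mPoch_add_inv k1 m', mPoch_add_inv k2 n']
  simp only [mul_assoc]
  rw [swap_left hL1X, swap_left h5R1, swap_left h4R1, swap_left h3R1, swap_left h5R2]

lemma commute_add_smul_one {A B : Matrix (Fin r) (Fin r) ℂ} (hAB : A * B = B * A) (τ : ℂ) :
    (A + τ • 1) * B = B * (A + τ • 1) :=
  (((show Commute A B from hAB)).add_left ((Commute.one_left B).smul_left τ)).eq


lemma h_push (Ab B B' C C' : Matrix (Fin r) (Fin r) ℂ) (x y σ : ℂ) (k1 k2 : ℕ)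
    (hAbB : Ab * B = B * Ab) (hB'C : B' * C = C * B') (hB'C' : B' * C' = C' * B')
    (hCC' : C * C' = C' * C)
    (hC : ∀ n : ℕ, IsUnit (C + (n : ℂ) • (1 : Matrix (Fin r) (Fin r) ℂ)))
    (hC' : ∀ n : ℕ, IsUnit (C' + (n : ℂ) • (1 : Matrix (Fin r) (Fin r) ℂ)))
    (q : ℕ × ℕ) :
    (σ * (((k1 + q.1).descFactorial k1 * (k2 + q.2).descFactorial k2 : ℕ) : ℂ) *
      ((((k1 + q.1).factorial : ℂ) * ((k2 + q.2).factorial : ℂ))⁻¹ *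
        x ^ (k1 + q.1) * y ^ (k2 + q.2))) •
      (mPoch Ab ((k1 + q.1) + (k2 + q.2) - k1 - k2) * mPoch B (k1 + q.1) * mPoch B' (k2 + q.2) *
        (mPoch C (k1 + q.1))⁻¹ * (mPoch C' (k2 + q.2))⁻¹)
    = (σ * x ^ k1 * y ^ k2) • (mPoch B k1 *
        ((((q.1.factorial : ℂ) * (q.2.factorial : ℂ))⁻¹ * x ^ q.1 * y ^ q.2) •
          (mPoch Ab (q.1 + q.2) * mPoch (B + (k1:ℂ) • 1) q.1 * mPoch (B' + (k2:ℂ) • 1) q.2 *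
            (mPoch (C + (k1:ℂ) • 1) q.1)⁻¹ * (mPoch (C' + (k2:ℂ) • 1) q.2)⁻¹)) *
        mPoch B' k2 * (mPoch C k1)⁻¹ * (mPoch C' k2)⁻¹) := by
  rw [show (k1 + q.1) + (k2 + q.2) - k1 - k2 = q.1 + q.2 from by omega]
  rw [mul_smul_comm, smul_mul_assoc, smul_mul_assoc, smul_mul_assoc, smul_smul]
  have hXB : (mPoch Ab (q.1 + q.2)) * B = B * (mPoch Ab (q.1 + q.2)) :=
    ((commute_mPoch_right ((show Commute Ab B from hAbB).symm) (q.1 + q.2)).symm).eq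
  rw [← rearrange hXB hB'C hB'C' hCC' hC hC' k1 k2 q.1 q.2]
  have hnat : (((k1+q.1).descFactorial k1 * (k2+q.2).descFactorial k2) *
      (q.1.factorial * q.2.factorial) : ℕ)
      = (k1+q.1).factorial * (k2+q.2).factorial := by
    rw [mul_mul_mul_comm, desc_fact, desc_fact]
  have hc2 : (((k1+q.1).descFactorial k1 * (k2+q.2).descFactorial k2 : ℕ) : ℂ) *
      ((q.1.factorial : ℂ) * (q.2.factorial : ℂ))
      = ((k1+q.1).factorial : ℂ) * ((k2+q.2).factorial : ℂ) := by
    exact_mod_cast hnat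
  congr 1
  rw [pow_add, pow_add]
  have := fact_cast_ne_zero (k1+q.1); have := fact_cast_ne_zero (k2+q.2)
  have := fact_cast_ne_zero q.1; have := fact_cast_ne_zero q.2
  field_simp
  push_cast
  push_cast at hc2
  linear_combination (σ * x^k1 * x^q.1 * y^k2 * y^q.2) * hc2

lemma h_summable (Ab B B' C C' : Matrix (Fin r) (Fin r) ℂ) (x y σ : ℂ) (k1 k2 : ℕ)
    (hAbB : Ab * B = B * Ab) (hB'C : B' * C = C * B') (hB'C' : B' * C' = C' * B')
    (hCC' : C * C' = C' * C)
    (hC : ∀ n : ℕ, IsUnit (C + (n : ℂ) • (1 : Matrix (Fin r) (Fin r) ℂ)))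
    (hC' : ∀ n : ℕ, IsUnit (C' + (n : ℂ) • (1 : Matrix (Fin r) (Fin r) ℂ)))
    (hxy : ‖x‖ + ‖y‖ < 1) :
    Summable (fun Q : ℕ × ℕ =>
      (σ * ((Q.1.descFactorial k1 * Q.2.descFactorial k2 : ℕ) : ℂ) *
        (((Q.1.factorial : ℂ) * (Q.2.factorial : ℂ))⁻¹ * x ^ Q.1 * y ^ Q.2)) •
      (mPoch Ab (Q.1 + Q.2 - k1 - k2) * mPoch B Q.1 * mPoch B' Q.2 *
        (mPoch C Q.1)⁻¹ * (mPoch C' Q.2)⁻¹)) := by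
  have hinner := appell_term_summable Ab (B + (k1:ℂ)•1) (B' + (k2:ℂ)•1) (C + (k1:ℂ)•1)
    (C' + (k2:ℂ)•1) x y (shift_units hC k1) (shift_units hC' k2) hxy
  have hchain := ((((hinner.mul_left (mPoch B k1)).mul_right (mPoch B' k2)).mul_right
      ((mPoch C k1)⁻¹)).mul_right ((mPoch C' k2)⁻¹)).const_smul (σ * x ^ k1 * y ^ k2)
  have hinj : Function.Injective (fun q : ℕ×ℕ => (k1 + q.1, k2 + q.2)) := by
    intro a b hab
    simp only [Prod.mk.injEq] at hab
    exact Prod.ext (by omega) (by omega)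
  have hvan : ∀ Q : ℕ × ℕ, Q ∉ Set.range (fun q : ℕ×ℕ => (k1 + q.1, k2 + q.2)) →
      (σ * ((Q.1.descFactorial k1 * Q.2.descFactorial k2 : ℕ) : ℂ) *
        (((Q.1.factorial : ℂ) * (Q.2.factorial : ℂ))⁻¹ * x ^ Q.1 * y ^ Q.2)) •
      (mPoch Ab (Q.1 + Q.2 - k1 - k2) * mPoch B Q.1 * mPoch B' Q.2 *
        (mPoch C Q.1)⁻¹ * (mPoch C' Q.2)⁻¹) = 0 := by
    intro Q hQ
    have hlt : Q.1 < k1 ∨ Q.2 < k2 := by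
      by_contra hcon
      push_neg at hcon
      exact hQ ⟨(Q.1 - k1, Q.2 - k2), by
        simp only [Prod.mk.injEq]
        refine Prod.ext ?_ ?_ <;> simp <;> omega⟩
    rcases hlt with h | h
    · simp [Nat.descFactorial_eq_zero_iff_lt.2 h]
    · simp [Nat.descFactorial_eq_zero_iff_lt.2 h]
  refine (Function.Injective.summable_iff hinj hvan).1 ?_
  exact hchain.congr fun q =>
    (h_push Ab B B' C C' x y σ k1 k2 hAbB hB'C hB'C' hCC' hC hC' q).symm

lemma h_tsum (Ab B B' C C' : Matrix (Fin r) (Fin r) ℂ) (x y σ : ℂ) (k1 k2 : ℕ)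
    (hAbB : Ab * B = B * Ab) (hB'C : B' * C = C * B') (hB'C' : B' * C' = C' * B')
    (hCC' : C * C' = C' * C)
    (hC : ∀ n : ℕ, IsUnit (C + (n : ℂ) • (1 : Matrix (Fin r) (Fin r) ℂ)))
    (hC' : ∀ n : ℕ, IsUnit (C' + (n : ℂ) • (1 : Matrix (Fin r) (Fin r) ℂ)))
    (hxy : ‖x‖ + ‖y‖ < 1) :
    ∑' Q : ℕ × ℕ,
      (σ * ((Q.1.descFactorial k1 * Q.2.descFactorial k2 : ℕ) : ℂ) *
        (((Q.1.factorial : ℂ) * (Q.2.factorial : ℂ))⁻¹ * x ^ Q.1 * y ^ Q.2)) •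
      (mPoch Ab (Q.1 + Q.2 - k1 - k2) * mPoch B Q.1 * mPoch B' Q.2 *
        (mPoch C Q.1)⁻¹ * (mPoch C' Q.2)⁻¹)
    = (σ * x ^ k1 * y ^ k2) • (mPoch B k1 *
        appellF2 Ab (B + (k1:ℂ) • 1) (B' + (k2:ℂ) • 1) (C + (k1:ℂ) • 1) (C' + (k2:ℂ) • 1) x y *
        mPoch B' k2 * (mPoch C k1)⁻¹ * (mPoch C' k2)⁻¹) := by
  have hinner := appell_term_summable Ab (B + (k1:ℂ)•1) (B' + (k2:ℂ)•1) (C + (k1:ℂ)•1)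
    (C' + (k2:ℂ)•1) x y (shift_units hC k1) (shift_units hC' k2) hxy
  have hinj : Function.Injective (fun q : ℕ×ℕ => (k1 + q.1, k2 + q.2)) := by
    intro a b hab
    simp only [Prod.mk.injEq] at hab
    exact Prod.ext (by omega) (by omega)
  have hvan : ∀ Q : ℕ × ℕ, Q ∉ Set.range (fun q : ℕ×ℕ => (k1 + q.1, k2 + q.2)) →
      (σ * ((Q.1.descFactorial k1 * Q.2.descFactorial k2 : ℕ) : ℂ) *
        (((Q.1.factorial : ℂ) * (Q.2.factorial : ℂ))⁻¹ * x ^ Q.1 * y ^ Q.2)) •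
      (mPoch Ab (Q.1 + Q.2 - k1 - k2) * mPoch B Q.1 * mPoch B' Q.2 *
        (mPoch C Q.1)⁻¹ * (mPoch C' Q.2)⁻¹) = 0 := by
    intro Q hQ
    have hlt : Q.1 < k1 ∨ Q.2 < k2 := by
      by_contra hcon
      push_neg at hcon
      exact hQ ⟨(Q.1 - k1, Q.2 - k2), by
        simp only [Prod.mk.injEq]
        refine Prod.ext ?_ ?_ <;> simp <;> omega⟩
    rcases hlt with h | h
    · simp [Nat.descFactorial_eq_zero_iff_lt.2 h]
    · simp [Nat.descFactorial_eq_zero_iff_lt.2 h]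
  have hsupp : Function.support (fun Q : ℕ × ℕ =>
      (σ * ((Q.1.descFactorial k1 * Q.2.descFactorial k2 : ℕ) : ℂ) *
        (((Q.1.factorial : ℂ) * (Q.2.factorial : ℂ))⁻¹ * x ^ Q.1 * y ^ Q.2)) •
      (mPoch Ab (Q.1 + Q.2 - k1 - k2) * mPoch B Q.1 * mPoch B' Q.2 *
        (mPoch C Q.1)⁻¹ * (mPoch C' Q.2)⁻¹))
      ⊆ Set.range (fun q : ℕ×ℕ => (k1 + q.1, k2 + q.2)) := by
    intro Q hQ
    by_contra hnot
    exact hQ (hvan Q hnot)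
  rw [← Function.Injective.tsum_eq hinj hsupp]
  rw [tsum_congr (fun q =>
    h_push Ab B B' C C' x y σ k1 k2 hAbB hB'C hB'C' hCC' hC hC' q)]
  have h1 : Summable (fun q : ℕ×ℕ => mPoch B k1 *
      ((((q.1.factorial : ℂ) * (q.2.factorial : ℂ))⁻¹ * x ^ q.1 * y ^ q.2) •
        (mPoch Ab (q.1 + q.2) * mPoch (B + (k1:ℂ) • 1) q.1 * mPoch (B' + (k2:ℂ) • 1) q.2 *
          (mPoch (C + (k1:ℂ) • 1) q.1)⁻¹ * (mPoch (C' + (k2:ℂ) • 1) q.2)⁻¹))) :=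
    hinner.mul_left _
  have h2 := h1.mul_right (mPoch B' k2)
  have h3 := h2.mul_right ((mPoch C k1)⁻¹)
  have h4 := h3.mul_right ((mPoch C' k2)⁻¹)
  rw [Summable.tsum_const_smul _ h4]
  congr 1
  rw [Summable.tsum_mul_right _ h3, Summable.tsum_mul_right _ h2,
    Summable.tsum_mul_right _ h1, Summable.tsum_mul_left _ hinner]
  rfl

lemma main_i (A B B' C C' : Matrix (Fin r) (Fin r) ℂ) (x y : ℂ)
    (hC : ∀ n : ℕ, IsUnit (C + (n : ℂ) • (1 : Matrix (Fin r) (Fin r) ℂ)))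
    (hC' : ∀ n : ℕ, IsUnit (C' + (n : ℂ) • (1 : Matrix (Fin r) (Fin r) ℂ)))
    (hAB : A * B = B * A)
    (hB'C : B' * C = C * B') (hB'C' : B' * C' = C' * B') (hCC' : C * C' = C' * C)
    (hxy : ‖x‖ + ‖y‖ < 1) (s : ℕ) :
    appellF2 (A + (s : ℂ) • 1) B B' C C' x y =
      ∑ k₁ ∈ Finset.range (s + 1), ∑ k₂ ∈ Finset.range (s + 1 - k₁),
        (((s.factorial : ℂ) /
            ((k₁.factorial : ℂ) * (k₂.factorial : ℂ) * ((s - k₁ - k₂).factorial : ℂ))) *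
          x ^ k₁ * y ^ k₂) •
          (mPoch B k₁ *
            appellF2 (A + ((k₁ : ℂ) + (k₂ : ℂ)) • 1) (B + (k₁ : ℂ) • 1)
              (B' + (k₂ : ℂ) • 1) (C + (k₁ : ℂ) • 1) (C' + (k₂ : ℂ) • 1) x y *
            mPoch B' k₂ * (mPoch C k₁)⁻¹ * (mPoch C' k₂)⁻¹) := by
  have key1 : ∀ q : ℕ × ℕ,
      (((q.1.factorial : ℂ) * (q.2.factorial : ℂ))⁻¹ * x ^ q.1 * y ^ q.2) •
        (mPoch (A + (s:ℂ) • 1) (q.1 + q.2) * mPoch B q.1 * mPoch B' q.2 *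
          (mPoch C q.1)⁻¹ * (mPoch C' q.2)⁻¹)
      = ∑ p ∈ TT s,
          (cc s p.1 p.2 * ((q.1.descFactorial p.1 * q.2.descFactorial p.2 : ℕ) : ℂ) *
            (((q.1.factorial : ℂ) * (q.2.factorial : ℂ))⁻¹ * x ^ q.1 * y ^ q.2)) •
          (mPoch (A + ((p.1 + p.2 : ℕ) : ℂ) • 1) (q.1 + q.2 - p.1 - p.2) * mPoch B q.1 *
            mPoch B' q.2 * (mPoch C q.1)⁻¹ * (mPoch C' q.2)⁻¹) := by
    intro q
    have hT : ∑ p ∈ TT s,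
        (cc s p.1 p.2 * ((q.1.descFactorial p.1 * q.2.descFactorial p.2 : ℕ) : ℂ)) •
          mPoch (A + ((p.1 + p.2 : ℕ) : ℂ) • 1) (q.1 + q.2 - p.1 - p.2)
        = mPoch (A + (s:ℂ) • 1) (q.1 + q.2) := by
      rw [← sum_shift_eq q.1 q.2 s A]
      exact Finset.sum_congr rfl fun p _ => (smul_smul _ _ _).symm
    exact (sum_mul_rest5 s _ _ _ _ _ _ _ _ hT).symm
  calc appellF2 (A + (s:ℂ) • 1) B B' C C' x y
      = ∑' q : ℕ × ℕ, ∑ p ∈ TT s,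
          (cc s p.1 p.2 * ((q.1.descFactorial p.1 * q.2.descFactorial p.2 : ℕ) : ℂ) *
            (((q.1.factorial : ℂ) * (q.2.factorial : ℂ))⁻¹ * x ^ q.1 * y ^ q.2)) •
          (mPoch (A + ((p.1 + p.2 : ℕ) : ℂ) • 1) (q.1 + q.2 - p.1 - p.2) * mPoch B q.1 *
            mPoch B' q.2 * (mPoch C q.1)⁻¹ * (mPoch C' q.2)⁻¹) := tsum_congr key1
  _ = ∑ p ∈ TT s, ∑' q : ℕ × ℕ,
          (cc s p.1 p.2 * ((q.1.descFactorial p.1 * q.2.descFactorial p.2 : ℕ) : ℂ) *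
            (((q.1.factorial : ℂ) * (q.2.factorial : ℂ))⁻¹ * x ^ q.1 * y ^ q.2)) •
          (mPoch (A + ((p.1 + p.2 : ℕ) : ℂ) • 1) (q.1 + q.2 - p.1 - p.2) * mPoch B q.1 *
            mPoch B' q.2 * (mPoch C q.1)⁻¹ * (mPoch C' q.2)⁻¹) :=
      Summable.tsum_finsetSum (fun p _ => h_summable (A + ((p.1 + p.2 : ℕ) : ℂ) • 1) B B' C C' x y
        (cc s p.1 p.2) p.1 p.2 (commute_add_smul_one hAB _) hB'C hB'C' hCC' hC hC' hxy)
  _ = ∑ p ∈ TT s, (cc s p.1 p.2 * x ^ p.1 * y ^ p.2) • (mPoch B p.1 *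
        appellF2 (A + ((p.1 + p.2 : ℕ) : ℂ) • 1) (B + (p.1:ℂ) • 1) (B' + (p.2:ℂ) • 1)
          (C + (p.1:ℂ) • 1) (C' + (p.2:ℂ) • 1) x y *
        mPoch B' p.2 * (mPoch C p.1)⁻¹ * (mPoch C' p.2)⁻¹) :=
      Finset.sum_congr rfl fun p _ => h_tsum (A + ((p.1 + p.2 : ℕ) : ℂ) • 1) B B' C C' x y
        (cc s p.1 p.2) p.1 p.2 (commute_add_smul_one hAB _) hB'C hB'C' hCC' hC hC' hxy
  _ = ∑ p ∈ TT s,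
        (((s.factorial : ℂ) /
            ((p.1.factorial : ℂ) * (p.2.factorial : ℂ) * ((s - p.1 - p.2).factorial : ℂ))) *
          x ^ p.1 * y ^ p.2) •
          (mPoch B p.1 *
            appellF2 (A + ((p.1 : ℂ) + (p.2 : ℂ)) • 1) (B + (p.1 : ℂ) • 1)
              (B' + (p.2 : ℂ) • 1) (C + (p.1 : ℂ) • 1) (C' + (p.2 : ℂ) • 1) x y *
            mPoch B' p.2 * (mPoch C p.1)⁻¹ * (mPoch C' p.2)⁻¹) := by
      refine Finset.sum_congr rfl fun p _ => ?_
      rw [show ((p.1 + p.2 : ℕ) : ℂ) = (p.1:ℂ) + (p.2:ℂ) from by push_cast; rfl]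
      simp only [cc]
  _ = _ := sum_TT_nested s (fun k₁ k₂ =>
        (((s.factorial : ℂ) /
            ((k₁.factorial : ℂ) * (k₂.factorial : ℂ) * ((s - k₁ - k₂).factorial : ℂ))) *
          x ^ k₁ * y ^ k₂) •
          (mPoch B k₁ *
            appellF2 (A + ((k₁ : ℂ) + (k₂ : ℂ)) • 1) (B + (k₁ : ℂ) • 1)
              (B' + (k₂ : ℂ) • 1) (C + (k₁ : ℂ) • 1) (C' + (k₂ : ℂ) • 1) x y *
            mPoch B' k₂ * (mPoch C k₁)⁻¹ * (mPoch C' k₂)⁻¹))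

lemma main_ii (A B B' C C' : Matrix (Fin r) (Fin r) ℂ) (x y : ℂ)
    (hC : ∀ n : ℕ, IsUnit (C + (n : ℂ) • (1 : Matrix (Fin r) (Fin r) ℂ)))
    (hC' : ∀ n : ℕ, IsUnit (C' + (n : ℂ) • (1 : Matrix (Fin r) (Fin r) ℂ)))
    (hAB : A * B = B * A)
    (hB'C : B' * C = C * B') (hB'C' : B' * C' = C' * B') (hCC' : C * C' = C' * C)
    (hxy : ‖x‖ + ‖y‖ < 1) (s : ℕ) :
    appellF2 (A - (s : ℂ) • 1) B B' C C' x y =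
      ∑ k₁ ∈ Finset.range (s + 1), ∑ k₂ ∈ Finset.range (s + 1 - k₁),
        (((s.factorial : ℂ) /
            ((k₁.factorial : ℂ) * (k₂.factorial : ℂ) * ((s - k₁ - k₂).factorial : ℂ))) *
          (-x) ^ k₁ * (-y) ^ k₂) •
          (mPoch B k₁ *
            appellF2 A (B + (k₁ : ℂ) • 1) (B' + (k₂ : ℂ) • 1)
              (C + (k₁ : ℂ) • 1) (C' + (k₂ : ℂ) • 1) x y *
            mPoch B' k₂ * (mPoch C k₁)⁻¹ * (mPoch C' k₂)⁻¹) := by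
  have key1 : ∀ q : ℕ × ℕ,
      (((q.1.factorial : ℂ) * (q.2.factorial : ℂ))⁻¹ * x ^ q.1 * y ^ q.2) •
        (mPoch (A - (s:ℂ) • 1) (q.1 + q.2) * mPoch B q.1 * mPoch B' q.2 *
          (mPoch C q.1)⁻¹ * (mPoch C' q.2)⁻¹)
      = ∑ p ∈ TT s,
          (cc s p.1 p.2 * (-1:ℂ)^(p.1+p.2) *
              ((q.1.descFactorial p.1 * q.2.descFactorial p.2 : ℕ) : ℂ) *
            (((q.1.factorial : ℂ) * (q.2.factorial : ℂ))⁻¹ * x ^ q.1 * y ^ q.2)) •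
          (mPoch A (q.1 + q.2 - p.1 - p.2) * mPoch B q.1 *
            mPoch B' q.2 * (mPoch C q.1)⁻¹ * (mPoch C' q.2)⁻¹) := by
    intro q
    have hT : ∑ p ∈ TT s,
        (cc s p.1 p.2 * (-1:ℂ)^(p.1+p.2) *
            ((q.1.descFactorial p.1 * q.2.descFactorial p.2 : ℕ) : ℂ)) •
          mPoch A (q.1 + q.2 - p.1 - p.2)
        = mPoch (A - (s:ℂ) • 1) (q.1 + q.2) := by
      rw [← sum_shift_neg_eq q.1 q.2 s A]
      refine Finset.sum_congr rfl fun p _ => ?_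
      rw [smul_smul]
      congr 1
      ring
    exact (sum_mul_rest5 s _ _ _ _ _ _ _ _ hT).symm
  calc appellF2 (A - (s:ℂ) • 1) B B' C C' x y
      = ∑' q : ℕ × ℕ, ∑ p ∈ TT s,
          (cc s p.1 p.2 * (-1:ℂ)^(p.1+p.2) *
              ((q.1.descFactorial p.1 * q.2.descFactorial p.2 : ℕ) : ℂ) *
            (((q.1.factorial : ℂ) * (q.2.factorial : ℂ))⁻¹ * x ^ q.1 * y ^ q.2)) •
          (mPoch A (q.1 + q.2 - p.1 - p.2) * mPoch B q.1 *
            mPoch B' q.2 * (mPoch C q.1)⁻¹ * (mPoch C' q.2)⁻¹) := tsum_congr key1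
  _ = ∑ p ∈ TT s, ∑' q : ℕ × ℕ,
          (cc s p.1 p.2 * (-1:ℂ)^(p.1+p.2) *
              ((q.1.descFactorial p.1 * q.2.descFactorial p.2 : ℕ) : ℂ) *
            (((q.1.factorial : ℂ) * (q.2.factorial : ℂ))⁻¹ * x ^ q.1 * y ^ q.2)) •
          (mPoch A (q.1 + q.2 - p.1 - p.2) * mPoch B q.1 *
            mPoch B' q.2 * (mPoch C q.1)⁻¹ * (mPoch C' q.2)⁻¹) :=
      Summable.tsum_finsetSum (fun p _ => h_summable A B B' C C' x y
        (cc s p.1 p.2 * (-1:ℂ)^(p.1+p.2)) p.1 p.2 hAB hB'C hB'C' hCC' hC hC' hxy)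
  _ = ∑ p ∈ TT s, (cc s p.1 p.2 * (-1:ℂ)^(p.1+p.2) * x ^ p.1 * y ^ p.2) • (mPoch B p.1 *
        appellF2 A (B + (p.1:ℂ) • 1) (B' + (p.2:ℂ) • 1)
          (C + (p.1:ℂ) • 1) (C' + (p.2:ℂ) • 1) x y *
        mPoch B' p.2 * (mPoch C p.1)⁻¹ * (mPoch C' p.2)⁻¹) :=
      Finset.sum_congr rfl fun p _ => h_tsum A B B' C C' x y
        (cc s p.1 p.2 * (-1:ℂ)^(p.1+p.2)) p.1 p.2 hAB hB'C hB'C' hCC' hC hC' hxy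
  _ = ∑ p ∈ TT s,
        (((s.factorial : ℂ) /
            ((p.1.factorial : ℂ) * (p.2.factorial : ℂ) * ((s - p.1 - p.2).factorial : ℂ))) *
          (-x) ^ p.1 * (-y) ^ p.2) •
          (mPoch B p.1 *
            appellF2 A (B + (p.1 : ℂ) • 1) (B' + (p.2 : ℂ) • 1)
              (C + (p.1 : ℂ) • 1) (C' + (p.2 : ℂ) • 1) x y *
            mPoch B' p.2 * (mPoch C p.1)⁻¹ * (mPoch C' p.2)⁻¹) := by
      refine Finset.sum_congr rfl fun p _ => ?_
      congr 1
      simp only [cc]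
      rw [neg_pow, neg_pow, pow_add]
      ring
  _ = _ := sum_TT_nested s (fun k₁ k₂ =>
        (((s.factorial : ℂ) /
            ((k₁.factorial : ℂ) * (k₂.factorial : ℂ) * ((s - k₁ - k₂).factorial : ℂ))) *
          (-x) ^ k₁ * (-y) ^ k₂) •
          (mPoch B k₁ *
            appellF2 A (B + (k₁ : ℂ) • 1) (B' + (k₂ : ℂ) • 1)
              (C + (k₁ : ℂ) • 1) (C' + (k₂ : ℂ) • 1) x y *
            mPoch B' k₂ * (mPoch C k₁)⁻¹ * (mPoch C' k₂)⁻¹))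

end AF2

theorem appellF2_recursion_A_multinom {r : ℕ} (A B B' C C' : Matrix (Fin r) (Fin r) ℂ) (x y : ℂ)
    (hC : ∀ n : ℕ, IsUnit (C + (n : ℂ) • (1 : Matrix (Fin r) (Fin r) ℂ)))
    (hC' : ∀ n : ℕ, IsUnit (C' + (n : ℂ) • (1 : Matrix (Fin r) (Fin r) ℂ)))
    (hAB : A * B = B * A)
    (hB'C : B' * C = C * B') (hB'C' : B' * C' = C' * B') (hCC' : C * C' = C' * C)
    (hxy : ‖x‖ + ‖y‖ < 1) :
    ((∀ k : ℕ, IsUnit (A + (k : ℂ) • (1 : Matrix (Fin r) (Fin r) ℂ))) →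
      ∀ s : ℕ,
        appellF2 (A + (s : ℂ) • 1) B B' C C' x y =
          ∑ k₁ ∈ Finset.range (s + 1), ∑ k₂ ∈ Finset.range (s + 1 - k₁),
            (((s.factorial : ℂ) /
                ((k₁.factorial : ℂ) * (k₂.factorial : ℂ) * ((s - k₁ - k₂).factorial : ℂ))) *
              x ^ k₁ * y ^ k₂) •
              (mPoch B k₁ *
                appellF2 (A + ((k₁ : ℂ) + (k₂ : ℂ)) • 1) (B + (k₁ : ℂ) • 1)
                  (B' + (k₂ : ℂ) • 1) (C + (k₁ : ℂ) • 1) (C' + (k₂ : ℂ) • 1) x y *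
                mPoch B' k₂ * (mPoch C k₁)⁻¹ * (mPoch C' k₂)⁻¹)) ∧
    ((∀ k : ℕ, IsUnit (A + (k : ℂ) • (1 : Matrix (Fin r) (Fin r) ℂ))) →
      ∀ s : ℕ,
        (∀ k : ℕ, 1 ≤ k → k ≤ s → IsUnit (A - (k : ℂ) • (1 : Matrix (Fin r) (Fin r) ℂ))) →
        appellF2 (A - (s : ℂ) • 1) B B' C C' x y =
          ∑ k₁ ∈ Finset.range (s + 1), ∑ k₂ ∈ Finset.range (s + 1 - k₁),
            (((s.factorial : ℂ) /
                ((k₁.factorial : ℂ) * (k₂.factorial : ℂ) * ((s - k₁ - k₂).factorial : ℂ))) *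
              (-x) ^ k₁ * (-y) ^ k₂) •
              (mPoch B k₁ *
                appellF2 A (B + (k₁ : ℂ) • 1) (B' + (k₂ : ℂ) • 1)
                  (C + (k₁ : ℂ) • 1) (C' + (k₂ : ℂ) • 1) x y *
                mPoch B' k₂ * (mPoch C k₁)⁻¹ * (mPoch C' k₂)⁻¹)) := by
  constructor
  · intro _ s
    exact AF2.main_i A B B' C C' x y hC hC' hAB hB'C hB'C' hCC' hxy s
  · intro _ s _
    exact AF2.main_ii A B B' C C' x y hC hC' hAB hB'C hB'C' hCC' hxy s
end

section
/- Let A, B, B', C, C' ∈ ℂ^{r×r} with C + nI and C' + nI invertible for all integers n ≥ 0, CC' = C'C, and |x| + |y| < 1, and let s be a non-negative integer. (i) If B + kI is invertible for all integers k ≥ 0, then F₂(A, B+sI, B'; C, C'; x, y) = ∑_{k=0}^{s} (s choose k) (A)_k x^k ·[F₂(A+kI, B+kI, B'; C+kI, C'; x, y)]·(C)_k⁻¹. (ii) If B' + kI is invertible for all integers k ≥ 0, then F₂(A, B, B'+sI; C, C'; x, y) = ∑_{k=0}^{s} (s choose k) (A)_k y^k ·[F₂(A+kI, B, B'+kI;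 C, C'+kI; x, y)]·(C')_k⁻¹. (iii) If B − kI is invertible for all integers 1 ≤ k ≤ s, then F₂(A, B−sI, B'; C, C'; x, y) = ∑_{k=0}^{s} (s choose k) (A)_k (−x)^k ·[F₂(A+kI, B, B'; C+kI, C'; x, y)]·(C)_k⁻¹. (iv) If B' − kI is invertible for all integers 1 ≤ k ≤ s, then F₂(A, B, B'−sI; C, C'; x, y) = ∑_{k=0}^{s} (s choose k) (A)_k (−y)^k ·[F₂(A+kI, B, B'; C, C'+kI; x, y)]·(C')_k⁻¹. -/
namespace AppellAux

open Polynomial Finset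

/-- scalar ascending Pochhammer -/
noncomputable def sp (b : ℂ) : ℕ → ℂ
  | 0 => 1
  | m + 1 => sp b m * (b + m)

lemma sp_succ (b : ℂ) (m : ℕ) : sp b (m+1) = sp b m * (b + m) := rfl

lemma sp_eval (b : ℂ) (m : ℕ) : (ascPochhammer ℂ m).eval b = sp b m := by
  induction m with
  | zero => simp [sp, ascPochhammer_zero]
  | succ m ih => rw [ascPochhammer_succ_right, eval_mul, ih, sp_succ]; simp

lemma sp_mul_left (b : ℂ) (m : ℕ) : sp b (m+1) = b * sp (b+1) m := by
  induction m with
  | zero => simp [sp]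
  | succ m ih =>
      rw [sp_succ, ih, sp_succ]
      push_cast
      ring

lemma sp_shift_one_succ (b : ℂ) (m : ℕ) :
    sp (b+1) (m+1) = sp b (m+1) + ((m:ℂ)+1) * sp (b+1) m := by
  induction m with
  | zero => simp [sp]
  | succ m ih =>
      rw [sp_succ (b+1) (m+1), ih, sp_succ b (m+1), sp_mul_left b m]
      push_cast
      ring

lemma sp_shift_one (b : ℂ) (m : ℕ) :
    sp (b+1) m = sp b m + (m:ℂ) * sp (b+1) (m-1) := by
  cases m with
  | zero => simp [sp]
  | succ m => rw [sp_shift_one_succ]; push_cast; simp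

lemma nat_mul_pred_descFactorial (m k : ℕ) :
    m * (m-1).descFactorial k = m.descFactorial (k+1) := by
  cases m with
  | zero => simp
  | succ m => rw [Nat.succ_sub_one, Nat.succ_descFactorial_succ]

lemma sp_shift_binom (s : ℕ) : ∀ (b : ℂ) (m : ℕ),
    sp (b + s) m = ∑ k ∈ range (s+1),
      ((s.choose k : ℂ) * (m.descFactorial k : ℂ)) * sp (b + k) (m - k) := by
  induction s with
  | zero => intro b m; simp
  | succ s ih =>
      intro b m
      have h1 : sp (b + ((s+1:ℕ):ℂ)) m = sp (b + s) m + (m:ℂ) * sp ((b+1) + s) (m-1) := by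
        have h := sp_shift_one (b + (s:ℂ)) m
        have e1 : b + ((s+1:ℕ):ℂ) = (b + s) + 1 := by push_cast; ring
        have e2 : (b+1) + (s:ℂ) = (b + s) + 1 := by ring
        rw [e1, e2, h]
      rw [h1, ih b m, ih (b+1) (m-1), Finset.mul_sum]
      -- second sum terms: (m) * (C(s,k) * (m-1).dF k * sp (b+1+k) (m-1-k))
      have h2 : ∀ k, (m:ℂ) * ((s.choose k : ℂ) * ((m-1).descFactorial k : ℂ) * sp ((b+1) + k) ((m-1) - k))
          = (s.choose k : ℂ) * (m.descFactorial (k+1) : ℂ) * sp (b + (k+1:ℕ)) (m - (k+1)) := by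
        intro k
        rw [show (m-1) - k = m - (k+1) by omega, show ((b+1) + (k:ℂ)) = b + ((k+1:ℕ):ℂ) by push_cast; ring,
          ← nat_mul_pred_descFactorial m k]
        push_cast
        ring
      rw [Finset.sum_congr rfl (fun k _ => h2 k)]
      -- now: ∑_{k∈range(s+1)} C(s,k)(m)_k sp(b+k)(m-k) + ∑_{k∈range(s+1)} C(s,k)(m)_{k+1} sp (b+(k+1)) (m-(k+1))
      --    = ∑_{k∈range(s+2)} C(s+1,k)(m)_k sp(b+k)(m-k)
      rw [Finset.sum_range_succ' (fun k => ((s.choose k : ℂ) * (m.descFactorial k : ℂ)) * sp (b + k) (m - k)) s]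
      rw [Finset.sum_range_succ' (fun k => (((s+1).choose k : ℂ) * (m.descFactorial k : ℂ)) * sp (b + k) (m - k)) (s+1)]
      simp only [Nat.choose_zero_right, Nat.descFactorial_zero, Nat.cast_zero, Nat.cast_one]
      have hext : ∑ k ∈ range s, ((s.choose (k+1) : ℂ) * (m.descFactorial (k+1) : ℂ)) * sp (b + (k+1:ℕ)) (m - (k+1))
          = ∑ k ∈ range (s+1), ((s.choose (k+1) : ℂ) * (m.descFactorial (k+1) : ℂ)) * sp (b + (k+1:ℕ)) (m - (k+1)) := by
        rw [Finset.sum_range_succ, Nat.choose_succ_self]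
        simp
      rw [hext]
      have : ∀ k ∈ range (s+1),
          ((s.choose (k+1) : ℂ) * (m.descFactorial (k+1) : ℂ)) * sp (b + (k+1:ℕ)) (m - (k+1))
          + (s.choose k : ℂ) * (m.descFactorial (k+1) : ℂ) * sp (b + (k+1:ℕ)) (m - (k+1))
          = (((s+1).choose (k+1) : ℂ) * (m.descFactorial (k+1) : ℂ)) * sp (b + (k+1:ℕ)) (m - (k+1)) := by
        intro k _
        rw [Nat.choose_succ_succ' s k]
        push_cast
        ring
      have hsum : ∑ k ∈ range (s+1), (((s.choose (k+1) : ℂ) * (m.descFactorial (k+1) : ℂ)) * sp (b + (k+1:ℕ)) (m - (k+1))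
          + (s.choose k : ℂ) * (m.descFactorial (k+1) : ℂ) * sp (b + (k+1:ℕ)) (m - (k+1)))
          = ∑ k ∈ range (s+1), (((s+1).choose (k+1) : ℂ) * (m.descFactorial (k+1) : ℂ)) * sp (b + (k+1:ℕ)) (m - (k+1)) :=
        Finset.sum_congr rfl this
      rw [Finset.sum_add_distrib] at hsum
      linear_combination hsum

lemma sp_shift_binom_neg (s : ℕ) : ∀ (b : ℂ) (m : ℕ),
    sp (b - s) m = ∑ k ∈ range (s+1),
      ((-1)^k * (s.choose k : ℂ) * (m.descFactorial k : ℂ)) * sp b (m - k) := by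
  induction s with
  | zero => intro b m; simp
  | succ s ih =>
      intro b m
      have h1 : sp (b - ((s+1:ℕ):ℂ)) m = sp (b - s) m - (m:ℂ) * sp (b - s) (m-1) := by
        have h := sp_shift_one (b - ((s+1:ℕ):ℂ)) m
        have e1 : (b - ((s+1:ℕ):ℂ)) + 1 = b - (s:ℂ) := by push_cast; ring
        rw [e1] at h
        linear_combination -h
      rw [h1, ih b m, ih b (m-1), Finset.mul_sum]
      have h2 : ∀ k, (m:ℂ) * (((-1)^k * (s.choose k : ℂ) * ((m-1).descFactorial k : ℂ)) * sp b ((m-1) - k))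
          = (-1)^k * (s.choose k : ℂ) * (m.descFactorial (k+1) : ℂ) * sp b (m - (k+1)) := by
        intro k
        rw [show (m-1) - k = m - (k+1) by omega, ← nat_mul_pred_descFactorial m k]
        push_cast
        ring
      rw [Finset.sum_congr rfl (fun k _ => h2 k)]
      rw [Finset.sum_range_succ' (fun k => ((-1)^k * (s.choose k : ℂ) * (m.descFactorial k : ℂ)) * sp b (m - k)) s]
      rw [Finset.sum_range_succ' (fun k => ((-1)^k * (((s+1).choose k : ℂ)) * (m.descFactorial k : ℂ)) * sp b (m - k)) (s+1)]
      simp only [Nat.choose_zero_right, Nat.descFactorial_zero, Nat.cast_zero, Nat.cast_one, pow_zero]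
      have hext : ∑ k ∈ range s, ((-1)^(k+1) * (s.choose (k+1) : ℂ) * (m.descFactorial (k+1) : ℂ)) * sp b (m - (k+1))
          = ∑ k ∈ range (s+1), ((-1)^(k+1) * (s.choose (k+1) : ℂ) * (m.descFactorial (k+1) : ℂ)) * sp b (m - (k+1)) := by
        rw [Finset.sum_range_succ, Nat.choose_succ_self]
        simp
      rw [hext]
      have this2 : ∀ k ∈ range (s+1),
          ((-1)^(k+1) * (s.choose (k+1) : ℂ) * (m.descFactorial (k+1) : ℂ)) * sp b (m - (k+1))
          - (-1)^k * (s.choose k : ℂ) * (m.descFactorial (k+1) : ℂ) * sp b (m - (k+1))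
          = ((-1)^(k+1) * (((s+1).choose (k+1) : ℂ)) * (m.descFactorial (k+1) : ℂ)) * sp b (m - (k+1)) := by
        intro k _
        rw [Nat.choose_succ_succ' s k]
        push_cast
        ring
      have hsum := Finset.sum_congr rfl this2
      rw [Finset.sum_sub_distrib] at hsum
      linear_combination hsum

variable {r : ℕ}

lemma poly_binom (s m : ℕ) :
    (ascPochhammer ℂ m).comp (X + C (s:ℂ)) = ∑ k ∈ range (s+1),
      C ((s.choose k : ℂ) * (m.descFactorial k : ℂ)) * (ascPochhammer ℂ (m-k)).comp (X + C (k:ℂ)) := by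
  apply Polynomial.funext
  intro z
  rw [eval_comp, eval_finset_sum]
  simp only [eval_mul, eval_C, eval_comp, eval_add, eval_X, sp_eval]
  exact sp_shift_binom s z m

lemma poly_binom_neg (s m : ℕ) :
    (ascPochhammer ℂ m).comp (X + C (-(s:ℂ))) = ∑ k ∈ range (s+1),
      C ((-1)^k * (s.choose k : ℂ) * (m.descFactorial k : ℂ)) * ascPochhammer ℂ (m-k) := by
  apply Polynomial.funext
  intro z
  rw [eval_comp, eval_finset_sum]
  simp only [eval_mul, eval_C, eval_add, eval_X, sp_eval]
  rw [← sub_eq_add_neg]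
  exact sp_shift_binom_neg s z m

lemma mPoch_succ (A : Matrix (Fin r) (Fin r) ℂ) (n : ℕ) :
    mPoch A (n+1) = mPoch A n * (A + (n : ℂ) • 1) := rfl

lemma mPoch_aeval (A : Matrix (Fin r) (Fin r) ℂ) (c : ℂ) (m : ℕ) :
    mPoch (A + c • 1) m = Polynomial.aeval A ((ascPochhammer ℂ m).comp (X + C c)) := by
  induction m with
  | zero => simp [mPoch, ascPochhammer_zero]
  | succ m ih =>
      rw [mPoch_succ, ih, ascPochhammer_succ_right, Polynomial.mul_comp, map_mul]
      congr 1
      simp only [Polynomial.add_comp, Polynomial.X_comp, Polynomial.natCast_comp, map_add,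
        Polynomial.aeval_X, Polynomial.aeval_C, map_natCast]
      rw [Algebra.algebraMap_eq_smul_one]
      congr 1
      rw [show ((m : ℕ) : Matrix (Fin r) (Fin r) ℂ) = algebraMap ℂ _ ((m:ℕ):ℂ) by
        simp [map_natCast], Algebra.algebraMap_eq_smul_one]

lemma mPoch_aeval0 (A : Matrix (Fin r) (Fin r) ℂ) (m : ℕ) :
    mPoch A m = Polynomial.aeval A (ascPochhammer ℂ m) := by
  have := mPoch_aeval A 0 m
  simpa using this

lemma mPoch_shift_binom (B : Matrix (Fin r) (Fin r) ℂ) (s m : ℕ) :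
    mPoch (B + (s:ℂ) • 1) m = ∑ k ∈ range (s+1),
      (((s.choose k : ℂ) * (m.descFactorial k : ℂ)) • mPoch (B + (k:ℂ) • 1) (m - k)) := by
  rw [mPoch_aeval, poly_binom, map_sum]
  refine Finset.sum_congr rfl fun k _ => ?_
  rw [map_mul, Polynomial.aeval_C, ← Algebra.smul_def, ← mPoch_aeval]

lemma mPoch_shift_binom_neg (B : Matrix (Fin r) (Fin r) ℂ) (s m : ℕ) :
    mPoch (B - (s:ℂ) • 1) m = ∑ k ∈ range (s+1),
      (((-1)^k * (s.choose k : ℂ) * (m.descFactorial k : ℂ)) • mPoch B (m - k)) := by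
  have e : B - (s:ℂ) • 1 = B + (-(s:ℂ)) • 1 := by rw [neg_smul, ← sub_eq_add_neg]
  rw [e, mPoch_aeval, poly_binom_neg, map_sum]
  refine Finset.sum_congr rfl fun k _ => ?_
  rw [map_mul, Polynomial.aeval_C, ← Algebra.smul_def, ← mPoch_aeval0]

lemma mPoch_add (A : Matrix (Fin r) (Fin r) ℂ) (m n : ℕ) :
    mPoch A (m + n) = mPoch A m * mPoch (A + (m:ℂ) • 1) n := by
  induction n with
  | zero => simp [mPoch]
  | succ n ih =>
      rw [show m + (n+1) = (m+n)+1 from rfl, mPoch_succ, ih, mPoch_succ, mul_assoc]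
      congr 2
      push_cast
      rw [add_smul]
      abel

lemma isUnit_mPoch (C : Matrix (Fin r) (Fin r) ℂ)
    (hC : ∀ n : ℕ, IsUnit (C + (n:ℂ) • (1 : Matrix (Fin r) (Fin r) ℂ))) (n : ℕ) :
    IsUnit (mPoch C n) := by
  induction n with
  | zero => simp [mPoch]
  | succ n ih => exact ih.mul (hC n)

lemma commute_mPoch_right {Z Y : Matrix (Fin r) (Fin r) ℂ} (h : Commute Z Y) (n : ℕ) :
    Commute Z (mPoch Y n) := by
  induction n with
  | zero => exact Commute.one_right Z
  | succ n ih =>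
      refine ih.mul_right (h.add_right ?_)
      exact (Commute.one_right Z).smul_right _

lemma commute_mPoch {X Y : Matrix (Fin r) (Fin r) ℂ} (h : Commute X Y) (m n : ℕ) :
    Commute (mPoch X m) (mPoch Y n) := by
  induction m with
  | zero => exact Commute.one_left _
  | succ m ih =>
      refine Commute.mul_left ih ?_
      exact commute_mPoch_right (Commute.add_left h ((Commute.one_left Y).smul_left _)) n

lemma commute_inv {X Y : Matrix (Fin r) (Fin r) ℂ} (h : Commute X Y) : Commute X⁻¹ Y⁻¹ := by
  rw [Matrix.nonsing_inv_eq_ringInverse, Matrix.nonsing_inv_eq_ringInverse]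
  exact h.ringInverse_ringInverse

section Norms

attribute [local instance] Matrix.linftyOpNormedRing Matrix.linftyOpNormedAlgebra

lemma exists_bound_of_eventually_antitone (u : ℕ → ℝ) (h0 : ∀ n, 0 ≤ u n)
    (N : ℕ) (hmono : ∀ n, N ≤ n → u (n+1) ≤ u n) : ∃ K, 0 < K ∧ ∀ n, u n ≤ K := by
  have hs : 0 ≤ ∑ j ∈ Finset.range (N+1), u j := Finset.sum_nonneg fun j _ => h0 j
  refine ⟨(∑ j ∈ Finset.range (N+1), u j) + 1, by linarith, fun n => ?_⟩
  rcases le_or_gt n N with h | h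
  · have : u n ≤ ∑ j ∈ Finset.range (N+1), u j :=
      Finset.single_le_sum (fun j _ => h0 j) (Finset.mem_range.2 (by omega))
    linarith
  · have key : ∀ m, u (N + m) ≤ u N := by
      intro m
      induction m with
      | zero => simp
      | succ m ih => exact le_trans (hmono (N + m) (by omega)) ih
    have h1 := key (n - N)
    rw [Nat.add_sub_cancel' h.le] at h1
    have h2 : u N ≤ ∑ j ∈ Finset.range (N+1), u j :=
      Finset.single_le_sum (fun j _ => h0 j) (Finset.mem_range.2 (by omega))
    linarith

lemma norm_one_le_one : ‖(1 : Matrix (Fin r) (Fin r) ℂ)‖ ≤ 1 := by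
  rw [← Matrix.diagonal_one, Matrix.linfty_opNorm_diagonal]
  refine (pi_norm_le_iff_of_nonneg zero_le_one).2 fun i => ?_
  simp

lemma norm_mPoch_le (A : Matrix (Fin r) (Fin r) ℂ) {t : ℝ} (ht : 1 < t) :
    ∃ K, 0 < K ∧ ∀ n, ‖mPoch A n‖ ≤ K * (t ^ n * n.factorial) := by
  have ht0 : 0 < t := by linarith
  have hpos : ∀ n : ℕ, (0:ℝ) < t ^ n * n.factorial := by
    intro n
    positivity
  have hmono : ∀ n, ⌈‖A‖ / (t-1)⌉₊ ≤ n →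
      ‖mPoch A (n+1)‖ / (t ^ (n+1) * (n+1).factorial) ≤ ‖mPoch A n‖ / (t ^ n * n.factorial) := by
    intro n hn
    have hA : ‖A‖ / (t-1) ≤ n := le_trans (Nat.le_ceil _) (by exact_mod_cast hn)
    have hA' : ‖A‖ ≤ (t-1) * n := by
      rw [div_le_iff₀ (by linarith)] at hA
      linarith [hA]
    have hfac : ‖A + (n:ℂ) • (1 : Matrix (Fin r) (Fin r) ℂ)‖ ≤ t * (n+1) := by
      calc ‖A + (n:ℂ) • (1 : Matrix (Fin r) (Fin r) ℂ)‖ ≤ ‖A‖ + ‖(n:ℂ) • (1 : Matrix (Fin r) (Fin r) ℂ)‖ := norm_add_le _ _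
        _ ≤ ‖A‖ + (n:ℝ) * 1 := by
            rw [norm_smul]
            gcongr
            · simp
            · exact norm_one_le_one
        _ ≤ t * (n+1) := by nlinarith
    have hstep : ‖mPoch A (n+1)‖ ≤ ‖mPoch A n‖ * (t * (n+1)) := by
      calc ‖mPoch A (n+1)‖ ≤ ‖mPoch A n‖ * ‖A + (n:ℂ) • (1 : Matrix (Fin r) (Fin r) ℂ)‖ :=
            norm_mul_le _ _
        _ ≤ ‖mPoch A n‖ * (t * (n+1)) := mul_le_mul_of_nonneg_left hfac (norm_nonneg _)
    rw [div_le_div_iff₀ (hpos (n+1)) (hpos n)]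
    have e : (t ^ (n+1) * ((n+1).factorial : ℝ)) = (t ^ n * n.factorial) * (t * (n+1)) := by
      rw [pow_succ, Nat.factorial_succ]
      push_cast
      ring
    rw [e]
    calc ‖mPoch A (n+1)‖ * (t ^ n * n.factorial)
        ≤ (‖mPoch A n‖ * (t * (n+1))) * (t ^ n * n.factorial) :=
          mul_le_mul_of_nonneg_right hstep (hpos n).le
      _ = ‖mPoch A n‖ * (t ^ n * n.factorial * (t * (n+1))) := by ring
  obtain ⟨K, hK0, hK⟩ := exists_bound_of_eventually_antitone
      (fun n => ‖mPoch A n‖ / (t ^ n * n.factorial)) (fun n => by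
      have := hpos n; positivity) ⌈‖A‖ / (t-1)⌉₊ hmono
  refine ⟨K, hK0, fun n => ?_⟩
  have h : ‖mPoch A n‖ / (t ^ n * n.factorial) ≤ K := hK n
  exact (div_le_iff₀ (hpos n)).1 h
lemma norm_inv_shift_le (C : Matrix (Fin r) (Fin r) ℂ) (n : ℕ)
    (h : IsUnit (C + (n:ℂ) • (1 : Matrix (Fin r) (Fin r) ℂ))) (hn : ‖C‖ < (n:ℝ)) :
    ‖(C + (n:ℂ) • (1 : Matrix (Fin r) (Fin r) ℂ))⁻¹‖ ≤ 1 / ((n:ℝ) - ‖C‖) := by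
  set D := (C + (n:ℂ) • (1 : Matrix (Fin r) (Fin r) ℂ))⁻¹ with hD
  have hdet : IsUnit (C + (n:ℂ) • (1 : Matrix (Fin r) (Fin r) ℂ)).det :=
    (Matrix.isUnit_iff_isUnit_det _).1 h
  have h1 : (C + (n:ℂ) • (1 : Matrix (Fin r) (Fin r) ℂ)) * D = 1 :=
    Matrix.mul_nonsing_inv _ hdet
  have h2 : (n:ℂ) • D = 1 - C * D := by
    have h3 : C * D + (n:ℂ) • D = 1 := by
      rw [← h1, add_mul, smul_mul_assoc, one_mul]
    linear_combination (norm := module) h3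
  have h4 : (n:ℝ) * ‖D‖ ≤ 1 + ‖C‖ * ‖D‖ := by
    have e1 : ‖(n:ℂ) • D‖ = (n:ℝ) * ‖D‖ := by
      rw [norm_smul]
      simp
    calc (n:ℝ) * ‖D‖ = ‖(n:ℂ) • D‖ := e1.symm
      _ = ‖(1 : Matrix (Fin r) (Fin r) ℂ) - C * D‖ := by rw [h2]
      _ ≤ ‖(1 : Matrix (Fin r) (Fin r) ℂ)‖ + ‖C * D‖ := norm_sub_le _ _
      _ ≤ 1 + ‖C‖ * ‖D‖ := add_le_add norm_one_le_one (norm_mul_le _ _)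
  rw [le_div_iff₀ (by linarith)]
  nlinarith [norm_nonneg D]

lemma norm_mPoch_inv_le (C : Matrix (Fin r) (Fin r) ℂ)
    (hC : ∀ n : ℕ, IsUnit (C + (n:ℂ) • (1 : Matrix (Fin r) (Fin r) ℂ))) {t : ℝ} (ht : 1 < t) :
    ∃ K, 0 < K ∧ ∀ n, ‖(mPoch C n)⁻¹‖ ≤ K * (t ^ n / n.factorial) := by
  have ht0 : 0 < t := by linarith
  have hpos : ∀ n : ℕ, (0:ℝ) < t ^ n / n.factorial := by
    intro n
    have := n.factorial_pos
    positivity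
  set N := ⌈max (‖C‖ + 1) ((1 + t * ‖C‖) / (t - 1))⌉₊ with hN
  have hmono : ∀ n, N ≤ n →
      ‖(mPoch C (n+1))⁻¹‖ / (t ^ (n+1) / (n+1).factorial) ≤ ‖(mPoch C n)⁻¹‖ / (t ^ n / n.factorial) := by
    intro n hn
    have hmax : max (‖C‖ + 1) ((1 + t * ‖C‖) / (t - 1)) ≤ (n:ℝ) :=
      le_trans (Nat.le_ceil _) (by exact_mod_cast hn)
    have hn1 : ‖C‖ + 1 ≤ (n:ℝ) := le_trans (le_max_left _ _) hmax
    have hn2 : (1 + t * ‖C‖) / (t - 1) ≤ (n:ℝ) := le_trans (le_max_right _ _) hmax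
    have hn2' : 1 + t * ‖C‖ ≤ (t - 1) * n := by
      rw [div_le_iff₀ (by linarith)] at hn2
      linarith
    have hCn : ‖C‖ < (n:ℝ) := by linarith
    have hkey : (n:ℝ) + 1 ≤ t * ((n:ℝ) - ‖C‖) := by nlinarith
    have hfac : ‖(C + (n:ℂ) • (1 : Matrix (Fin r) (Fin r) ℂ))⁻¹‖ ≤ t / ((n:ℝ) + 1) := by
      calc ‖(C + (n:ℂ) • (1 : Matrix (Fin r) (Fin r) ℂ))⁻¹‖ ≤ 1 / ((n:ℝ) - ‖C‖) :=
            norm_inv_shift_le C n (hC n) hCn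
        _ ≤ t / ((n:ℝ) + 1) := by
            rw [div_le_div_iff₀ (by linarith) (by positivity)]
            linarith
    have hstep : ‖(mPoch C (n+1))⁻¹‖ ≤ (t / ((n:ℝ) + 1)) * ‖(mPoch C n)⁻¹‖ := by
      calc ‖(mPoch C (n+1))⁻¹‖
          = ‖(C + (n:ℂ) • (1 : Matrix (Fin r) (Fin r) ℂ))⁻¹ * (mPoch C n)⁻¹‖ := by
            rw [mPoch_succ, Matrix.mul_inv_rev]
        _ ≤ ‖(C + (n:ℂ) • (1 : Matrix (Fin r) (Fin r) ℂ))⁻¹‖ * ‖(mPoch C n)⁻¹‖ := norm_mul_le _ _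
        _ ≤ (t / ((n:ℝ) + 1)) * ‖(mPoch C n)⁻¹‖ :=
            mul_le_mul_of_nonneg_right hfac (norm_nonneg _)
    rw [div_le_div_iff₀ (hpos (n+1)) (hpos n)]
    have hf1 : (0:ℝ) < (n.factorial : ℝ) := by exact_mod_cast n.factorial_pos
    have hf2 : (0:ℝ) < ((n+1).factorial : ℝ) := by exact_mod_cast (n+1).factorial_pos
    calc ‖(mPoch C (n+1))⁻¹‖ * (t ^ n / n.factorial)
        ≤ ((t / ((n:ℝ) + 1)) * ‖(mPoch C n)⁻¹‖) * (t ^ n / n.factorial) :=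
          mul_le_mul_of_nonneg_right hstep (hpos n).le
      _ = ‖(mPoch C n)⁻¹‖ * (t ^ (n+1) / (n+1).factorial) := by
          rw [pow_succ, Nat.factorial_succ]
          push_cast
          field_simp
  obtain ⟨K, hK0, hK⟩ := exists_bound_of_eventually_antitone
      (fun n => ‖(mPoch C n)⁻¹‖ / (t ^ n / n.factorial)) (fun n => by
      have := hpos n; positivity) N hmono
  refine ⟨K, hK0, fun n => ?_⟩
  have h : ‖(mPoch C n)⁻¹‖ / (t ^ n / n.factorial) ≤ K := hK n
  exact (div_le_iff₀ (hpos n)).1 h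

lemma choose_mul_pow_le {a b : ℝ} (ha : 0 ≤ a) (hb : 0 ≤ b) (m n : ℕ) :
    ((m+n).choose m : ℝ) * a^m * b^n ≤ (a+b)^(m+n) := by
  rw [add_pow]
  have hm : m ∈ Finset.range (m+n+1) := Finset.mem_range.2 (by omega)
  have := Finset.single_le_sum
    (f := fun i => a ^ i * b ^ (m + n - i) * ((m+n).choose i : ℝ))
    (fun i _ => by positivity) hm
  simpa [Nat.add_sub_cancel_left, mul_comm, mul_assoc, mul_left_comm] using this

lemma fact_choose_identity (m n : ℕ) :
    ((m+n).factorial : ℝ) = ((m+n).choose m : ℝ) * m.factorial * n.factorial := by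
  have h := Nat.choose_mul_factorial_mul_factorial (Nat.le_add_right m n)
  rw [Nat.add_sub_cancel_left] at h
  exact_mod_cast h.symm

lemma exists_t (ρ : ℝ) (h0 : 0 ≤ ρ) (h1 : ρ < 1) : ∃ t : ℝ, 1 < t ∧ t^3 * ρ < 1 := by
  have hδ0 : 0 < min 1 ((1-ρ)/8) := lt_min one_pos (by linarith)
  have hδ1 : min 1 ((1-ρ)/8) ≤ 1 := min_le_left _ _
  have hδ2 : min 1 ((1-ρ)/8) ≤ (1-ρ)/8 := min_le_right _ _
  set δ := min 1 ((1-ρ)/8) with hδ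
  refine ⟨1 + δ, by linarith, ?_⟩
  have h2 : ρ * (δ*δ) ≤ ρ * δ := mul_le_mul_of_nonneg_left (by nlinarith) h0
  have h3 : ρ * (δ*δ*δ) ≤ ρ * δ := mul_le_mul_of_nonneg_left (by nlinarith) h0
  have h4 : ρ * δ ≤ ρ * ((1-ρ)/8) := mul_le_mul_of_nonneg_left hδ2 h0
  have h5 : (0:ℝ) < (1-ρ) * (8 - 7*ρ) := mul_pos (by linarith) (by linarith)
  nlinarith [h2, h3, h4, h5]

lemma scalar_arith (KA KB KB' KC KC' t cx cy fm fn ch : ℝ) (m n : ℕ)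
    (hfm : fm ≠ 0) (hfn : fn ≠ 0) :
    (fm*fn)⁻¹ * cx^m * cy^n * ((KA*(t^(m+n)*(ch*fm*fn))) * (KB*(t^m*fm)) * (KB'*(t^n*fn))
      * (KC*(t^m/fm)) * (KC'*(t^n/fn)))
    = (KA*KB*KB'*KC*KC') * (ch * (t^3*cx)^m * (t^3*cy)^n) := by
  field_simp
  ring

lemma summable_F2_term (A B B' C C' : Matrix (Fin r) (Fin r) ℂ) (x y : ℂ)
    (hC : ∀ n : ℕ, IsUnit (C + (n:ℂ) • (1 : Matrix (Fin r) (Fin r) ℂ)))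
    (hC' : ∀ n : ℕ, IsUnit (C' + (n:ℂ) • (1 : Matrix (Fin r) (Fin r) ℂ)))
    (hxy : ‖x‖ + ‖y‖ < 1) :
    Summable (fun p : ℕ × ℕ =>
      (((p.1.factorial : ℂ) * (p.2.factorial : ℂ))⁻¹ * x ^ p.1 * y ^ p.2) •
      (mPoch A (p.1 + p.2) * mPoch B p.1 * mPoch B' p.2 *
        (mPoch C p.1)⁻¹ * (mPoch C' p.2)⁻¹)) := by
  set ρ := ‖x‖ + ‖y‖ with hρ
  have hρ0 : 0 ≤ ρ := by positivity
  obtain ⟨t, ht, hw⟩ := exists_t ρ hρ0 hxy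
  have ht0 : 0 < t := by linarith
  obtain ⟨KA, hKA0, hKA⟩ := norm_mPoch_le A ht
  obtain ⟨KB, hKB0, hKB⟩ := norm_mPoch_le B ht
  obtain ⟨KB', hKB'0, hKB'⟩ := norm_mPoch_le B' ht
  obtain ⟨KC, hKC0, hKC⟩ := norm_mPoch_inv_le C hC ht
  obtain ⟨KC', hKC'0, hKC'⟩ := norm_mPoch_inv_le C' hC' ht
  set w : ℝ := t^3 * ρ with hwdef
  have hw0 : 0 ≤ w := by positivity
  apply Summable.of_norm_bounded
    (g := fun p : ℕ × ℕ => (KA*KB*KB'*KC*KC') * (w ^ p.1 * w ^ p.2))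
  · have hgeo : Summable (fun n : ℕ => w ^ n) := summable_geometric_of_lt_one hw0 hw
    exact (hgeo.mul_of_nonneg hgeo (fun n => by positivity) (fun n => by positivity)).mul_left _
  · rintro ⟨m, n⟩
    simp only
    rw [norm_smul]
    have hfm : (0:ℝ) < (m.factorial : ℝ) := by exact_mod_cast m.factorial_pos
    have hfn : (0:ℝ) < (n.factorial : ℝ) := by exact_mod_cast n.factorial_pos
    have hsc : ‖((m.factorial : ℂ) * (n.factorial : ℂ))⁻¹ * x ^ m * y ^ n‖
        = ((m.factorial : ℝ) * (n.factorial : ℝ))⁻¹ * (‖x‖) ^ m * (‖y‖) ^ n := by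
      simp [norm_mul, norm_inv, norm_pow]
    have hM : ‖mPoch A (m + n) * mPoch B m * mPoch B' n * (mPoch C m)⁻¹ * (mPoch C' n)⁻¹‖
        ≤ (KA * (t ^ (m+n) * (m+n).factorial)) * (KB * (t ^ m * m.factorial))
          * (KB' * (t ^ n * n.factorial)) * (KC * (t ^ m / m.factorial))
          * (KC' * (t ^ n / n.factorial)) := by
      calc ‖mPoch A (m + n) * mPoch B m * mPoch B' n * (mPoch C m)⁻¹ * (mPoch C' n)⁻¹‖
          ≤ ‖mPoch A (m + n) * mPoch B m * mPoch B' n * (mPoch C m)⁻¹‖ * ‖(mPoch C' n)⁻¹‖ :=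
            norm_mul_le _ _
        _ ≤ ‖mPoch A (m + n) * mPoch B m * mPoch B' n‖ * ‖(mPoch C m)⁻¹‖ * ‖(mPoch C' n)⁻¹‖ := by
            gcongr
            exact norm_mul_le _ _
        _ ≤ ‖mPoch A (m + n) * mPoch B m‖ * ‖mPoch B' n‖ * ‖(mPoch C m)⁻¹‖ * ‖(mPoch C' n)⁻¹‖ := by
            gcongr
            exact norm_mul_le _ _
        _ ≤ ‖mPoch A (m + n)‖ * ‖mPoch B m‖ * ‖mPoch B' n‖ * ‖(mPoch C m)⁻¹‖ * ‖(mPoch C' n)⁻¹‖ := by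
            gcongr
            exact norm_mul_le _ _
        _ ≤ (KA * (t ^ (m+n) * (m+n).factorial)) * (KB * (t ^ m * m.factorial))
            * (KB' * (t ^ n * n.factorial)) * (KC * (t ^ m / m.factorial))
            * (KC' * (t ^ n / n.factorial)) := by
            have hfm' : (0:ℝ) < (m.factorial : ℝ) := by exact_mod_cast m.factorial_pos
            have hfn' : (0:ℝ) < (n.factorial : ℝ) := by exact_mod_cast n.factorial_pos
            have hb1 : (0:ℝ) ≤ KA * (t ^ (m+n) * (m+n).factorial) := by
              have : (0:ℝ) < ((m+n).factorial : ℝ) := by exact_mod_cast (m+n).factorial_pos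
              have h6 : (0:ℝ) ≤ t ^ (m+n) * ((m+n).factorial:ℝ) := by positivity
              exact mul_nonneg hKA0.le h6
            have hb2 : (0:ℝ) ≤ KB * (t ^ m * m.factorial) := by
              have h6 : (0:ℝ) ≤ t ^ m * (m.factorial:ℝ) := by positivity
              exact mul_nonneg hKB0.le h6
            have hb3 : (0:ℝ) ≤ KB' * (t ^ n * n.factorial) := by
              have h6 : (0:ℝ) ≤ t ^ n * (n.factorial:ℝ) := by positivity
              exact mul_nonneg hKB'0.le h6
            have hb4 : (0:ℝ) ≤ KC * (t ^ m / m.factorial) := by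
              have h6 : (0:ℝ) ≤ t ^ m / (m.factorial:ℝ) := by positivity
              exact mul_nonneg hKC0.le h6
            exact mul_le_mul (mul_le_mul (mul_le_mul (mul_le_mul (hKA _) (hKB _)
              (norm_nonneg _) hb1) (hKB' _) (norm_nonneg _) (mul_nonneg hb1 hb2))
              (hKC _) (norm_nonneg _) (mul_nonneg (mul_nonneg hb1 hb2) hb3))
              (hKC' _) (norm_nonneg _) (mul_nonneg (mul_nonneg (mul_nonneg hb1 hb2) hb3) hb4)
    calc ‖((m.factorial : ℂ) * (n.factorial : ℂ))⁻¹ * x ^ m * y ^ n‖ *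
          ‖mPoch A (m + n) * mPoch B m * mPoch B' n * (mPoch C m)⁻¹ * (mPoch C' n)⁻¹‖
        ≤ (((m.factorial : ℝ) * (n.factorial : ℝ))⁻¹ * (‖x‖) ^ m * (‖y‖) ^ n) *
          ((KA * (t ^ (m+n) * (m+n).factorial)) * (KB * (t ^ m * m.factorial))
            * (KB' * (t ^ n * n.factorial)) * (KC * (t ^ m / m.factorial))
            * (KC' * (t ^ n / n.factorial))) := by
          rw [hsc]
          exact mul_le_mul_of_nonneg_left hM (by positivity)
      _ = (KA*KB*KB'*KC*KC') * (((m+n).choose m : ℝ)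
            * (t^3 * ‖x‖) ^ m * (t^3 * ‖y‖) ^ n) := by
          rw [fact_choose_identity m n]
          exact scalar_arith KA KB KB' KC KC' t (‖x‖) (‖y‖)
            (m.factorial : ℝ) (n.factorial : ℝ) ((m+n).choose m : ℝ) m n hfm.ne' hfn.ne'
      _ ≤ (KA*KB*KB'*KC*KC') * (w ^ m * w ^ n) := by
          have hb := choose_mul_pow_le (a := t^3 * ‖x‖) (b := t^3 * ‖y‖)
            (by positivity) (by positivity) m n
          have he : (t^3 * ‖x‖ + t^3 * ‖y‖) = w := by
            rw [hwdef, hρ]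
            ring
          rw [he] at hb
          have : (0:ℝ) ≤ KA*KB*KB'*KC*KC' := by positivity
          calc (KA*KB*KB'*KC*KC') * (((m+n).choose m : ℝ)
                * (t^3 * ‖x‖) ^ m * (t^3 * ‖y‖) ^ n)
              ≤ (KA*KB*KB'*KC*KC') * (w ^ (m+n)) := mul_le_mul_of_nonneg_left hb this
            _ = (KA*KB*KB'*KC*KC') * (w ^ m * w ^ n) := by rw [pow_add]

end Norms

section Master

attribute [local instance] Matrix.linftyOpNormedRing Matrix.linftyOpNormedAlgebra

lemma shift_isUnit {C : Matrix (Fin r) (Fin r) ℂ}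
    (hC : ∀ n : ℕ, IsUnit (C + (n:ℂ) • (1 : Matrix (Fin r) (Fin r) ℂ))) (k : ℕ) :
    ∀ n : ℕ, IsUnit ((C + (k:ℂ) • 1) + (n:ℂ) • (1 : Matrix (Fin r) (Fin r) ℂ)) := by
  intro n
  have h := hC (k + n)
  have e : C + ((k+n : ℕ):ℂ) • (1 : Matrix (Fin r) (Fin r) ℂ) = (C + (k:ℂ) • 1) + (n:ℂ) • 1 := by
    push_cast
    rw [add_smul]
    abel
  rwa [e] at h

lemma scalar_reindex1 (e x y : ℂ) (k m n : ℕ) :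
    e * (((k+m).descFactorial k : ℕ):ℂ) * (((k+m).factorial:ℂ) * (n.factorial:ℂ))⁻¹ * x^(k+m) * y^n
    = (e * x^k) * (((m.factorial:ℂ) * (n.factorial:ℂ))⁻¹ * x^m * y^n) := by
  have hnat : (m.factorial) * ((k+m).descFactorial k) = (k+m).factorial := by
    have h := Nat.factorial_mul_descFactorial (n := k+m) (k := k) (Nat.le_add_right k m)
    rwa [Nat.add_sub_cancel_left] at h
  have h1 : ((k+m).factorial : ℂ) = (m.factorial:ℂ) * (((k+m).descFactorial k : ℕ):ℂ) := by
    exact_mod_cast hnat.symm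
  have hf : (m.factorial:ℂ) ≠ 0 := Nat.cast_ne_zero.2 m.factorial_ne_zero
  have hn : (n.factorial:ℂ) ≠ 0 := Nat.cast_ne_zero.2 n.factorial_ne_zero
  have hd : (((k+m).descFactorial k : ℕ):ℂ) ≠ 0 := by
    refine Nat.cast_ne_zero.2 fun h0 => ?_
    have := Nat.descFactorial_eq_zero_iff_lt.1 h0
    omega
  rw [h1, pow_add]
  field_simp

lemma scalar_reindex2 (e x y : ℂ) (k m n : ℕ) :
    e * (((k+n).descFactorial k : ℕ):ℂ) * ((m.factorial:ℂ) * ((k+n).factorial:ℂ))⁻¹ * x^m * y^(k+n)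
    = (e * y^k) * (((m.factorial:ℂ) * (n.factorial:ℂ))⁻¹ * x^m * y^n) := by
  have hnat : (n.factorial) * ((k+n).descFactorial k) = (k+n).factorial := by
    have h := Nat.factorial_mul_descFactorial (n := k+n) (k := k) (Nat.le_add_right k n)
    rwa [Nat.add_sub_cancel_left] at h
  have h1 : ((k+n).factorial : ℂ) = (n.factorial:ℂ) * (((k+n).descFactorial k : ℕ):ℂ) := by
    exact_mod_cast hnat.symm
  have hf : (m.factorial:ℂ) ≠ 0 := Nat.cast_ne_zero.2 m.factorial_ne_zero
  have hn : (n.factorial:ℂ) ≠ 0 := Nat.cast_ne_zero.2 n.factorial_ne_zero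
  have hd : (((k+n).descFactorial k : ℕ):ℂ) ≠ 0 := by
    refine Nat.cast_ne_zero.2 fun h0 => ?_
    have := Nat.descFactorial_eq_zero_iff_lt.1 h0
    omega
  rw [h1, pow_add]
  field_simp

lemma master1 (A B' C C' : Matrix (Fin r) (Fin r) ℂ) (x y : ℂ) (s : ℕ)
    (hC : ∀ n : ℕ, IsUnit (C + (n:ℂ) • (1 : Matrix (Fin r) (Fin r) ℂ)))
    (hC' : ∀ n : ℕ, IsUnit (C' + (n:ℂ) • (1 : Matrix (Fin r) (Fin r) ℂ)))
    (hCC' : C * C' = C' * C)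
    (hxy : ‖x‖ + ‖y‖ < 1)
    (B₀ : Matrix (Fin r) (Fin r) ℂ) (Bk : ℕ → Matrix (Fin r) (Fin r) ℂ) (e : ℕ → ℂ)
    (hD : ∀ m, mPoch B₀ m = ∑ k ∈ Finset.range (s+1),
      ((e k) * ((m.descFactorial k : ℕ) : ℂ)) • mPoch (Bk k) (m - k)) :
    appellF2 A B₀ B' C C' x y = ∑ k ∈ Finset.range (s+1), (e k * x^k) •
      (mPoch A k * appellF2 (A + (k:ℂ)•1) (Bk k) B' (C + (k:ℂ)•1) C' x y * (mPoch C k)⁻¹) := by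
  classical
  set g : ℕ → ℕ × ℕ → Matrix (Fin r) (Fin r) ℂ := fun k p =>
    (e k * ((p.1.descFactorial k : ℕ):ℂ) * ((p.1.factorial:ℂ) * (p.2.factorial:ℂ))⁻¹
        * x^p.1 * y^p.2) •
      (mPoch A (p.1+p.2) * mPoch (Bk k) (p.1 - k) * mPoch B' p.2 *
        (mPoch C p.1)⁻¹ * (mPoch C' p.2)⁻¹) with hg
  -- pointwise expansion
  have hpt : ∀ p : ℕ × ℕ,
      (((p.1.factorial : ℂ) * (p.2.factorial : ℂ))⁻¹ * x ^ p.1 * y ^ p.2) •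
        (mPoch A (p.1 + p.2) * mPoch B₀ p.1 * mPoch B' p.2 * (mPoch C p.1)⁻¹ * (mPoch C' p.2)⁻¹)
      = ∑ k ∈ Finset.range (s+1), g k p := by
    rintro ⟨m, n⟩
    rw [hD m]
    simp only [hg, Finset.mul_sum, Finset.sum_mul, Finset.smul_sum, smul_mul_assoc,
      mul_smul_comm, smul_smul]
    refine Finset.sum_congr rfl fun k _ => ?_
    congr 1
    ring
  -- the inner summable family
  have hinner : ∀ k : ℕ, Summable (fun p : ℕ × ℕ =>
      (((p.1.factorial : ℂ) * (p.2.factorial : ℂ))⁻¹ * x ^ p.1 * y ^ p.2) •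
      (mPoch (A + (k:ℂ)•1) (p.1 + p.2) * mPoch (Bk k) p.1 * mPoch B' p.2 *
        (mPoch (C + (k:ℂ)•1) p.1)⁻¹ * (mPoch C' p.2)⁻¹)) := fun k =>
    summable_F2_term (A + (k:ℂ)•1) (Bk k) B' (C + (k:ℂ)•1) C' x y (shift_isUnit hC k) hC' hxy
  have hι : ∀ k : ℕ, Function.Injective (fun p : ℕ × ℕ => ((k + p.1, p.2) : ℕ × ℕ)) := by
    intro k p q h
    simp only [Prod.mk.injEq] at h
    exact Prod.ext (by omega) h.2
  have hvan : ∀ k, ∀ p : ℕ × ℕ, p ∉ Set.range (fun p : ℕ × ℕ => ((k + p.1, p.2) : ℕ × ℕ)) →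
      g k p = 0 := by
    rintro k ⟨m, n⟩ hp
    have hm : m < k := by
      by_contra hmk
      exact hp ⟨(m - k, n), by simp; omega⟩
    simp [hg, Nat.descFactorial_eq_zero_iff_lt.2 hm]
  have hcomp : ∀ k, ∀ p : ℕ × ℕ, g k (k + p.1, p.2) =
      (e k * x^k) • (mPoch A k *
        ((((p.1.factorial : ℂ) * (p.2.factorial : ℂ))⁻¹ * x ^ p.1 * y ^ p.2) •
          (mPoch (A + (k:ℂ)•1) (p.1 + p.2) * mPoch (Bk k) p.1 * mPoch B' p.2 *
            (mPoch (C + (k:ℂ)•1) p.1)⁻¹ * (mPoch C' p.2)⁻¹)) * (mPoch C k)⁻¹) := by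
    rintro k ⟨m, n⟩
    have hcm : Commute ((mPoch C k)⁻¹) ((mPoch C' n)⁻¹) := commute_inv (commute_mPoch hCC' k n)
    simp only [hg]
    rw [mul_smul_comm, smul_mul_assoc, smul_smul]
    congr 1
    · exact scalar_reindex1 (e k) x y k m n
    · have e1 : k + m + n = k + (m + n) := by omega
      rw [e1, mPoch_add A k (m+n), Nat.add_sub_cancel_left, mPoch_add C k m,
        Matrix.mul_inv_rev]
      simp only [mul_assoc]
      rw [hcm.eq]
  have hgsum : ∀ k ∈ Finset.range (s+1), Summable (g k) := by
    intro k _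
    refine ((hι k).summable_iff (hvan k)).1 ?_
    have : (g k) ∘ (fun p : ℕ × ℕ => ((k + p.1, p.2) : ℕ × ℕ)) = fun p : ℕ × ℕ =>
        (e k * x^k) • (mPoch A k *
        ((((p.1.factorial : ℂ) * (p.2.factorial : ℂ))⁻¹ * x ^ p.1 * y ^ p.2) •
          (mPoch (A + (k:ℂ)•1) (p.1 + p.2) * mPoch (Bk k) p.1 * mPoch B' p.2 *
            (mPoch (C + (k:ℂ)•1) p.1)⁻¹ * (mPoch C' p.2)⁻¹)) * (mPoch C k)⁻¹) := by
      funext p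
      exact hcomp k p
    rw [this]
    exact ((((hinner k).mul_left (mPoch A k)).mul_right ((mPoch C k)⁻¹)).const_smul _)
  rw [appellF2, tsum_congr hpt, Summable.tsum_finsetSum hgsum]
  refine Finset.sum_congr rfl fun k hk => ?_
  have h1 : ∑' p : ℕ × ℕ, g k p = ∑' p : ℕ × ℕ, g k (k + p.1, p.2) := by
    refine ((hι k).tsum_eq ?_).symm
    intro p hp
    simp only [Function.mem_support] at hp
    by_contra hmem
    exact hp (hvan k p hmem)
  rw [h1, tsum_congr (hcomp k)]
  rw [Summable.tsum_const_smul _ (((hinner k).mul_left (mPoch A k)).mul_right ((mPoch C k)⁻¹)),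
    Summable.tsum_mul_right _ ((hinner k).mul_left (mPoch A k)),
    Summable.tsum_mul_left _ (hinner k)]
  rfl

lemma master2 (A B C C' : Matrix (Fin r) (Fin r) ℂ) (x y : ℂ) (s : ℕ)
    (hC : ∀ n : ℕ, IsUnit (C + (n:ℂ) • (1 : Matrix (Fin r) (Fin r) ℂ)))
    (hC' : ∀ n : ℕ, IsUnit (C' + (n:ℂ) • (1 : Matrix (Fin r) (Fin r) ℂ)))
    (hxy : ‖x‖ + ‖y‖ < 1)
    (B₀' : Matrix (Fin r) (Fin r) ℂ) (Bk' : ℕ → Matrix (Fin r) (Fin r) ℂ) (e : ℕ → ℂ)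
    (hD : ∀ n, mPoch B₀' n = ∑ k ∈ Finset.range (s+1),
      ((e k) * ((n.descFactorial k : ℕ) : ℂ)) • mPoch (Bk' k) (n - k)) :
    appellF2 A B B₀' C C' x y = ∑ k ∈ Finset.range (s+1), (e k * y^k) •
      (mPoch A k * appellF2 (A + (k:ℂ)•1) B (Bk' k) C (C' + (k:ℂ)•1) x y * (mPoch C' k)⁻¹) := by
  classical
  set g : ℕ → ℕ × ℕ → Matrix (Fin r) (Fin r) ℂ := fun k p =>
    (e k * ((p.2.descFactorial k : ℕ):ℂ) * ((p.1.factorial:ℂ) * (p.2.factorial:ℂ))⁻¹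
        * x^p.1 * y^p.2) •
      (mPoch A (p.1+p.2) * mPoch B p.1 * mPoch (Bk' k) (p.2 - k) *
        (mPoch C p.1)⁻¹ * (mPoch C' p.2)⁻¹) with hg
  have hpt : ∀ p : ℕ × ℕ,
      (((p.1.factorial : ℂ) * (p.2.factorial : ℂ))⁻¹ * x ^ p.1 * y ^ p.2) •
        (mPoch A (p.1 + p.2) * mPoch B p.1 * mPoch B₀' p.2 * (mPoch C p.1)⁻¹ * (mPoch C' p.2)⁻¹)
      = ∑ k ∈ Finset.range (s+1), g k p := by
    rintro ⟨m, n⟩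
    rw [hD n]
    simp only [hg, Finset.mul_sum, Finset.sum_mul, Finset.smul_sum, smul_mul_assoc,
      mul_smul_comm, smul_smul]
    refine Finset.sum_congr rfl fun k _ => ?_
    congr 1
    ring
  have hinner : ∀ k : ℕ, Summable (fun p : ℕ × ℕ =>
      (((p.1.factorial : ℂ) * (p.2.factorial : ℂ))⁻¹ * x ^ p.1 * y ^ p.2) •
      (mPoch (A + (k:ℂ)•1) (p.1 + p.2) * mPoch B p.1 * mPoch (Bk' k) p.2 *
        (mPoch C p.1)⁻¹ * (mPoch (C' + (k:ℂ)•1) p.2)⁻¹)) := fun k =>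
    summable_F2_term (A + (k:ℂ)•1) B (Bk' k) C (C' + (k:ℂ)•1) x y hC (shift_isUnit hC' k) hxy
  have hι : ∀ k : ℕ, Function.Injective (fun p : ℕ × ℕ => ((p.1, k + p.2) : ℕ × ℕ)) := by
    intro k p q h
    simp only [Prod.mk.injEq] at h
    exact Prod.ext h.1 (by omega)
  have hvan : ∀ k, ∀ p : ℕ × ℕ, p ∉ Set.range (fun p : ℕ × ℕ => ((p.1, k + p.2) : ℕ × ℕ)) →
      g k p = 0 := by
    rintro k ⟨m, n⟩ hp
    have hn : n < k := by
      by_contra hnk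
      exact hp ⟨(m, n - k), by simp; omega⟩
    simp [hg, Nat.descFactorial_eq_zero_iff_lt.2 hn]
  have hcomp : ∀ k, ∀ p : ℕ × ℕ, g k (p.1, k + p.2) =
      (e k * y^k) • (mPoch A k *
        ((((p.1.factorial : ℂ) * (p.2.factorial : ℂ))⁻¹ * x ^ p.1 * y ^ p.2) •
          (mPoch (A + (k:ℂ)•1) (p.1 + p.2) * mPoch B p.1 * mPoch (Bk' k) p.2 *
            (mPoch C p.1)⁻¹ * (mPoch (C' + (k:ℂ)•1) p.2)⁻¹)) * (mPoch C' k)⁻¹) := by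
    rintro k ⟨m, n⟩
    simp only [hg]
    rw [mul_smul_comm, smul_mul_assoc, smul_smul]
    congr 1
    · exact scalar_reindex2 (e k) x y k m n
    · have e1 : m + (k + n) = k + (m + n) := by omega
      rw [e1, mPoch_add A k (m+n), Nat.add_sub_cancel_left, mPoch_add C' k n,
        Matrix.mul_inv_rev]
      simp only [mul_assoc]
  have hgsum : ∀ k ∈ Finset.range (s+1), Summable (g k) := by
    intro k _
    refine ((hι k).summable_iff (hvan k)).1 ?_
    have : (g k) ∘ (fun p : ℕ × ℕ => ((p.1, k + p.2) : ℕ × ℕ)) = fun p : ℕ × ℕ =>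
        (e k * y^k) • (mPoch A k *
        ((((p.1.factorial : ℂ) * (p.2.factorial : ℂ))⁻¹ * x ^ p.1 * y ^ p.2) •
          (mPoch (A + (k:ℂ)•1) (p.1 + p.2) * mPoch B p.1 * mPoch (Bk' k) p.2 *
            (mPoch C p.1)⁻¹ * (mPoch (C' + (k:ℂ)•1) p.2)⁻¹)) * (mPoch C' k)⁻¹) := by
      funext p
      exact hcomp k p
    rw [this]
    exact ((((hinner k).mul_left (mPoch A k)).mul_right ((mPoch C' k)⁻¹)).const_smul _)
  rw [appellF2, tsum_congr hpt, Summable.tsum_finsetSum hgsum]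
  refine Finset.sum_congr rfl fun k hk => ?_
  have h1 : ∑' p : ℕ × ℕ, g k p = ∑' p : ℕ × ℕ, g k (p.1, k + p.2) := by
    refine ((hι k).tsum_eq ?_).symm
    intro p hp
    simp only [Function.mem_support] at hp
    by_contra hmem
    exact hp (hvan k p hmem)
  rw [h1, tsum_congr (hcomp k)]
  rw [Summable.tsum_const_smul _ (((hinner k).mul_left (mPoch A k)).mul_right ((mPoch C' k)⁻¹)),
    Summable.tsum_mul_right _ ((hinner k).mul_left (mPoch A k)),
    Summable.tsum_mul_left _ (hinner k)]
  rfl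

end Master

end AppellAux

theorem appellF2_recursion_B_binom {r : ℕ} (A B B' C C' : Matrix (Fin r) (Fin r) ℂ) (x y : ℂ)
    (s : ℕ)
    (hC : ∀ n : ℕ, IsUnit (C + (n : ℂ) • (1 : Matrix (Fin r) (Fin r) ℂ)))
    (hC' : ∀ n : ℕ, IsUnit (C' + (n : ℂ) • (1 : Matrix (Fin r) (Fin r) ℂ)))
    (hCC' : C * C' = C' * C)
    (hxy : ‖x‖ + ‖y‖ < 1) :
    ((∀ k : ℕ, IsUnit (B + (k : ℂ) • (1 : Matrix (Fin r) (Fin r) ℂ))) →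
      appellF2 A (B + (s : ℂ) • 1) B' C C' x y =
        ∑ k ∈ Finset.range (s + 1),
          ((s.choose k : ℂ) * x ^ k) •
            (mPoch A k *
              appellF2 (A + (k : ℂ) • 1) (B + (k : ℂ) • 1) B' (C + (k : ℂ) • 1) C' x y *
              (mPoch C k)⁻¹)) ∧
    ((∀ k : ℕ, IsUnit (B' + (k : ℂ) • (1 : Matrix (Fin r) (Fin r) ℂ))) →
      appellF2 A B (B' + (s : ℂ) • 1) C C' x y =
        ∑ k ∈ Finset.range (s + 1),
          ((s.choose k : ℂ) * y ^ k) •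
            (mPoch A k *
              appellF2 (A + (k : ℂ) • 1) B (B' + (k : ℂ) • 1) C (C' + (k : ℂ) • 1) x y *
              (mPoch C' k)⁻¹)) ∧
    ((∀ k : ℕ, 1 ≤ k → k ≤ s → IsUnit (B - (k : ℂ) • (1 : Matrix (Fin r) (Fin r) ℂ))) →
      appellF2 A (B - (s : ℂ) • 1) B' C C' x y =
        ∑ k ∈ Finset.range (s + 1),
          ((s.choose k : ℂ) * (-x) ^ k) •
            (mPoch A k *
              appellF2 (A + (k : ℂ) • 1) B B' (C + (k : ℂ) • 1) C' x y *
              (mPoch C k)⁻¹)) ∧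
    ((∀ k : ℕ, 1 ≤ k → k ≤ s → IsUnit (B' - (k : ℂ) • (1 : Matrix (Fin r) (Fin r) ℂ))) →
      appellF2 A B (B' - (s : ℂ) • 1) C C' x y =
        ∑ k ∈ Finset.range (s + 1),
          ((s.choose k : ℂ) * (-y) ^ k) •
            (mPoch A k *
              appellF2 (A + (k : ℂ) • 1) B B' C (C' + (k : ℂ) • 1) x y *
              (mPoch C' k)⁻¹)) := by
  refine ⟨?_, ?_, ?_, ?_⟩
  · intro _
    exact AppellAux.master1 A B' C C' x y s hC hC' hCC' hxy (B + (s:ℂ) • 1)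
      (fun k => B + (k:ℂ) • 1) (fun k => (s.choose k : ℂ))
      (fun m => AppellAux.mPoch_shift_binom B s m)
  · intro _
    exact AppellAux.master2 A B C C' x y s hC hC' hxy (B' + (s:ℂ) • 1)
      (fun k => B' + (k:ℂ) • 1) (fun k => (s.choose k : ℂ))
      (fun n => AppellAux.mPoch_shift_binom B' s n)
  · intro _
    rw [AppellAux.master1 A B' C C' x y s hC hC' hCC' hxy (B - (s:ℂ) • 1)
      (fun _ => B) (fun k => (-1)^k * (s.choose k : ℂ))
      (fun m => AppellAux.mPoch_shift_binom_neg B s m)]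
    refine Finset.sum_congr rfl fun k _ => ?_
    congr 1
    rw [neg_pow]
    ring
  · intro _
    rw [AppellAux.master2 A B C C' x y s hC hC' hxy (B' - (s:ℂ) • 1)
      (fun _ => B') (fun k => (-1)^k * (s.choose k : ℂ))
      (fun n => AppellAux.mPoch_shift_binom_neg B' s n)]
    refine Finset.sum_congr rfl fun k _ => ?_
    congr 1
    rw [neg_pow]
    ring
end
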